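/- arXiv:0903.1832 — 3 statements merged into one kernel-verified Lean document; each statement's English description precedes it below -/
import Mathlib

section
/- Let X be an irreducible birth-and-death chain on ⟦b,a⟧ with transition probabilities p_x, q_x and reversible invariant probability measure π. Then: (1) for all b ≤ n < j ≤ a, E[T_{j→n}²] = Σ_{k=n+1}^{j} ( 2 / ( q_k · π(k) ) ) · Σ_{l=k}^{a} E[T_{l→n}] · π(l) − E[T_{j→n}]; and (2) for all b ≤ j < n ≤ a, E[T_{j→n}²] = Σ_{k=j}^{n−1} ( 2 / ( p_k · π(k) ) ) · Σ_{l=b}^{k} E[T_{l→n}] · π(l) − E[T_{j→n}]. -/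
open MeasureTheory Filter Topology ENNReal ProbabilityTheory

noncomputable section

/-- First time `t ≥ 0` at which the path `ω` visits the set `A`,
with value `⊤` if the path never visits `A`. -/
def hitTime {S : Type*} (A : Set S) (ω : ℕ → S) : ℝ≥0∞ :=
  ⨅ (t : ℕ) (_ : ω t ∈ A), (t : ℝ≥0∞)

/-- First time `t > 0` at which the path `ω` visits the set `A`. -/
def hitTimePos {S : Type*} (A : Set S) (ω : ℕ → S) : ℝ≥0∞ :=
  ⨅ (t : ℕ) (_ : 0 < t) (_ : ω t ∈ A), (t : ℝ≥0∞)

/-- First time `t ≥ r` at which the path `ω` visits the set `A`. -/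
def hitTimeAfter {S : Type*} (A : Set S) (r : ℝ≥0∞) (ω : ℕ → S) : ℝ≥0∞ :=
  ⨅ (t : ℕ) (_ : r ≤ (t : ℝ≥0∞)) (_ : ω t ∈ A), (t : ℝ≥0∞)

/-- One-step transition probabilities of a birth-and-death chain on `ℤ` with
birth rates `p` and death rates `q` (and holding probability `1 - p x - q x`). -/
def bdStep (p q : ℤ → ℝ) (x y : ℤ) : ℝ :=
  if y = x + 1 then p x else if y = x - 1 then q x
  else if y = x then 1 - p x - q x else 0

/-- An irreducible discrete-time birth-and-death chain on the integer interval
`⟦b,a⟧`, given by its transition probabilities `p x = p(x,x+1) > 0` (for `b ≤ x ≤ a-1`),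
`q x = p(x,x-1) > 0` (for `b+1 ≤ x ≤ a`), and by the laws `law x` of the chain started
at `x` on path space `ℕ → ℤ` (characterized by the cylinder/Markov property `markov`). -/
structure BDChain (b a : ℤ) where
  p : ℤ → ℝ
  q : ℤ → ℝ
  law : ℤ → Measure (ℕ → ℤ)
  prob : ∀ x, IsProbabilityMeasure (law x)
  p_pos : ∀ x, b ≤ x → x ≤ a - 1 → 0 < p x
  q_pos : ∀ x, b + 1 ≤ x → x ≤ a → 0 < q x
  p_zero : ∀ x, x < b ∨ a ≤ x → p x = 0
  q_zero : ∀ x, x ≤ b ∨ a < x → q x = 0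
  r_nonneg : ∀ x, b ≤ x → x ≤ a → p x + q x ≤ 1
  init : ∀ x, law x {ω | ω 0 = x} = 1
  markov : ∀ (x : ℤ) (u : ℕ → ℤ) (n : ℕ),
    law x {ω | ∀ i ≤ n + 1, ω i = u i}
      = law x {ω | ∀ i ≤ n, ω i = u i} * ENNReal.ofReal (bdStep p q (u n) (u (n + 1)))

/-- Mean hitting time `E[T_{x → y}]` for the birth-and-death chain `c`. -/
def BDChain.eT {b a : ℤ} (c : BDChain b a) (x y : ℤ) : ℝ≥0∞ :=
  ∫⁻ ω, hitTime {y} ω ∂(c.law x)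

/-- Mean hitting time `E[T_{x → A}]` of a set `A` for the birth-and-death chain `c`. -/
def BDChain.eTset {b a : ℤ} (c : BDChain b a) (x : ℤ) (A : Set ℤ) : ℝ≥0∞ :=
  ∫⁻ ω, hitTime A ω ∂(c.law x)

/-- Second moment `E[T_{x → y}²]` of the hitting time. -/
def BDChain.eT2 {b a : ℤ} (c : BDChain b a) (x y : ℤ) : ℝ≥0∞ :=
  ∫⁻ ω, (hitTime {y} ω) ^ 2 ∂(c.law x)

/-- `π` is the (unique) reversible invariant probability measure of the
birth-and-death chain `c` on `⟦b,a⟧`: it is positive on `⟦b,a⟧`, vanishes outside,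
has total mass one, and satisfies the reversibility (detailed balance) relation
`π(x) q_x = π(x-1) p_{x-1}`. -/
def BDChain.IsStationary {b a : ℤ} (c : BDChain b a) (π : ℤ → ℝ) : Prop :=
  (∀ x, b ≤ x → x ≤ a → 0 < π x) ∧ (∀ x, x < b ∨ a < x → π x = 0) ∧
  (∑ x ∈ Finset.Icc b a, π x) = 1 ∧
  (∀ x, b + 1 ≤ x → x ≤ a → π x * c.q x = π (x - 1) * c.p (x - 1))

/-! ### Auxiliary development -/

section Aux

open Set

/-- The set of paths avoiding `n` up to time `t`. -/
def avoidSet (n : ℤ) (t : ℕ) : Set (ℕ → ℤ) := {ω | ∀ i ≤ t, ω i ≠ n}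

lemma measurable_cyl (u : ℕ → ℤ) (t : ℕ) :
    MeasurableSet {ω : ℕ → ℤ | ∀ i ≤ t, ω i = u i} := by
  have : {ω : ℕ → ℤ | ∀ i ≤ t, ω i = u i}
      = ⋂ i, ⋂ (_ : i ≤ t), (fun ω : ℕ → ℤ => ω i) ⁻¹' {u i} := by
    ext ω; simp [Set.mem_iInter]
  rw [this]
  exact MeasurableSet.iInter fun i => MeasurableSet.iInter fun _ =>
    (measurable_pi_apply i) (measurableSet_singleton _)

lemma measurable_avoid (n : ℤ) (t : ℕ) : MeasurableSet (avoidSet n t) := by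
  have : avoidSet n t = ⋂ i, ⋂ (_ : i ≤ t), (fun ω : ℕ → ℤ => ω i) ⁻¹' {n}ᶜ := by
    ext ω; simp [avoidSet, Set.mem_iInter]
  rw [this]
  exact MeasurableSet.iInter fun i => MeasurableSet.iInter fun _ =>
    (measurable_pi_apply i) (measurableSet_singleton _).compl

lemma measurable_coord (t : ℕ) (z : ℤ) : MeasurableSet {ω : ℕ → ℤ | ω t = z} :=
  (measurable_pi_apply t) (measurableSet_singleton _)

lemma hitTime_cases {S : Type*} (A : Set S) (ω : ℕ → S) :
    (∃ s : ℕ, hitTime A ω = s ∧ (∀ i < s, ω i ∉ A) ∧ ∀ t, (∀ i ≤ t, ω i ∉ A) ↔ t < s)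
    ∨ (hitTime A ω = ⊤ ∧ ∀ t : ℕ, ∀ i ≤ t, ω i ∉ A) := by
  classical
  by_cases h : ∃ t, ω t ∈ A
  · left
    refine ⟨Nat.find h, ?_, fun i hi => Nat.find_min h hi, fun t => ?_⟩
    · apply le_antisymm
      · exact iInf_le_of_le (Nat.find h) (by simp [Nat.find_spec h])
      · refine le_iInf fun t => le_iInf fun ht => ?_
        exact Nat.cast_le.mpr (Nat.find_min' h ht)
    · constructor
      · intro hall
        by_contra hc
        exact hall (Nat.find h) (Nat.not_lt.mp hc) (Nat.find_spec h)
      · intro ht i hi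
        exact Nat.find_min h (lt_of_le_of_lt hi ht)
  · right
    push_neg at h
    exact ⟨by simp [hitTime, h], fun t i _ => h i⟩

lemma hitTime_pointwise {S : Type*} (A : Set S) (ω : ℕ → S) (c : ℕ → ℝ≥0∞)
    (hc : ∀ t, 1 ≤ c t) (F : ℝ≥0∞ → ℝ≥0∞) (hF : F ⊤ = ⊤)
    (key : ∀ s : ℕ, ∑ t ∈ Finset.range s, c t = F s) :
    F (hitTime A ω)
      = ∑' t : ℕ, Set.indicator {ω' : ℕ → S | ∀ i ≤ t, ω' i ∉ A} (fun _ => c t) ω := by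
  rcases hitTime_cases A ω with ⟨s, hval, _, hiff⟩ | ⟨hval, hall⟩
  · have hind : ∀ t : ℕ, Set.indicator {ω' : ℕ → S | ∀ i ≤ t, ω' i ∉ A} (fun _ => c t) ω
        = if t < s then c t else 0 := by
      intro t
      by_cases ht : t < s
      · rw [if_pos ht, Set.indicator_of_mem (by exact (hiff t).mpr ht)]
      · rw [if_neg ht, Set.indicator_of_notMem (fun hm => ht ((hiff t).mp (by exact hm)))]
    rw [hval, tsum_congr hind,
      tsum_eq_sum (s := Finset.range s) (by intro t ht; simp at ht; simp [Nat.not_lt.mpr ht]),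
      Finset.sum_ite_of_true (by intro t ht; simpa using ht), key]
  · rw [hval, hF]
    have hind : ∀ t : ℕ, Set.indicator {ω' : ℕ → S | ∀ i ≤ t, ω' i ∉ A} (fun _ => c t) ω = c t :=
      fun t => Set.indicator_of_mem (by exact hall t) _
    rw [tsum_congr hind]
    have h1 : (⊤ : ℝ≥0∞) ≤ ∑' t, c t := by
      calc (⊤:ℝ≥0∞) = ∑' _ : ℕ, (1:ℝ≥0∞) := by simp [ENNReal.tsum_const_eq_top_of_ne_zero]
      _ ≤ ∑' t, c t := ENNReal.tsum_le_tsum hc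
    exact (top_le_iff.mp h1).symm

namespace BDChain
variable {b a : ℤ} (c : BDChain b a)

/-- Taboo (sub-probability) transition weights: probability of avoiding `n` up to
time `t` and being at `z` at time `t`. -/
def mu (n x : ℤ) (t : ℕ) (z : ℤ) : ℝ≥0∞ :=
  c.law x (avoidSet n t ∩ {ω | ω t = z})

/-- Survival function of the hitting time of `n`. -/
def ff (n : ℤ) (t : ℕ) (x : ℤ) : ℝ≥0∞ := c.law x (avoidSet n t)

lemma law_of_ne_start (x z : ℤ) (h : z ≠ x) : c.law x {ω | ω 0 = z} = 0 := by
  have h1 : {ω : ℕ → ℤ | ω 0 = z} ⊆ {ω : ℕ → ℤ | ω 0 = x}ᶜ := by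
    intro ω hω hx; exact h (hω.symm.trans hx)
  have := c.prob x
  refine le_antisymm ?_ zero_le
  calc c.law x {ω | ω 0 = z} ≤ c.law x {ω : ℕ → ℤ | ω 0 = x}ᶜ := measure_mono h1
  _ = 1 - c.law x {ω : ℕ → ℤ | ω 0 = x} := by
      rw [measure_compl (measurable_coord 0 x) (measure_ne_top _ _), measure_univ]
  _ = 0 := by rw [c.init x]; simp

lemma mu_target (n x : ℤ) (t : ℕ) : c.mu n x t n = 0 := by
  have : avoidSet n t ∩ {ω : ℕ → ℤ | ω t = n} = ∅ := by
    ext ω; simp only [Set.mem_inter_iff, Set.mem_empty_iff_false, iff_false]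
    rintro ⟨h1, h2⟩; exact h1 t le_rfl h2
  rw [mu, this, measure_empty]

lemma mu_zero (n x : ℤ) (z : ℤ) :
    c.mu n x 0 z = if z = x ∧ x ≠ n then 1 else 0 := by
  have hset : avoidSet n 0 ∩ {ω : ℕ → ℤ | ω 0 = z}
      = if z = n then ∅ else {ω : ℕ → ℤ | ω 0 = z} := by
    split_ifs with h
    · subst h; ext ω
      simp only [Set.mem_inter_iff, Set.mem_empty_iff_false, iff_false]
      rintro ⟨h1, h2⟩; exact h1 0 le_rfl h2
    · ext ω
      simp only [Set.mem_inter_iff, avoidSet, Set.mem_setOf_eq]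
      constructor
      · rintro ⟨_, h2⟩; exact h2
      · intro h2
        exact ⟨fun i hi => by simp at hi; rw [hi, h2]; exact h, h2⟩
  rw [mu, hset]
  by_cases hz : z = n
  · simp only [if_pos hz, measure_empty]
    rw [if_neg]; rintro ⟨h1, h2⟩; exact h2 (by rw [← h1, hz])
  · rw [if_neg hz]
    by_cases hzx : z = x
    · subst hzx
      rw [c.init, if_pos ⟨rfl, hz⟩]
    · rw [c.law_of_ne_start x z hzx, if_neg (by rintro ⟨h1, _⟩; exact hzx h1)]

theorem fact_lemma (n : ℤ) (t : ℕ) (z y x : ℤ) :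
    c.law x ((avoidSet n t ∩ {ω | ω t = z}) ∩ {ω | ω (t+1) = y})
      = c.mu n x t z * ENNReal.ofReal (bdStep c.p c.q z y) := by
  classical
  set uv : (Fin (t+1) → ℤ) → ℕ → ℤ :=
    fun v i => if h : i < t + 1 then v ⟨i, h⟩ else y with huv
  set C : (Fin (t+1) → ℤ) → Prop :=
    fun v => (∀ i, v i ≠ n) ∧ v ⟨t, t.lt_succ_self⟩ = z with hC
  set S : (Fin (t+1) → ℤ) → Set (ℕ → ℤ) :=
    fun v => if C v then {ω | ∀ i ≤ t, ω i = uv v i} else ∅ with hS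
  have huv_le : ∀ v (i : ℕ) (h : i ≤ t), uv v i = v ⟨i, Nat.lt_succ_of_le h⟩ := by
    intro v i h; simp only [huv, dif_pos (Nat.lt_succ_of_le h)]
  have hSmem : ∀ v ω, ω ∈ S v ↔ C v ∧ ∀ i ≤ t, ω i = uv v i := by
    intro v ω
    simp only [hS]
    split_ifs with h
    · exact ⟨fun hm => ⟨h, hm⟩, fun hm => hm.2⟩
    · simp [h]
  have hunion : (⋃ v, S v) = avoidSet n t ∩ {ω | ω t = z} := by
    ext ω
    simp only [Set.mem_iUnion, Set.mem_inter_iff, avoidSet, Set.mem_setOf_eq]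
    constructor
    · rintro ⟨v, hv⟩
      rw [hSmem] at hv
      obtain ⟨hc, hv⟩ := hv
      constructor
      · intro i hi
        rw [hv i hi, huv_le v i hi]; exact hc.1 _
      · rw [hv t le_rfl, huv_le v t le_rfl]; exact hc.2
    · rintro ⟨h1, h2⟩
      refine ⟨fun i => ω i, ?_⟩
      rw [hSmem]
      exact ⟨⟨fun i => h1 i (Nat.lt_succ_iff.mp i.2), h2⟩,
        fun i hi => (huv_le (fun j => ω ↑j) i hi).symm⟩
  have hdisj : Pairwise (Function.onFun Disjoint S) := by
    intro v w hvw
    rw [Function.onFun, Set.disjoint_left]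
    intro ω hv hw
    rw [hSmem] at hv hw
    apply hvw
    funext i
    have e1 := (hv.2 i (Nat.lt_succ_iff.mp i.2)).symm.trans (hw.2 i (Nat.lt_succ_iff.mp i.2))
    rw [huv_le v i (Nat.lt_succ_iff.mp i.2), huv_le w i (Nat.lt_succ_iff.mp i.2)] at e1
    simpa using e1
  have hSmeas : ∀ v, MeasurableSet (S v) := by
    intro v; rw [hS]
    by_cases h : C v
    · simp only [if_pos h]; exact measurable_cyl _ _
    · simp only [if_neg h]; exact MeasurableSet.empty
  have hSmeas2 : ∀ v, MeasurableSet (S v ∩ {ω : ℕ → ℤ | ω (t+1) = y}) := fun v =>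
    (hSmeas v).inter (measurable_coord (t+1) y)
  have hdisj2 : Pairwise (Function.onFun Disjoint
      (fun v => S v ∩ {ω : ℕ → ℤ | ω (t+1) = y})) := fun v w hvw =>
    Disjoint.mono Set.inter_subset_left Set.inter_subset_left (hdisj hvw)
  have hinter : ∀ v, S v ∩ {ω : ℕ → ℤ | ω (t+1) = y}
      = if C v then {ω | ∀ i ≤ t + 1, ω i = uv v i} else ∅ := by
    intro v
    by_cases hc : C v
    · rw [hS]; simp only [if_pos hc]
      ext ω
      simp only [Set.mem_inter_iff, Set.mem_setOf_eq]
      constructor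
      · rintro ⟨h1, h2⟩ i hi
        rcases eq_or_lt_of_le hi with h | h
        · rw [h, h2, huv]; simp
        · exact h1 i (Nat.lt_succ_iff.mp h)
      · intro h
        refine ⟨fun i hi => h i (le_trans hi (Nat.le_succ t)), ?_⟩
        rw [h (t+1) le_rfl, huv]; simp
    · rw [hS]; simp only [if_neg hc]; simp
  have hstep : ∀ v, c.law x (S v ∩ {ω : ℕ → ℤ | ω (t+1) = y})
      = c.law x (S v) * ENNReal.ofReal (bdStep c.p c.q z y) := by
    intro v
    rw [hinter v, hS]
    by_cases hc : C v
    · simp only [if_pos hc]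
      have e1 : uv v t = z := by rw [huv_le v t le_rfl]; exact hc.2
      have e2 : uv v (t+1) = y := by rw [huv]; simp
      rw [c.markov x (uv v) t, e1, e2]
    · simp only [if_neg hc]; simp
  have e1 : c.law x ((avoidSet n t ∩ {ω | ω t = z}) ∩ {ω | ω (t+1) = y})
      = ∑' v, c.law x (S v ∩ {ω : ℕ → ℤ | ω (t+1) = y}) := by
    rw [← hunion, Set.iUnion_inter]
    exact measure_iUnion hdisj2 hSmeas2
  have e2 : c.mu n x t z = ∑' v, c.law x (S v) := by
    rw [mu, ← hunion]
    exact measure_iUnion hdisj hSmeas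
  rw [e1, e2, ← ENNReal.tsum_mul_right]
  exact tsum_congr hstep

end BDChain

end Aux
namespace BDChain
variable {b a : ℤ} (c : BDChain b a)

lemma avoid_succ (n : ℤ) (t : ℕ) :
    avoidSet n (t+1) = avoidSet n t ∩ {ω | ω (t+1) ≠ n} := by
  ext ω
  simp only [avoidSet, Set.mem_inter_iff, Set.mem_setOf_eq]
  constructor
  · intro h; exact ⟨fun i hi => h i (le_trans hi (Nat.le_succ t)), h (t+1) le_rfl⟩
  · rintro ⟨h1, h2⟩ i hi
    rcases eq_or_lt_of_le hi with h | h
    · rw [h]; exact h2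
    · exact h1 i (Nat.lt_succ_iff.mp h)

lemma mu_forward (n x : ℤ) (t : ℕ) (y : ℤ) (hy : y ≠ n) :
    c.mu n x (t+1) y = ∑' z : ℤ, c.mu n x t z * ENNReal.ofReal (bdStep c.p c.q z y) := by
  have hset : avoidSet n (t+1) ∩ {ω : ℕ → ℤ | ω (t+1) = y}
      = ⋃ z : ℤ, ((avoidSet n t ∩ {ω | ω t = z}) ∩ {ω : ℕ → ℤ | ω (t+1) = y}) := by
    ext ω
    simp only [avoid_succ, Set.mem_iUnion, Set.mem_inter_iff, Set.mem_setOf_eq]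
    constructor
    · rintro ⟨⟨h1, _⟩, h3⟩; exact ⟨ω t, ⟨h1, rfl⟩, h3⟩
    · rintro ⟨z, ⟨⟨h1, _⟩, h3⟩⟩
      exact ⟨⟨h1, by rw [h3]; exact hy⟩, h3⟩
  have hdisj : Pairwise (Function.onFun Disjoint
      (fun z : ℤ => (avoidSet n t ∩ {ω | ω t = z}) ∩ {ω : ℕ → ℤ | ω (t+1) = y})) := by
    intro z w hzw
    rw [Function.onFun, Set.disjoint_left]
    rintro ω ⟨⟨_, h2⟩, _⟩ ⟨⟨_, h5⟩, _⟩
    exact hzw ((show ω t = _ from h2).symm.trans (show ω t = _ from h5))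
  have hmeas : ∀ z : ℤ, MeasurableSet
      ((avoidSet n t ∩ {ω | ω t = z}) ∩ {ω : ℕ → ℤ | ω (t+1) = y}) := fun z =>
    ((measurable_avoid n t).inter (measurable_coord t z)).inter (measurable_coord (t+1) y)
  rw [mu, hset, measure_iUnion hdisj hmeas]
  exact tsum_congr fun z => c.fact_lemma n t z y x

lemma ff_eq_tsum_mu (n : ℤ) (t : ℕ) (x : ℤ) : c.ff n t x = ∑' z : ℤ, c.mu n x t z := by
  have hset : avoidSet n t = ⋃ z : ℤ, (avoidSet n t ∩ {ω | ω t = z}) := by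
    ext ω
    simp only [Set.mem_iUnion, Set.mem_inter_iff, Set.mem_setOf_eq]
    constructor
    · intro h; exact ⟨ω t, h, rfl⟩
    · rintro ⟨z, h, _⟩; exact h
  have hdisj : Pairwise (Function.onFun Disjoint
      (fun z : ℤ => avoidSet n t ∩ {ω | ω t = z})) := by
    intro z w hzw
    rw [Function.onFun, Set.disjoint_left]
    rintro ω ⟨_, h2⟩ ⟨_, h5⟩
    exact hzw ((show ω t = _ from h2).symm.trans (show ω t = _ from h5))
  rw [ff, hset, measure_iUnion hdisj
    (fun z => (measurable_avoid n t).inter (measurable_coord t z))]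
  rfl

lemma ff_target (n : ℤ) (t : ℕ) : c.ff n t n = 0 := by
  have h1 : avoidSet n t ⊆ {ω : ℕ → ℤ | ω 0 = n}ᶜ := fun ω hω => hω 0 (Nat.zero_le t)
  have := c.prob n
  refine le_antisymm ?_ zero_le
  calc c.law n (avoidSet n t) ≤ c.law n {ω : ℕ → ℤ | ω 0 = n}ᶜ := measure_mono h1
  _ = 1 - c.law n {ω : ℕ → ℤ | ω 0 = n} := by
      rw [measure_compl (measurable_coord 0 n) (measure_ne_top _ _), measure_univ]
  _ = 0 := by rw [c.init n]; simp

/-- taboo kernel -/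
def kk (n x y : ℤ) : ℝ≥0∞ := if y = n then 0 else ENNReal.ofReal (bdStep c.p c.q x y)

lemma mu_backward (n : ℤ) (t : ℕ) :
    ∀ x z : ℤ, x ≠ n → c.mu n x (t+1) z = ∑' y : ℤ, c.kk n x y * c.mu n y t z := by
  induction t with
  | zero =>
    intro x z hx
    by_cases hz : z = n
    · rw [hz, c.mu_target]
      symm
      have : ∀ y : ℤ, c.kk n x y * c.mu n y 0 n = 0 := by
        intro y
        rw [c.mu_zero, if_neg (by rintro ⟨h1, h2⟩; exact h2 h1.symm), mul_zero]
      rw [tsum_congr this]; simp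
    · rw [c.mu_forward n x 0 z hz]
      have lhs : ∑' w : ℤ, c.mu n x 0 w * ENNReal.ofReal (bdStep c.p c.q w z)
          = ENNReal.ofReal (bdStep c.p c.q x z) := by
        rw [tsum_eq_single x]
        · rw [c.mu_zero, if_pos ⟨rfl, hx⟩, one_mul]
        · intro w hw
          rw [c.mu_zero, if_neg (by rintro ⟨h1, _⟩; exact hw h1), zero_mul]
      rw [lhs]
      symm
      rw [tsum_eq_single z]
      · rw [c.mu_zero, if_pos ⟨rfl, hz⟩, mul_one, kk, if_neg hz]
      · intro y hy
        rw [c.mu_zero, if_neg (by rintro ⟨h1, _⟩; exact hy h1.symm), mul_zero]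
  | succ t ih =>
    intro x z hx
    by_cases hz : z = n
    · rw [hz, c.mu_target]
      symm
      have : ∀ y : ℤ, c.kk n x y * c.mu n y (t+1) n = 0 := by
        intro y; rw [c.mu_target, mul_zero]
      rw [tsum_congr this]; simp
    · rw [c.mu_forward n x (t+1) z hz]
      have e1 : ∀ w : ℤ, c.mu n x (t+1) w * ENNReal.ofReal (bdStep c.p c.q w z)
          = ∑' y : ℤ, c.kk n x y * (c.mu n y t w * ENNReal.ofReal (bdStep c.p c.q w z)) := by
        intro w
        rw [ih x w hx, ← ENNReal.tsum_mul_right]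
        exact tsum_congr fun y => by ring
      rw [tsum_congr e1, ENNReal.tsum_comm]
      refine tsum_congr fun y => ?_
      rw [ENNReal.tsum_mul_left]
      congr 1
      exact (c.mu_forward n y t z hz).symm

lemma ff_backward (n : ℤ) (t : ℕ) (x : ℤ) (hx : x ≠ n) :
    c.ff n (t+1) x = ∑' y : ℤ, ENNReal.ofReal (bdStep c.p c.q x y) * c.ff n t y := by
  rw [ff_eq_tsum_mu]
  have e1 : ∀ z : ℤ, c.mu n x (t+1) z = ∑' y : ℤ, c.kk n x y * c.mu n y t z :=
    fun z => c.mu_backward n t x z hx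
  rw [tsum_congr e1, ENNReal.tsum_comm]
  refine tsum_congr fun y => ?_
  rw [ENNReal.tsum_mul_left, ← ff_eq_tsum_mu]
  by_cases hy : y = n
  · rw [hy, c.ff_target, mul_zero, mul_zero]
  · rw [kk, if_neg hy]

lemma ff_rec (n : ℤ) (t : ℕ) (x : ℤ) (hx : x ≠ n) :
    c.ff n (t+1) x = ENNReal.ofReal (c.p x) * c.ff n t (x+1)
      + ENNReal.ofReal (c.q x) * c.ff n t (x-1)
      + ENNReal.ofReal (1 - c.p x - c.q x) * c.ff n t x := by
  rw [c.ff_backward n t x hx]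
  have hsupp : ∀ y ∉ ({x+1, x-1, x} : Finset ℤ),
      ENNReal.ofReal (bdStep c.p c.q x y) * c.ff n t y = 0 := by
    intro y hy
    simp only [Finset.mem_insert, Finset.mem_singleton] at hy
    push_neg at hy
    rw [bdStep, if_neg hy.1, if_neg hy.2.1, if_neg hy.2.2]
    simp
  rw [tsum_eq_sum hsupp]
  have h1 : (x:ℤ) + 1 ∉ ({x-1, x} : Finset ℤ) := by
    simp only [Finset.mem_insert, Finset.mem_singleton]; push_neg; omega
  have h2 : (x:ℤ) - 1 ∉ ({x} : Finset ℤ) := by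
    simp only [Finset.mem_singleton]; omega
  rw [Finset.sum_insert h1, Finset.sum_insert h2, Finset.sum_singleton]
  have e1 : bdStep c.p c.q x (x+1) = c.p x := by rw [bdStep, if_pos rfl]
  have e2 : bdStep c.p c.q x (x-1) = c.q x := by
    rw [bdStep, if_neg (by omega), if_pos rfl]
  have e3 : bdStep c.p c.q x x = 1 - c.p x - c.q x := by
    rw [bdStep, if_neg (by omega), if_neg (by omega), if_pos rfl]
  rw [e1, e2, e3, add_assoc]

lemma ff_zero (n x : ℤ) (hx : x ≠ n) : c.ff n 0 x = 1 := by
  have := c.prob x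
  have h1 : {ω : ℕ → ℤ | ω 0 = x} ⊆ avoidSet n 0 := by
    intro ω hω i hi
    interval_cases i
    rw [hω]; exact hx
  refine le_antisymm prob_le_one ?_
  calc (1:ℝ≥0∞) = c.law x {ω | ω 0 = x} := (c.init x).symm
  _ ≤ c.law x (avoidSet n 0) := measure_mono h1

lemma ff_le_one (n : ℤ) (t : ℕ) (x : ℤ) : c.ff n t x ≤ 1 := by
  have := c.prob x; exact prob_le_one

lemma ff_antitone (n x : ℤ) {s t : ℕ} (h : s ≤ t) : c.ff n t x ≤ c.ff n s x := by
  apply measure_mono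
  intro ω hω i hi
  exact hω i (le_trans hi h)

end BDChain
section Integral

lemma avoid_eq_setOf (n : ℤ) (t : ℕ) :
    {ω' : ℕ → ℤ | ∀ i ≤ t, ω' i ∉ ({n} : Set ℤ)} = avoidSet n t := rfl

lemma sum_range_one' (s : ℕ) :
    ∑ t ∈ Finset.range s, (1:ℝ≥0∞) = (s:ℝ≥0∞) := by simp

lemma sum_range_lin (s : ℕ) :
    ∑ t ∈ Finset.range s, (2*(t:ℝ≥0∞)+2) = (s:ℝ≥0∞)^2 + s := by
  induction s with
  | zero => simp
  | succ s ih =>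
    rw [Finset.sum_range_succ, ih]
    push_cast
    ring

lemma hitTime_meas_aux (n : ℤ) (ω : ℕ → ℤ) :
    hitTime {n} ω = ∑' t : ℕ, Set.indicator (avoidSet n t) (fun _ => (1:ℝ≥0∞)) ω := by
  have := hitTime_pointwise ({n} : Set ℤ) ω (fun _ => 1) (fun _ => le_rfl) id rfl
    (fun s => sum_range_one' s)
  simpa [avoid_eq_setOf, avoidSet] using this

lemma hitTime_measurable (n : ℤ) : Measurable (fun ω : ℕ → ℤ => hitTime {n} ω) := by
  have : (fun ω : ℕ → ℤ => hitTime {n} ω)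
      = fun ω => ∑' t : ℕ, Set.indicator (avoidSet n t) (fun _ => (1:ℝ≥0∞)) ω := by
    funext ω; exact hitTime_meas_aux n ω
  rw [this]
  exact Measurable.ennreal_tsum fun t =>
    (measurable_const.indicator (measurable_avoid n t))

namespace BDChain
variable {b a : ℤ} (c : BDChain b a)

lemma eT_eq_tsum (n x : ℤ) : c.eT x n = ∑' t : ℕ, c.ff n t x := by
  rw [eT]
  have e1 : ∀ ω : ℕ → ℤ, hitTime {n} ω
      = ∑' t : ℕ, Set.indicator (avoidSet n t) (fun _ => (1:ℝ≥0∞)) ω := hitTime_meas_aux n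
  rw [lintegral_congr e1, lintegral_tsum
    (fun t => (measurable_const.indicator (measurable_avoid n t)).aemeasurable)]
  refine tsum_congr fun t => ?_
  rw [lintegral_indicator_const (measurable_avoid n t), one_mul, ff]

lemma eT2_add_eT_eq_tsum (n x : ℤ) :
    c.eT2 x n + c.eT x n = ∑' t : ℕ, (2*(t:ℝ≥0∞)+2) * c.ff n t x := by
  rw [eT2, eT, ← lintegral_add_right _ (hitTime_measurable n)]
  have e1 : ∀ ω : ℕ → ℤ, (hitTime {n} ω)^2 + hitTime {n} ω
      = ∑' t : ℕ, Set.indicator (avoidSet n t) (fun _ => (2*(t:ℝ≥0∞)+2)) ω := by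
    intro ω
    have := hitTime_pointwise ({n} : Set ℤ) ω (fun t => 2*(t:ℝ≥0∞)+2)
      (fun t => by simp [le_add_left]) (fun s => s^2 + s) (by simp)
      (fun s => sum_range_lin s)
    simpa [avoid_eq_setOf, avoidSet] using this
  rw [lintegral_congr e1, lintegral_tsum
    (fun t => (measurable_const.indicator (measurable_avoid n t)).aemeasurable)]
  refine tsum_congr fun t => ?_
  rw [lintegral_indicator_const (measurable_avoid n t), ff]

end BDChain

end Integral
namespace BDChain
variable {b a : ℤ} (c : BDChain b a)

lemma p_nonneg (x : ℤ) : 0 ≤ c.p x := by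
  by_cases h : b ≤ x ∧ x ≤ a - 1
  · exact le_of_lt (c.p_pos x h.1 h.2)
  · rw [c.p_zero x (by omega)]

lemma q_nonneg (x : ℤ) : 0 ≤ c.q x := by
  by_cases h : b + 1 ≤ x ∧ x ≤ a
  · exact le_of_lt (c.q_pos x h.1 h.2)
  · rw [c.q_zero x (by omega)]

lemma q_le_one (x : ℤ) : c.q x ≤ 1 := by
  by_cases h : b ≤ x ∧ x ≤ a
  · have := c.r_nonneg x h.1 h.2
    have := c.p_nonneg x
    linarith
  · rw [c.q_zero x (by omega)]; norm_num

lemma p_le_one (x : ℤ) : c.p x ≤ 1 := by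
  by_cases h : b ≤ x ∧ x ≤ a
  · have := c.r_nonneg x h.1 h.2
    have := c.q_nonneg x
    linarith
  · rw [c.p_zero x (by omega)]; norm_num

lemma decay_above {n : ℤ} (hbn : b ≤ n) : ∀ d : ℕ, ∀ x : ℤ, x = n + 1 + (d:ℤ) → x ≤ a →
    c.ff n ((x-n).toNat) x ≤ ENNReal.ofReal (1 - ∏ k ∈ Finset.Icc (n+1) x, c.q k) := by
  intro d
  induction d with
  | zero =>
    intro x hx hxa
    obtain rfl : x = n + 1 := by omega
    have h1 : ((n+1-n).toNat) = 1 := by omega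
    rw [h1, c.ff_rec n 0 (n+1) (by omega), Finset.Icc_self, Finset.prod_singleton]
    have e0 : c.ff n 0 ((n+1) - 1) = 0 := by
      rw [show (n+1-1 : ℤ) = n by ring]; exact c.ff_target n 0
    rw [e0, mul_zero, add_zero]
    have h2 : ENNReal.ofReal (c.p (n+1)) * c.ff n 0 (n+1+1) ≤ ENNReal.ofReal (c.p (n+1)) :=
      le_trans (mul_le_mul_right (c.ff_le_one n 0 _) _) (by rw [mul_one])
    have h3 : ENNReal.ofReal (1 - c.p (n+1) - c.q (n+1)) * c.ff n 0 (n+1)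
        ≤ ENNReal.ofReal (1 - c.p (n+1) - c.q (n+1)) :=
      le_trans (mul_le_mul_right (c.ff_le_one n 0 _) _) (by rw [mul_one])
    calc _ ≤ ENNReal.ofReal (c.p (n+1)) + ENNReal.ofReal (1 - c.p (n+1) - c.q (n+1)) :=
          add_le_add h2 h3
    _ = ENNReal.ofReal (1 - c.q (n+1)) := by
        rw [← ENNReal.ofReal_add (c.p_nonneg _)]
        · congr 1; ring
        · have hr := c.r_nonneg (n+1) (by omega) (by omega)
          linarith
  | succ d ih =>
    intro x hx hxa
    have ihx := ih (x-1) (by push_cast; omega) (by omega)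
    have hd : ((x-n).toNat) = ((x-1-n).toNat) + 1 := by omega
    rw [hd, c.ff_rec n ((x-1-n).toNat) x (by omega)]
    have hQ0 : (0:ℝ) ≤ ∏ k ∈ Finset.Icc (n+1) (x-1), c.q k :=
      Finset.prod_nonneg fun k _ => c.q_nonneg k
    have hQ1 : ∏ k ∈ Finset.Icc (n+1) (x-1), c.q k ≤ 1 :=
      Finset.prod_le_one (fun k _ => c.q_nonneg k) (fun k _ => c.q_le_one k)
    have hp := c.p_nonneg x
    have hq := c.q_nonneg x
    have hr := c.r_nonneg x (by omega) (by omega)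
    have h2 : ENNReal.ofReal (c.p x) * c.ff n ((x-1-n).toNat) (x+1) ≤ ENNReal.ofReal (c.p x) :=
      le_trans (mul_le_mul_right (c.ff_le_one n _ _) _) (by rw [mul_one])
    have h3 : ENNReal.ofReal (1 - c.p x - c.q x) * c.ff n ((x-1-n).toNat) x
        ≤ ENNReal.ofReal (1 - c.p x - c.q x) :=
      le_trans (mul_le_mul_right (c.ff_le_one n _ _) _) (by rw [mul_one])
    have h4 : ENNReal.ofReal (c.q x) * c.ff n ((x-1-n).toNat) (x-1)
        ≤ ENNReal.ofReal (c.q x * (1 - ∏ k ∈ Finset.Icc (n+1) (x-1), c.q k)) := by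
      rw [ENNReal.ofReal_mul hq]
      exact mul_le_mul_right ihx _
    have hIcc : Finset.Icc (n+1) x = insert x (Finset.Icc (n+1) (x-1)) := by
      ext k
      simp only [Finset.mem_Icc, Finset.mem_insert]
      omega
    calc _ ≤ ENNReal.ofReal (c.p x)
          + ENNReal.ofReal (c.q x * (1 - ∏ k ∈ Finset.Icc (n+1) (x-1), c.q k))
          + ENNReal.ofReal (1 - c.p x - c.q x) := add_le_add (add_le_add h2 h4) h3
    _ = ENNReal.ofReal (1 - ∏ k ∈ Finset.Icc (n+1) x, c.q k) := by
        rw [← ENNReal.ofReal_add hp (by nlinarith), ← ENNReal.ofReal_add (by nlinarith) (by linarith)]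
        congr 1
        rw [hIcc, Finset.prod_insert (by simp only [Finset.mem_Icc]; omega)]
        ring

lemma decay_below {n : ℤ} (hna : n ≤ a) : ∀ d : ℕ, ∀ x : ℤ, x = n - 1 - (d:ℤ) → b ≤ x →
    c.ff n ((n-x).toNat) x ≤ ENNReal.ofReal (1 - ∏ k ∈ Finset.Icc x (n-1), c.p k) := by
  intro d
  induction d with
  | zero =>
    intro x hx hbx
    obtain rfl : x = n - 1 := by omega
    have h1 : ((n-(n-1)).toNat) = 1 := by omega
    rw [h1, c.ff_rec n 0 (n-1) (by omega), Finset.Icc_self, Finset.prod_singleton]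
    have e0 : c.ff n 0 ((n-1) + 1) = 0 := by
      rw [show (n-1+1 : ℤ) = n by ring]; exact c.ff_target n 0
    rw [e0, mul_zero, zero_add]
    have h2 : ENNReal.ofReal (c.q (n-1)) * c.ff n 0 (n-1-1) ≤ ENNReal.ofReal (c.q (n-1)) :=
      le_trans (mul_le_mul_right (c.ff_le_one n 0 _) _) (by rw [mul_one])
    have h3 : ENNReal.ofReal (1 - c.p (n-1) - c.q (n-1)) * c.ff n 0 (n-1)
        ≤ ENNReal.ofReal (1 - c.p (n-1) - c.q (n-1)) :=
      le_trans (mul_le_mul_right (c.ff_le_one n 0 _) _) (by rw [mul_one])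
    calc _ ≤ ENNReal.ofReal (c.q (n-1)) + ENNReal.ofReal (1 - c.p (n-1) - c.q (n-1)) :=
          add_le_add h2 h3
    _ = ENNReal.ofReal (1 - c.p (n-1)) := by
        rw [← ENNReal.ofReal_add (c.q_nonneg _)]
        · congr 1; ring
        · have hr := c.r_nonneg (n-1) (by omega) (by omega)
          linarith
  | succ d ih =>
    intro x hx hbx
    have ihx := ih (x+1) (by push_cast; omega) (by omega)
    have hd : ((n-x).toNat) = ((n-(x+1)).toNat) + 1 := by omega
    rw [hd, c.ff_rec n ((n-(x+1)).toNat) x (by omega)]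
    have hP0 : (0:ℝ) ≤ ∏ k ∈ Finset.Icc (x+1) (n-1), c.p k :=
      Finset.prod_nonneg fun k _ => c.p_nonneg k
    have hP1 : ∏ k ∈ Finset.Icc (x+1) (n-1), c.p k ≤ 1 :=
      Finset.prod_le_one (fun k _ => c.p_nonneg k) (fun k _ => c.p_le_one k)
    have hp := c.p_nonneg x
    have hq := c.q_nonneg x
    have hr := c.r_nonneg x (by omega) (by omega)
    have h2 : ENNReal.ofReal (c.q x) * c.ff n ((n-(x+1)).toNat) (x-1) ≤ ENNReal.ofReal (c.q x) :=
      le_trans (mul_le_mul_right (c.ff_le_one n _ _) _) (by rw [mul_one])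
    have h3 : ENNReal.ofReal (1 - c.p x - c.q x) * c.ff n ((n-(x+1)).toNat) x
        ≤ ENNReal.ofReal (1 - c.p x - c.q x) :=
      le_trans (mul_le_mul_right (c.ff_le_one n _ _) _) (by rw [mul_one])
    have h4 : ENNReal.ofReal (c.p x) * c.ff n ((n-(x+1)).toNat) (x+1)
        ≤ ENNReal.ofReal (c.p x * (1 - ∏ k ∈ Finset.Icc (x+1) (n-1), c.p k)) := by
      rw [ENNReal.ofReal_mul hp]
      exact mul_le_mul_right ihx _
    have hIcc : Finset.Icc x (n-1) = insert x (Finset.Icc (x+1) (n-1)) := by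
      ext k
      simp only [Finset.mem_Icc, Finset.mem_insert]
      omega
    calc _ ≤ ENNReal.ofReal (c.p x * (1 - ∏ k ∈ Finset.Icc (x+1) (n-1), c.p k))
          + ENNReal.ofReal (c.q x)
          + ENNReal.ofReal (1 - c.p x - c.q x) := add_le_add (add_le_add h4 h2) h3
    _ = ENNReal.ofReal (1 - ∏ k ∈ Finset.Icc x (n-1), c.p k) := by
        rw [← ENNReal.ofReal_add (by nlinarith) hq, ← ENNReal.ofReal_add (by nlinarith) (by linarith)]
        congr 1
        rw [hIcc, Finset.prod_insert (by simp only [Finset.mem_Icc]; omega)]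
        ring

end BDChain
namespace BDChain
variable {b a : ℤ} (c : BDChain b a)

lemma ff_m_lt_one {n : ℤ} (hab : b < a) (hbn : b ≤ n) (hna : n ≤ a) :
    ∀ x, b ≤ x → x ≤ a → c.ff n ((a-b).toNat) x < 1 := by
  intro x hbx hxa
  rcases lt_trichotomy x n with h | h | h
  · have hd := c.decay_below hna ((n-1-x).toNat) x (by omega) hbx
    have hP : (0:ℝ) < ∏ k ∈ Finset.Icc x (n-1), c.p k :=
      Finset.prod_pos fun k hk => by
        simp only [Finset.mem_Icc] at hk
        exact c.p_pos k (by omega) (by omega)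
    have hP1 : ∏ k ∈ Finset.Icc x (n-1), c.p k ≤ 1 :=
      Finset.prod_le_one (fun k _ => c.p_nonneg k) (fun k _ => c.p_le_one k)
    calc c.ff n ((a-b).toNat) x ≤ c.ff n ((n-x).toNat) x :=
          c.ff_antitone n x (by omega)
    _ ≤ ENNReal.ofReal (1 - ∏ k ∈ Finset.Icc x (n-1), c.p k) := hd
    _ < 1 := by
        rw [← ENNReal.ofReal_one]
        exact ENNReal.ofReal_lt_ofReal_iff_of_nonneg (by linarith) |>.mpr (by linarith)
  · calc c.ff n ((a-b).toNat) x = 0 := by rw [h]; exact c.ff_target n _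
    _ < 1 := by norm_num
  · have hd := c.decay_above hbn ((x-n-1).toNat) x (by omega) hxa
    have hQ : (0:ℝ) < ∏ k ∈ Finset.Icc (n+1) x, c.q k :=
      Finset.prod_pos fun k hk => by
        simp only [Finset.mem_Icc] at hk
        exact c.q_pos k (by omega) (by omega)
    have hQ1 : ∏ k ∈ Finset.Icc (n+1) x, c.q k ≤ 1 :=
      Finset.prod_le_one (fun k _ => c.q_nonneg k) (fun k _ => c.q_le_one k)
    calc c.ff n ((a-b).toNat) x ≤ c.ff n ((x-n).toNat) x :=
          c.ff_antitone n x (by omega)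
    _ ≤ ENNReal.ofReal (1 - ∏ k ∈ Finset.Icc (n+1) x, c.q k) := hd
    _ < 1 := by
        rw [← ENNReal.ofReal_one]
        exact ENNReal.ofReal_lt_ofReal_iff_of_nonneg (by linarith) |>.mpr (by linarith)

/-- uniform contraction factor -/
def rho (n : ℤ) : ℝ≥0∞ := (Finset.Icc b a).sup (fun x => c.ff n ((a-b).toNat) x)

lemma rho_lt_one {n : ℤ} (hab : b < a) (hbn : b ≤ n) (hna : n ≤ a) : c.rho n < 1 :=
  Finset.sup_lt_iff (by norm_num) |>.mpr fun x hx => by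
    simp only [Finset.mem_Icc] at hx
    exact c.ff_m_lt_one hab hbn hna x hx.1 hx.2

lemma ff_le_rho {n : ℤ} (x : ℤ) (hbx : b ≤ x) (hxa : x ≤ a) :
    c.ff n ((a-b).toNat) x ≤ c.rho n :=
  Finset.le_sup (f := fun x => c.ff n ((a-b).toNat) x) (Finset.mem_Icc.mpr ⟨hbx, hxa⟩)

lemma ff_submult {n : ℤ} : ∀ t : ℕ, ∀ x, b ≤ x → x ≤ a →
    c.ff n (t + (a-b).toNat) x ≤ c.ff n t x * c.rho n := by
  intro t
  induction t with
  | zero =>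
    intro x hbx hxa
    by_cases hx : x = n
    · rw [hx, c.ff_target, c.ff_target, zero_mul]
    · rw [c.ff_zero n x hx, one_mul, zero_add]
      exact c.ff_le_rho x hbx hxa
  | succ t ih =>
    intro x hbx hxa
    by_cases hx : x = n
    · rw [hx, c.ff_target, c.ff_target, zero_mul]
    · have e1 : t + 1 + (a-b).toNat = (t + (a-b).toNat) + 1 := by omega
      rw [e1, c.ff_rec n _ x hx, c.ff_rec n t x hx]
      have h2 : ENNReal.ofReal (c.p x) * c.ff n (t + (a-b).toNat) (x+1)
          ≤ ENNReal.ofReal (c.p x) * (c.ff n t (x+1) * c.rho n) := by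
        by_cases hxa' : x + 1 ≤ a
        · exact mul_le_mul_right (ih (x+1) (by omega) hxa') _
        · have : c.p x = 0 := c.p_zero x (by omega)
          simp [this]
      have h3 : ENNReal.ofReal (c.q x) * c.ff n (t + (a-b).toNat) (x-1)
          ≤ ENNReal.ofReal (c.q x) * (c.ff n t (x-1) * c.rho n) := by
        by_cases hbx' : b ≤ x - 1
        · exact mul_le_mul_right (ih (x-1) hbx' (by omega)) _
        · have : c.q x = 0 := c.q_zero x (by omega)
          simp [this]
      have h4 : ENNReal.ofReal (1 - c.p x - c.q x) * c.ff n (t + (a-b).toNat) x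
          ≤ ENNReal.ofReal (1 - c.p x - c.q x) * (c.ff n t x * c.rho n) :=
        mul_le_mul_right (ih x hbx hxa) _
      calc _ ≤ ENNReal.ofReal (c.p x) * (c.ff n t (x+1) * c.rho n)
            + ENNReal.ofReal (c.q x) * (c.ff n t (x-1) * c.rho n)
            + ENNReal.ofReal (1 - c.p x - c.q x) * (c.ff n t x * c.rho n) :=
          add_le_add (add_le_add h2 h3) h4
      _ = (ENNReal.ofReal (c.p x) * c.ff n t (x+1)
            + ENNReal.ofReal (c.q x) * c.ff n t (x-1)
            + ENNReal.ofReal (1 - c.p x - c.q x) * c.ff n t x) * c.rho n := by ring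

lemma ff_le_rho_pow {n : ℤ} : ∀ k : ℕ, ∀ x, b ≤ x → x ≤ a →
    c.ff n (k * (a-b).toNat) x ≤ (c.rho n)^k := by
  intro k
  induction k with
  | zero => intro x _ _; rw [zero_mul, pow_zero]; exact c.ff_le_one n 0 x
  | succ k ih =>
    intro x hbx hxa
    have e1 : (k+1) * (a-b).toNat = k * (a-b).toNat + (a-b).toNat := by ring
    rw [e1, pow_succ]
    calc c.ff n (k * (a-b).toNat + (a-b).toNat) x
        ≤ c.ff n (k * (a-b).toNat) x * c.rho n := c.ff_submult _ x hbx hxa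
    _ ≤ (c.rho n)^k * c.rho n := mul_le_mul_left (ih x hbx hxa) _

lemma ff_le_geo {n : ℤ} (hab : b < a) (t : ℕ) (x : ℤ) (hbx : b ≤ x) (hxa : x ≤ a) :
    c.ff n t x ≤ (c.rho n)^(t / (a-b).toNat) := by
  calc c.ff n t x ≤ c.ff n ((t / (a-b).toNat) * (a-b).toNat) x :=
        c.ff_antitone n x (Nat.div_mul_le_self t _)
  _ ≤ (c.rho n)^(t / (a-b).toNat) := c.ff_le_rho_pow _ x hbx hxa

end BDChain
section Summability

lemma real_summable_aux (r : ℝ) (hr0 : 0 ≤ r) (hr1 : r < 1) (m : ℕ) (hm : 0 < m) :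
    Summable (fun t : ℕ => (2*(t:ℝ)+2) * r^(t/m)) := by
  rcases eq_or_lt_of_le hr0 with h0 | h0
  · apply summable_of_ne_finset_zero (s := Finset.range m)
    intro t ht
    simp only [Finset.mem_range, not_lt] at ht
    have hd : t/m ≠ 0 := Nat.div_ne_zero_iff.mpr ⟨by omega, ht⟩
    rw [← h0, zero_pow hd, mul_zero]
  · set s := r ^ ((m:ℝ)⁻¹) with hs
    have hs0 : 0 < s := Real.rpow_pos_of_pos h0 _
    have hs1 : s < 1 := Real.rpow_lt_one hr0 hr1 (by positivity)
    have hsum : Summable (fun t : ℕ => r⁻¹ * ((2*(t:ℝ)+2) * s^t)) := by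
      apply Summable.mul_left
      have h1 : Summable (fun t : ℕ => (t:ℝ) * s^t) := by
        simpa using summable_pow_mul_geometric_of_norm_lt_one 1
          (r := s) (by rw [Real.norm_eq_abs, abs_of_pos hs0]; exact hs1)
      have h2 : Summable (fun t : ℕ => s^t) := summable_geometric_of_lt_one hs0.le hs1
      exact ((h1.mul_left 2).add (h2.mul_left 2)).congr fun t => by ring
    refine Summable.of_nonneg_of_le (fun t => by positivity) (fun t => ?_) hsum
    have key : r ^ (t/m) ≤ r⁻¹ * s^t := by
      have e1 : r ^ (t/m) = r ^ (((t/m : ℕ)):ℝ) := (Real.rpow_natCast r _).symm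
      have e2 : s ^ t = r ^ ((m:ℝ)⁻¹ * t) := by
        rw [hs, ← Real.rpow_natCast (r ^ ((m:ℝ)⁻¹)) t, ← Real.rpow_mul hr0]
      have e3 : r⁻¹ * s^t = r ^ ((m:ℝ)⁻¹ * t - 1) := by
        rw [e2, ← Real.rpow_neg_one r, ← Real.rpow_add h0]
        ring_nf
      rw [e1, e3]
      apply Real.rpow_le_rpow_of_exponent_ge h0 hr1.le
      have hdm := Nat.div_add_mod t m
      have hmod := Nat.mod_lt t hm
      have hmr : (0:ℝ) < m := by exact_mod_cast hm
      have hc : (t:ℝ) = (m:ℝ) * ((t/m : ℕ):ℝ) + ((t % m : ℕ):ℝ) := by exact_mod_cast hdm.symm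
      have hc2 : ((t % m : ℕ):ℝ) < (m:ℝ) := by exact_mod_cast hmod
      rw [sub_le_iff_le_add, inv_mul_le_iff₀ hmr]
      nlinarith [Nat.cast_nonneg (α := ℝ) (t/m)]
    calc (2*(t:ℝ)+2) * r^(t/m) ≤ (2*(t:ℝ)+2) * (r⁻¹ * s^t) :=
          mul_le_mul_of_nonneg_left key (by positivity)
    _ = r⁻¹ * ((2*(t:ℝ)+2) * s^t) := by ring

namespace BDChain
variable {b a : ℤ} (c : BDChain b a)

lemma HH_ne_top {n : ℤ} (hab : b < a) (hbn : b ≤ n) (hna : n ≤ a)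
    (x : ℤ) (hbx : b ≤ x) (hxa : x ≤ a) :
    ∑' t : ℕ, (2*(t:ℝ≥0∞)+2) * c.ff n t x ≠ ⊤ := by
  set m := (a-b).toNat with hm
  have hm0 : 0 < m := by omega
  have hρ : c.rho n < 1 := c.rho_lt_one hab hbn hna
  have hρtop : c.rho n ≠ ⊤ := (lt_of_lt_of_le hρ le_top).ne
  set rn : NNReal := (c.rho n).toNNReal with hrn
  have hρeq : c.rho n = (rn : ℝ≥0∞) := (ENNReal.coe_toNNReal hρtop).symm
  have hrn1 : rn < 1 := by
    rw [← ENNReal.coe_lt_one_iff, ← hρeq]; exact hρ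
  have hbound : ∀ t : ℕ, (2*(t:ℝ≥0∞)+2) * c.ff n t x
      ≤ (((2*(t:NNReal)+2) * rn^(t/m) : NNReal) : ℝ≥0∞) := by
    intro t
    have h1 : c.ff n t x ≤ (c.rho n)^(t/m) := c.ff_le_geo hab t x hbx hxa
    calc (2*(t:ℝ≥0∞)+2) * c.ff n t x ≤ (2*(t:ℝ≥0∞)+2) * (c.rho n)^(t/m) :=
          mul_le_mul_right h1 _
    _ = (((2*(t:NNReal)+2) * rn^(t/m) : NNReal) : ℝ≥0∞) := by
        rw [hρeq]
        push_cast
        ring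
  refine ne_top_of_le_ne_top ?_ (ENNReal.tsum_le_tsum hbound)
  rw [ENNReal.tsum_coe_ne_top_iff_summable, ← NNReal.summable_coe]
  have := real_summable_aux rn rn.coe_nonneg (by exact_mod_cast hrn1) m hm0
  apply this.congr
  intro t
  push_cast
  ring

lemma GG_ne_top {n : ℤ} (hab : b < a) (hbn : b ≤ n) (hna : n ≤ a)
    (x : ℤ) (hbx : b ≤ x) (hxa : x ≤ a) :
    ∑' t : ℕ, c.ff n t x ≠ ⊤ := by
  refine ne_top_of_le_ne_top (c.HH_ne_top hab hbn hna x hbx hxa) (ENNReal.tsum_le_tsum ?_)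
  intro t
  apply le_mul_of_one_le_left zero_le
  calc (1:ℝ≥0∞) ≤ 2 := by norm_num
  _ ≤ 2*(t:ℝ≥0∞)+2 := by simp [le_add_left]

end BDChain
end Summability
namespace BDChain
variable {b a : ℤ} (c : BDChain b a)

/-- `E[T_{x→n}]` as a series. -/
def GG (n x : ℤ) : ℝ≥0∞ := ∑' t : ℕ, c.ff n t x

/-- `E[T²+T]` as a series. -/
def HH (n x : ℤ) : ℝ≥0∞ := ∑' t : ℕ, (2*(t:ℝ≥0∞)+2) * c.ff n t x

lemma GG_target (n : ℤ) : c.GG n n = 0 := by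
  rw [GG]
  simp [c.ff_target]

lemma HH_target (n : ℤ) : c.HH n n = 0 := by
  rw [HH]
  simp [c.ff_target]

lemma GG_rec (n x : ℤ) (hx : x ≠ n) :
    c.GG n x = 1 + (ENNReal.ofReal (c.p x) * c.GG n (x+1)
      + ENNReal.ofReal (c.q x) * c.GG n (x-1)
      + ENNReal.ofReal (1 - c.p x - c.q x) * c.GG n x) := by
  conv_lhs => rw [GG]
  rw [tsum_eq_zero_add' ENNReal.summable, c.ff_zero n x hx]
  congr 1
  have e1 : ∀ t : ℕ, c.ff n (t+1) x
      = ENNReal.ofReal (c.p x) * c.ff n t (x+1)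
      + ENNReal.ofReal (c.q x) * c.ff n t (x-1)
      + ENNReal.ofReal (1 - c.p x - c.q x) * c.ff n t x := fun t => c.ff_rec n t x hx
  rw [tsum_congr e1, ENNReal.tsum_add, ENNReal.tsum_add,
    ENNReal.tsum_mul_left, ENNReal.tsum_mul_left, ENNReal.tsum_mul_left]
  rfl

lemma HH_rec (n x : ℤ) (hx : x ≠ n) :
    c.HH n x = 2 * c.GG n x + (ENNReal.ofReal (c.p x) * c.HH n (x+1)
      + ENNReal.ofReal (c.q x) * c.HH n (x-1)
      + ENNReal.ofReal (1 - c.p x - c.q x) * c.HH n x) := by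
  have split : c.HH n x = 2 + (∑' t : ℕ, (2*(t:ℝ≥0∞)+2) * c.ff n (t+1) x
      + 2 * ∑' t : ℕ, c.ff n (t+1) x) := by
    rw [HH, tsum_eq_zero_add' ENNReal.summable, c.ff_zero n x hx]
    have e0 : (2*((0:ℕ):ℝ≥0∞)+2) * 1 = 2 := by norm_num
    rw [e0]
    congr 1
    have e1 : ∀ t : ℕ, (2*((t+1:ℕ):ℝ≥0∞)+2) * c.ff n (t+1) x
        = (2*(t:ℝ≥0∞)+2) * c.ff n (t+1) x + 2 * c.ff n (t+1) x := by
      intro t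
      push_cast
      ring
    rw [tsum_congr e1, ENNReal.tsum_add, ENNReal.tsum_mul_left]
  have eG : 2 * c.GG n x = 2 + 2 * ∑' t : ℕ, c.ff n (t+1) x := by
    rw [GG, tsum_eq_zero_add' ENNReal.summable, c.ff_zero n x hx, mul_add, mul_one]
  have eH : ∑' t : ℕ, (2*(t:ℝ≥0∞)+2) * c.ff n (t+1) x
      = ENNReal.ofReal (c.p x) * c.HH n (x+1)
      + ENNReal.ofReal (c.q x) * c.HH n (x-1)
      + ENNReal.ofReal (1 - c.p x - c.q x) * c.HH n x := by
    have e1 : ∀ t : ℕ, (2*(t:ℝ≥0∞)+2) * c.ff n (t+1) x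
        = ENNReal.ofReal (c.p x) * ((2*(t:ℝ≥0∞)+2) * c.ff n t (x+1))
        + ENNReal.ofReal (c.q x) * ((2*(t:ℝ≥0∞)+2) * c.ff n t (x-1))
        + ENNReal.ofReal (1 - c.p x - c.q x) * ((2*(t:ℝ≥0∞)+2) * c.ff n t x) := by
      intro t
      rw [c.ff_rec n t x hx]
      ring
    rw [tsum_congr e1, ENNReal.tsum_add, ENNReal.tsum_add,
      ENNReal.tsum_mul_left, ENNReal.tsum_mul_left, ENNReal.tsum_mul_left]
    rfl
  conv_lhs => rw [split]
  rw [eH, eG]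
  ring

end BDChain
namespace BDChain
variable {b a : ℤ} (c : BDChain b a)

lemma case_above (hab : b < a) (π : ℤ → ℝ)
    (hpos : ∀ x, b ≤ x → x ≤ a → 0 < π x)
    (hrev : ∀ x, b + 1 ≤ x → x ≤ a → π x * c.q x = π (x - 1) * c.p (x - 1))
    (n j : ℤ) (hbn : b ≤ n) (hnj : n < j) (hja : j ≤ a) :
    c.eT2 j n + c.eT j n
      = ∑ k ∈ Finset.Icc (n + 1) j, ENNReal.ofReal (2 / (c.q k * π k))
          * ∑ l ∈ Finset.Icc k a, c.eT l n * ENNReal.ofReal (π l) := by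
  have hna : n ≤ a := by omega
  set g : ℤ → ℝ := fun x => (c.GG n x).toReal with hg
  set h : ℤ → ℝ := fun x => (c.HH n x).toReal with hh
  have hGfin : ∀ x, b ≤ x → x ≤ a → c.GG n x ≠ ⊤ :=
    fun x h1 h2 => c.GG_ne_top hab hbn hna x h1 h2
  have hHfin : ∀ x, b ≤ x → x ≤ a → c.HH n x ≠ ⊤ :=
    fun x h1 h2 => c.HH_ne_top hab hbn hna x h1 h2
  have hgn : g n = 0 := by rw [hg]; simp [c.GG_target n]
  have hhn : h n = 0 := by rw [hh]; simp [c.HH_target n]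
  have hgnonneg : ∀ x, 0 ≤ g x := fun x => ENNReal.toReal_nonneg
  -- real recursion for h
  have hrec : ∀ x, b ≤ x → x ≤ a → x ≠ n →
      h x = 2 * g x + (c.p x * h (x+1) + c.q x * h (x-1)
        + (1 - c.p x - c.q x) * h x) := by
    intro x h1 h2 hx
    have hH := c.HH_rec n x hx
    have hfinx : c.HH n x ≠ ⊤ := hHfin x h1 h2
    have hfinrhs : 2 * c.GG n x + (ENNReal.ofReal (c.p x) * c.HH n (x+1)
        + ENNReal.ofReal (c.q x) * c.HH n (x-1)
        + ENNReal.ofReal (1 - c.p x - c.q x) * c.HH n x) ≠ ⊤ := by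
      rw [← hH]; exact hfinx
    obtain ⟨hfin1, hfin2⟩ := ENNReal.add_ne_top.mp hfinrhs
    obtain ⟨hfinAB, hfinC⟩ := ENNReal.add_ne_top.mp hfin2
    obtain ⟨hfinA, hfinB⟩ := ENNReal.add_ne_top.mp hfinAB
    have hr0 : 0 ≤ 1 - c.p x - c.q x := by
      have := c.r_nonneg x h1 h2; linarith
    calc h x = (c.HH n x).toReal := rfl
    _ = (2 * c.GG n x + (ENNReal.ofReal (c.p x) * c.HH n (x+1)
        + ENNReal.ofReal (c.q x) * c.HH n (x-1)
        + ENNReal.ofReal (1 - c.p x - c.q x) * c.HH n x)).toReal := by rw [← hH]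
    _ = (2 * c.GG n x).toReal + ((ENNReal.ofReal (c.p x) * c.HH n (x+1)).toReal
        + ((ENNReal.ofReal (c.q x) * c.HH n (x-1)).toReal
        + (ENNReal.ofReal (1 - c.p x - c.q x) * c.HH n x).toReal)) := by
      rw [ENNReal.toReal_add hfin1 hfin2, ENNReal.toReal_add hfinAB hfinC,
        ENNReal.toReal_add hfinA hfinB]
      ring
    _ = 2 * g x + (c.p x * h (x+1) + c.q x * h (x-1) + (1 - c.p x - c.q x) * h x) := by
      rw [ENNReal.toReal_mul, ENNReal.toReal_mul, ENNReal.toReal_mul, ENNReal.toReal_mul,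
        ENNReal.toReal_ofReal (c.p_nonneg x), ENNReal.toReal_ofReal (c.q_nonneg x),
        ENNReal.toReal_ofReal hr0]
      simp only [hh, hg]
      norm_num
      ring
  -- telescoping identity T1
  have T1 : ∀ k, n + 1 ≤ k → k ≤ a →
      π k * c.q k * (h k - h (k-1)) = ∑ l ∈ Finset.Icc k a, 2 * g l * π l := by
    have Taux : ∀ d : ℕ, ∀ k, k = a - (d:ℤ) → n + 1 ≤ k →
        π k * c.q k * (h k - h (k-1)) = ∑ l ∈ Finset.Icc k a, 2 * g l * π l := by
      intro d
      induction d with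
      | zero =>
        intro k hk hnk
        have hka : k = a := by omega
        have hp0 : c.p k = 0 := c.p_zero k (Or.inr (by omega))
        have e := hrec k (by omega) (by omega) (by omega)
        rw [hp0] at e
        rw [show Finset.Icc k a = {k} by rw [hka]; exact Finset.Icc_self a,
          Finset.sum_singleton]
        linear_combination (π k) * e
      | succ d ih =>
        intro k hk hnk
        have hka : k ≤ a - 1 := by omega
        have ihk := ih (k+1) (by push_cast at hk ⊢; omega) (by omega)
        rw [show (k+1-1:ℤ) = k by ring] at ihk
        have e := hrec k (by omega) (by omega) (by omega)
        have hrevk : π (k+1) * c.q (k+1) = π k * c.p k := by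
          have := hrev (k+1) (by omega) (by omega)
          rw [show (k+1-1 : ℤ) = k by ring] at this
          exact this
        have hIcc : Finset.Icc k a = insert k (Finset.Icc (k+1) a) := by
          ext l
          simp only [Finset.mem_Icc, Finset.mem_insert]
          omega
        rw [hIcc, Finset.sum_insert (by simp only [Finset.mem_Icc]; omega), ← ihk]
        linear_combination (π k) * e - (h (k+1) - h k) * hrevk
    intro k h1 h2
    exact Taux (a - k).toNat k (by omega) h1
  -- telescoping identity T2
  have T2 : ∀ x, n + 1 ≤ x → x ≤ a →
      h x = ∑ k ∈ Finset.Icc (n+1) x, (h k - h (k-1)) := by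
    have Taux : ∀ d : ℕ, ∀ x, x = n + 1 + (d:ℤ) → x ≤ a →
        h x = ∑ k ∈ Finset.Icc (n+1) x, (h k - h (k-1)) := by
      intro d
      induction d with
      | zero =>
        intro x hx _
        obtain rfl : x = n + 1 := by omega
        rw [Finset.Icc_self, Finset.sum_singleton, show (n+1-1 : ℤ) = n by ring, hhn]
        ring
      | succ d ih =>
        intro x hx hxa
        have ihx := ih (x-1) (by push_cast at hx ⊢; omega) (by omega)
        have hIcc : Finset.Icc (n+1) x = insert x (Finset.Icc (n+1) (x-1)) := by
          ext l
          simp only [Finset.mem_Icc, Finset.mem_insert]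
          omega
        rw [hIcc, Finset.sum_insert (by simp only [Finset.mem_Icc]; omega), ← ihx]
        ring
    intro x h1 h2
    exact Taux (x - (n+1)).toNat x (by omega) h2
  -- the real identity
  have REAL : h j = ∑ k ∈ Finset.Icc (n+1) j, (2 / (c.q k * π k))
      * ∑ l ∈ Finset.Icc k a, g l * π l := by
    rw [T2 j (by omega) hja]
    apply Finset.sum_congr rfl
    intro k hk
    simp only [Finset.mem_Icc] at hk
    have hπk : 0 < π k := hpos k (by omega) (by omega)
    have hqk : 0 < c.q k := c.q_pos k (by omega) (by omega)
    have t1 := T1 k hk.1 (by omega)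
    have e2 : ∑ l ∈ Finset.Icc k a, 2 * g l * π l
        = 2 * ∑ l ∈ Finset.Icc k a, g l * π l := by
      rw [Finset.mul_sum]
      exact Finset.sum_congr rfl fun l _ => by ring
    rw [e2] at t1
    field_simp
    linarith [t1]
  -- assemble in ℝ≥0∞
  have LHS : c.eT2 j n + c.eT j n = ENNReal.ofReal (h j) := by
    rw [c.eT2_add_eT_eq_tsum n j, hh]
    exact (ENNReal.ofReal_toReal (hHfin j (by omega) hja)).symm
  have houter : ∀ k ∈ Finset.Icc (n+1) j,
      0 ≤ (2 / (c.q k * π k)) * ∑ l ∈ Finset.Icc k a, g l * π l := by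
    intro k hk
    simp only [Finset.mem_Icc] at hk
    have hπk : 0 < π k := hpos k (by omega) (by omega)
    have hqk : 0 < c.q k := c.q_pos k (by omega) (by omega)
    apply mul_nonneg (by positivity)
    apply Finset.sum_nonneg
    intro l hl
    simp only [Finset.mem_Icc] at hl
    exact mul_nonneg (hgnonneg l) (le_of_lt (hpos l (by omega) (by omega)))
  rw [LHS, REAL, ENNReal.ofReal_sum_of_nonneg houter]
  apply Finset.sum_congr rfl
  intro k hk
  simp only [Finset.mem_Icc] at hk
  have hπk : 0 < π k := hpos k (by omega) (by omega)
  have hqk : 0 < c.q k := c.q_pos k (by omega) (by omega)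
  have hinner : ∀ l ∈ Finset.Icc k a, c.eT l n * ENNReal.ofReal (π l)
      = ENNReal.ofReal (g l * π l) := by
    intro l hl
    simp only [Finset.mem_Icc] at hl
    have : c.eT l n = ENNReal.ofReal (g l) := by
      rw [c.eT_eq_tsum n l, hg]
      exact (ENNReal.ofReal_toReal (hGfin l (by omega) hl.2)).symm
    rw [this, ← ENNReal.ofReal_mul (hgnonneg l)]
  rw [Finset.sum_congr rfl hinner, ← ENNReal.ofReal_sum_of_nonneg
    (fun l hl => mul_nonneg (hgnonneg l)
      (le_of_lt (hpos l (by simp only [Finset.mem_Icc] at hl; omega)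
        (by simp only [Finset.mem_Icc] at hl; omega)))),
    ← ENNReal.ofReal_mul (by positivity)]

end BDChain
namespace BDChain
variable {b a : ℤ} (c : BDChain b a)

lemma case_below (hab : b < a) (π : ℤ → ℝ)
    (hpos : ∀ x, b ≤ x → x ≤ a → 0 < π x)
    (hrev : ∀ x, b + 1 ≤ x → x ≤ a → π x * c.q x = π (x - 1) * c.p (x - 1))
    (j n : ℤ) (hbj : b ≤ j) (hjn : j < n) (hna : n ≤ a) :
    c.eT2 j n + c.eT j n
      = ∑ k ∈ Finset.Icc j (n - 1), ENNReal.ofReal (2 / (c.p k * π k))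
          * ∑ l ∈ Finset.Icc b k, c.eT l n * ENNReal.ofReal (π l) := by
  have hbn : b ≤ n := by omega
  set g : ℤ → ℝ := fun x => (c.GG n x).toReal with hg
  set h : ℤ → ℝ := fun x => (c.HH n x).toReal with hh
  have hGfin : ∀ x, b ≤ x → x ≤ a → c.GG n x ≠ ⊤ :=
    fun x h1 h2 => c.GG_ne_top hab hbn hna x h1 h2
  have hHfin : ∀ x, b ≤ x → x ≤ a → c.HH n x ≠ ⊤ :=
    fun x h1 h2 => c.HH_ne_top hab hbn hna x h1 h2
  have hgn : g n = 0 := by rw [hg]; simp [c.GG_target n]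
  have hhn : h n = 0 := by rw [hh]; simp [c.HH_target n]
  have hgnonneg : ∀ x, 0 ≤ g x := fun x => ENNReal.toReal_nonneg
  have hrec : ∀ x, b ≤ x → x ≤ a → x ≠ n →
      h x = 2 * g x + (c.p x * h (x+1) + c.q x * h (x-1)
        + (1 - c.p x - c.q x) * h x) := by
    intro x h1 h2 hx
    have hH := c.HH_rec n x hx
    have hfinx : c.HH n x ≠ ⊤ := hHfin x h1 h2
    have hfinrhs : 2 * c.GG n x + (ENNReal.ofReal (c.p x) * c.HH n (x+1)
        + ENNReal.ofReal (c.q x) * c.HH n (x-1)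
        + ENNReal.ofReal (1 - c.p x - c.q x) * c.HH n x) ≠ ⊤ := by
      rw [← hH]; exact hfinx
    obtain ⟨hfin1, hfin2⟩ := ENNReal.add_ne_top.mp hfinrhs
    obtain ⟨hfinAB, hfinC⟩ := ENNReal.add_ne_top.mp hfin2
    obtain ⟨hfinA, hfinB⟩ := ENNReal.add_ne_top.mp hfinAB
    have hr0 : 0 ≤ 1 - c.p x - c.q x := by
      have := c.r_nonneg x h1 h2; linarith
    calc h x = (c.HH n x).toReal := rfl
    _ = (2 * c.GG n x + (ENNReal.ofReal (c.p x) * c.HH n (x+1)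
        + ENNReal.ofReal (c.q x) * c.HH n (x-1)
        + ENNReal.ofReal (1 - c.p x - c.q x) * c.HH n x)).toReal := by rw [← hH]
    _ = (2 * c.GG n x).toReal + ((ENNReal.ofReal (c.p x) * c.HH n (x+1)).toReal
        + ((ENNReal.ofReal (c.q x) * c.HH n (x-1)).toReal
        + (ENNReal.ofReal (1 - c.p x - c.q x) * c.HH n x).toReal)) := by
      rw [ENNReal.toReal_add hfin1 hfin2, ENNReal.toReal_add hfinAB hfinC,
        ENNReal.toReal_add hfinA hfinB]
      ring
    _ = 2 * g x + (c.p x * h (x+1) + c.q x * h (x-1) + (1 - c.p x - c.q x) * h x) := by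
      rw [ENNReal.toReal_mul, ENNReal.toReal_mul, ENNReal.toReal_mul, ENNReal.toReal_mul,
        ENNReal.toReal_ofReal (c.p_nonneg x), ENNReal.toReal_ofReal (c.q_nonneg x),
        ENNReal.toReal_ofReal hr0]
      simp only [hh, hg]
      norm_num
      ring
  -- telescoping identity T1 (downward direction)
  have T1 : ∀ k, b ≤ k → k ≤ n - 1 →
      π k * c.p k * (h k - h (k+1)) = ∑ l ∈ Finset.Icc b k, 2 * g l * π l := by
    have Taux : ∀ d : ℕ, ∀ k, k = b + (d:ℤ) → k ≤ n - 1 →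
        π k * c.p k * (h k - h (k+1)) = ∑ l ∈ Finset.Icc b k, 2 * g l * π l := by
      intro d
      induction d with
      | zero =>
        intro k hk hkn
        have hkb : k = b := by omega
        have hq0 : c.q k = 0 := c.q_zero k (Or.inl (by omega))
        have e := hrec k (by omega) (by omega) (by omega)
        rw [hq0] at e
        rw [show Finset.Icc b k = {k} from by rw [hkb, Finset.Icc_self], Finset.sum_singleton]
        linear_combination (π k) * e
      | succ d ih =>
        intro k hk hkn
        have hbk : b + 1 ≤ k := by omega
        have ihk := ih (k-1) (by push_cast at hk ⊢; omega) (by omega)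
        rw [show (k-1+1:ℤ) = k by ring] at ihk
        have e := hrec k (by omega) (by omega) (by omega)
        have hrevk : π k * c.q k = π (k-1) * c.p (k-1) := hrev k (by omega) (by omega)
        have hIcc : Finset.Icc b k = insert k (Finset.Icc b (k-1)) := by
          ext l
          simp only [Finset.mem_Icc, Finset.mem_insert]
          omega
        rw [hIcc, Finset.sum_insert (by simp only [Finset.mem_Icc]; omega), ← ihk]
        linear_combination (π k) * e + (h (k-1) - h k) * hrevk
    intro k h1 h2
    exact Taux (k - b).toNat k (by omega) h2
  -- telescoping identity T2 (downward)
  have T2 : ∀ x, b ≤ x → x ≤ n - 1 →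
      h x = ∑ k ∈ Finset.Icc x (n-1), (h k - h (k+1)) := by
    have Taux : ∀ d : ℕ, ∀ x, x = n - 1 - (d:ℤ) → b ≤ x →
        h x = ∑ k ∈ Finset.Icc x (n-1), (h k - h (k+1)) := by
      intro d
      induction d with
      | zero =>
        intro x hx _
        obtain rfl : x = n - 1 := by omega
        rw [Finset.Icc_self, Finset.sum_singleton, show (n-1+1 : ℤ) = n by ring, hhn]
        ring
      | succ d ih =>
        intro x hx hbx
        have ihx := ih (x+1) (by push_cast at hx ⊢; omega) (by omega)
        have hIcc : Finset.Icc x (n-1) = insert x (Finset.Icc (x+1) (n-1)) := by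
          ext l
          simp only [Finset.mem_Icc, Finset.mem_insert]
          omega
        rw [hIcc, Finset.sum_insert (by simp only [Finset.mem_Icc]; omega), ← ihx]
        ring
    intro x h1 h2
    exact Taux (n - 1 - x).toNat x (by omega) h1
  -- the real identity
  have REAL : h j = ∑ k ∈ Finset.Icc j (n-1), (2 / (c.p k * π k))
      * ∑ l ∈ Finset.Icc b k, g l * π l := by
    rw [T2 j hbj (by omega)]
    apply Finset.sum_congr rfl
    intro k hk
    simp only [Finset.mem_Icc] at hk
    have hπk : 0 < π k := hpos k (by omega) (by omega)
    have hpk : 0 < c.p k := c.p_pos k (by omega) (by omega)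
    have t1 := T1 k (by omega) hk.2
    have e2 : ∑ l ∈ Finset.Icc b k, 2 * g l * π l
        = 2 * ∑ l ∈ Finset.Icc b k, g l * π l := by
      rw [Finset.mul_sum]
      exact Finset.sum_congr rfl fun l _ => by ring
    rw [e2] at t1
    field_simp
    linarith [t1]
  have LHS : c.eT2 j n + c.eT j n = ENNReal.ofReal (h j) := by
    rw [c.eT2_add_eT_eq_tsum n j, hh]
    exact (ENNReal.ofReal_toReal (hHfin j hbj (by omega))).symm
  have houter : ∀ k ∈ Finset.Icc j (n-1),
      0 ≤ (2 / (c.p k * π k)) * ∑ l ∈ Finset.Icc b k, g l * π l := by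
    intro k hk
    simp only [Finset.mem_Icc] at hk
    have hπk : 0 < π k := hpos k (by omega) (by omega)
    have hpk : 0 < c.p k := c.p_pos k (by omega) (by omega)
    apply mul_nonneg (by positivity)
    apply Finset.sum_nonneg
    intro l hl
    simp only [Finset.mem_Icc] at hl
    exact mul_nonneg (hgnonneg l) (le_of_lt (hpos l (by omega) (by omega)))
  rw [LHS, REAL, ENNReal.ofReal_sum_of_nonneg houter]
  apply Finset.sum_congr rfl
  intro k hk
  simp only [Finset.mem_Icc] at hk
  have hπk : 0 < π k := hpos k (by omega) (by omega)
  have hpk : 0 < c.p k := c.p_pos k (by omega) (by omega)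
  have hinner : ∀ l ∈ Finset.Icc b k, c.eT l n * ENNReal.ofReal (π l)
      = ENNReal.ofReal (g l * π l) := by
    intro l hl
    simp only [Finset.mem_Icc] at hl
    have : c.eT l n = ENNReal.ofReal (g l) := by
      rw [c.eT_eq_tsum n l, hg]
      exact (ENNReal.ofReal_toReal (hGfin l hl.1 (by omega))).symm
    rw [this, ← ENNReal.ofReal_mul (hgnonneg l)]
  rw [Finset.sum_congr rfl hinner, ← ENNReal.ofReal_sum_of_nonneg
    (fun l hl => mul_nonneg (hgnonneg l)
      (le_of_lt (hpos l (by simp only [Finset.mem_Icc] at hl; omega)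
        (by simp only [Finset.mem_Icc] at hl; omega)))),
    ← ENNReal.ofReal_mul (by positivity)]

end BDChain
/-- Second-moment formulas for hitting times of an irreducible
birth-and-death chain on `⟦b,a⟧` with reversible invariant probability measure `π`:
(1) for `b ≤ n < j ≤ a`,
`E[T_{j→n}²] = Σ_{k=n+1}^{j} (2/(q_k π(k))) Σ_{l=k}^{a} E[T_{l→n}] π(l) − E[T_{j→n}]`;
(2) for `b ≤ j < n ≤ a`,
`E[T_{j→n}²] = Σ_{k=j}^{n−1} (2/(p_k π(k))) Σ_{l=b}^{k} E[T_{l→n}] π(l) − E[T_{j→n}]`.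
(Both identities are stated with the subtracted mean moved to the left-hand side,
an equivalent form avoiding subtraction in `ℝ≥0∞`.) -/
theorem second_moment_identities {b a : ℤ} (hab : b < a) (c : BDChain b a)
    (π : ℤ → ℝ) (hπ : c.IsStationary π) :
    (∀ n j : ℤ, b ≤ n → n < j → j ≤ a →
      c.eT2 j n + c.eT j n
        = ∑ k ∈ Finset.Icc (n + 1) j, ENNReal.ofReal (2 / (c.q k * π k))
            * ∑ l ∈ Finset.Icc k a, c.eT l n * ENNReal.ofReal (π l)) ∧
    (∀ j n : ℤ, b ≤ j → j < n → n ≤ a →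
      c.eT2 j n + c.eT j n
        = ∑ k ∈ Finset.Icc j (n - 1), ENNReal.ofReal (2 / (c.p k * π k))
            * ∑ l ∈ Finset.Icc b k, c.eT l n * ENNReal.ofReal (π l)) := by
  obtain ⟨hpos, hzero, hsum1, hrev⟩ := hπ
  constructor
  · intro n j hbn hnj hja
    exact c.case_above hab π hpos hrev n j hbn hnj hja
  · intro j n hbj hjn hna
    exact c.case_below hab π hpos hrev j n hbj hjn hna
end
end

section
/- Let X be an irreducible birth-and-death chain on ⟦b,a⟧ with transition probabilities p_x, q_x and reversible invariant probability measure π. Then for all integers b ≤ j < n ≤ a: E[T_{j→n}²] ≤ 2·E[T_{j→n}]² + 2·E[T_{b→j}]·E[T_{j→n}] − E[T_{j→n}]. -/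
open MeasureTheory Filter Topology ENNReal ProbabilityTheory

noncomputable section

namespace BDaux

/-- cylinder set: paths agreeing with `u` up to time `m` -/
def cyl (u : ℕ → ℤ) (m : ℕ) : Set (ℕ → ℤ) := {ω | ∀ i ≤ m, ω i = u i}

def shift (s : ℕ) (ω : ℕ → ℤ) : ℕ → ℤ := fun t => ω (s + t)

lemma measurable_shift (s : ℕ) : Measurable (shift s) :=
  measurable_pi_lambda _ (fun t => measurable_pi_apply (s + t))

lemma measurableSet_eval (i : ℕ) (z : ℤ) : MeasurableSet {ω : ℕ → ℤ | ω i = z} := by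
  have : {ω : ℕ → ℤ | ω i = z} = (fun ω : ℕ → ℤ => ω i) ⁻¹' {z} := rfl
  rw [this]
  exact (measurable_pi_apply i) (measurableSet_singleton z)

lemma measurableSet_cyl (u : ℕ → ℤ) (m : ℕ) : MeasurableSet (cyl u m) := by
  have : cyl u m = ⋂ (i : ℕ) (_ : i ≤ m), {ω : ℕ → ℤ | ω i = u i} := by
    ext ω; simp [cyl]
  rw [this]
  exact MeasurableSet.iInter fun i => MeasurableSet.iInter fun _ => measurableSet_eval i (u i)

variable {b a : ℤ}

lemma law_cyl (c : BDChain b a) (x : ℤ) (u : ℕ → ℤ) (m : ℕ) :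
    c.law x (cyl u m) = if u 0 = x then
      ∏ i ∈ Finset.range m, ENNReal.ofReal (bdStep c.p c.q (u i) (u (i+1))) else 0 := by
  have hP := c.prob x
  induction m with
  | zero =>
    have hc : cyl u 0 = {ω : ℕ → ℤ | ω 0 = u 0} := by
      ext ω; simp [cyl]
    rw [hc, Finset.prod_range_zero]
    by_cases h : u 0 = x
    · rw [if_pos h, h]; exact c.init x
    · rw [if_neg h]
      have hsub : {ω : ℕ → ℤ | ω 0 = u 0} ⊆ {ω : ℕ → ℤ | ω 0 = x}ᶜ := by
        intro ω hω hx
        exact h ((hω.symm.trans (hx : ω 0 = x)).symm ▸ rfl)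
      refine measure_mono_null hsub ?_
      rw [measure_compl (measurableSet_eval 0 x) (measure_ne_top _ _), c.init x,
        measure_univ, tsub_self]
  | succ m ih =>
    have hm := c.markov x u m
    have h1 : cyl u (m+1) = {ω : ℕ → ℤ | ∀ i ≤ m + 1, ω i = u i} := rfl
    have h2 : cyl u m = {ω : ℕ → ℤ | ∀ i ≤ m, ω i = u i} := rfl
    rw [h1, hm, ← h2, ih, Finset.prod_range_succ]
    by_cases h : u 0 = x
    · rw [if_pos h, if_pos h]
    · rw [if_neg h, if_neg h, zero_mul]

/-- the π-system of cylinder sets -/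
def cylSet : Set (Set (ℕ → ℤ)) := {S | ∃ u m, S = cyl u m}

lemma cyl_inter_of_le {u v : ℕ → ℤ} {m k : ℕ} (h : m ≤ k)
    (hne : (cyl u m ∩ cyl v k).Nonempty) : cyl u m ∩ cyl v k = cyl v k := by
  obtain ⟨ω, hω1, hω2⟩ := hne
  ext ρ
  constructor
  · rintro ⟨-, h2⟩; exact h2
  · intro h2
    refine ⟨fun i hi => ?_, h2⟩
    rw [h2 i (hi.trans h), ← hω2 i (hi.trans h), hω1 i hi]

lemma isPiSystem_cylSet : IsPiSystem cylSet := by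
  rintro _ ⟨u, m, rfl⟩ _ ⟨v, k, rfl⟩ hne
  rcases le_total m k with h | h
  · rw [cyl_inter_of_le h hne]
    exact ⟨v, k, rfl⟩
  · rw [Set.inter_comm] at hne ⊢
    rw [cyl_inter_of_le h hne]
    exact ⟨u, m, rfl⟩

def extv (s : ℕ) (w : Fin (s+1) → ℤ) : ℕ → ℤ := fun k => if h : k < s + 1 then w ⟨k, h⟩ else 0

def resv (s : ℕ) (ω : ℕ → ℤ) : Fin (s+1) → ℤ := fun i => ω i

lemma extv_eq (s : ℕ) (w : Fin (s+1) → ℤ) {i : ℕ} (hi : i ≤ s) :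
    extv s w i = w ⟨i, Nat.lt_succ_of_le hi⟩ := by
  simp [extv, Nat.lt_succ_of_le hi]

lemma mem_cyl_extv_resv (s : ℕ) (ω : ℕ → ℤ) : ω ∈ cyl (extv s (resv s ω)) s := by
  intro i hi
  rw [extv_eq s _ hi]
  rfl

lemma eval_eq_iUnion (i : ℕ) (z : ℤ) :
    {ω : ℕ → ℤ | ω i = z} =
      ⋃ (v : {v : Fin (i+1) → ℤ // v (Fin.last i) = z}), cyl (extv i v.1) i := by
  ext ω
  simp only [Set.mem_setOf_eq, Set.mem_iUnion]
  constructor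
  · intro h
    refine ⟨⟨resv i ω, ?_⟩, mem_cyl_extv_resv i ω⟩
    exact h
  · rintro ⟨⟨v, hv⟩, hω⟩
    have := hω i le_rfl
    rw [extv_eq i v le_rfl] at this
    rw [this]
    exact hv

lemma generateFrom_cylSet :
    (inferInstance : MeasurableSpace (ℕ → ℤ)) = .generateFrom cylSet := by
  apply le_antisymm
  · have : (inferInstance : MeasurableSpace (ℕ → ℤ)) = MeasurableSpace.pi := rfl
    rw [this]
    refine iSup_le fun i => ?_
    intro s hs
    rw [MeasurableSpace.measurableSet_comap] at hs
    obtain ⟨B, -, rfl⟩ := hs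
    have hB : (fun ω : ℕ → ℤ => ω i) ⁻¹' B = ⋃ z ∈ B, {ω : ℕ → ℤ | ω i = z} := by
      ext ω; simp
    rw [hB]
    refine MeasurableSet.biUnion B.to_countable fun z _ => ?_
    rw [eval_eq_iUnion i z]
    exact MeasurableSet.iUnion fun v =>
      MeasurableSpace.measurableSet_generateFrom ⟨extv i v.1, i, rfl⟩
  · refine MeasurableSpace.generateFrom_le ?_
    rintro _ ⟨u, m, rfl⟩
    exact measurableSet_cyl u m

end BDaux
namespace BDaux

variable {b a : ℤ}

def glue (u : ℕ → ℤ) (s : ℕ) (v : ℕ → ℤ) : ℕ → ℤ := fun i => if i ≤ s then u i else v (i - s)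

lemma glue_le {u v : ℕ → ℤ} {s i : ℕ} (h : i ≤ s) : glue u s v i = u i := if_pos h

lemma glue_add {u v : ℕ → ℤ} {s t : ℕ} (h : u s = v 0) : glue u s v (s + t) = v t := by
  rcases Nat.eq_zero_or_pos t with rfl | ht
  · simpa [glue] using h
  · have : ¬ s + t ≤ s := by omega
    simp only [glue, if_neg this]
    congr 1
    omega

lemma cyl_inter_shift {u v : ℕ → ℤ} {s m : ℕ} (h : u s = v 0) :
    shift s ⁻¹' cyl v m ∩ cyl u s = cyl (glue u s v) (s + m) := by
  ext ω
  simp only [Set.mem_inter_iff, Set.mem_preimage]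
  constructor
  · rintro ⟨h2, h1⟩
    intro i hi
    by_cases his : i ≤ s
    · rw [glue_le his]; exact h1 i his
    · have hi' : i = s + (i - s) := by omega
      rw [hi', glue_add h]
      exact h2 (i - s) (by omega)
  · intro hω
    constructor
    · intro t ht
      rw [show (shift s ω) t = ω (s + t) from rfl, hω (s + t) (by omega), glue_add h]
    · intro i hi
      rw [hω i (by omega), glue_le hi]

lemma cyl_inter_shift_empty {u v : ℕ → ℤ} {s m : ℕ} (h : u s ≠ v 0) :
    shift s ⁻¹' cyl v m ∩ cyl u s = ∅ := by
  ext ω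
  simp only [Set.mem_inter_iff, Set.mem_preimage, Set.mem_empty_iff_false, iff_false]
  rintro ⟨h2, h1⟩
  exact h ((h1 s le_rfl).symm.trans (h2 0 (Nat.zero_le m)))

lemma map_restrict_cyl (c : BDChain b a) (x : ℤ) (u : ℕ → ℤ) (s : ℕ) :
    Measure.map (shift s) ((c.law x).restrict (cyl u s))
      = (c.law x (cyl u s)) • c.law (u s) := by
  haveI := c.prob x
  haveI := c.prob (u s)
  haveI : IsFiniteMeasure (Measure.map (shift s) ((c.law x).restrict (cyl u s))) := by
    constructor
    rw [Measure.map_apply (measurable_shift s) MeasurableSet.univ, Set.preimage_univ,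
      Measure.restrict_apply MeasurableSet.univ, Set.univ_inter]
    exact (measure_mono (Set.subset_univ _)).trans_lt (by simp [measure_univ])
  refine ext_of_generate_finite cylSet generateFrom_cylSet isPiSystem_cylSet ?_ ?_
  · rintro _ ⟨v, m, rfl⟩
    rw [Measure.map_apply (measurable_shift s) (measurableSet_cyl v m),
      Measure.restrict_apply ((measurable_shift s) (measurableSet_cyl v m)),
      Measure.smul_apply, smul_eq_mul]
    by_cases h : u s = v 0
    · rw [cyl_inter_shift h, law_cyl, law_cyl, law_cyl]
      have h0 : glue u s v 0 = u 0 := glue_le (Nat.zero_le s)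
      rw [h0]
      by_cases hx : u 0 = x
      · rw [if_pos hx, if_pos hx, if_pos (h.symm : v 0 = u s), Finset.prod_range_add]
        congr 1
        · exact Finset.prod_congr rfl fun i hi => by
            rw [Finset.mem_range] at hi
            rw [glue_le (by omega : i ≤ s), glue_le (by omega : i + 1 ≤ s)]
        · exact Finset.prod_congr rfl fun i hi => by
            rw [glue_add h, show s + i + 1 = s + (i+1) from by omega, glue_add h]
      · rw [if_neg hx, if_neg hx, zero_mul]
    · rw [cyl_inter_shift_empty h, measure_empty, law_cyl c (u s) v m,
        if_neg (fun hh : v 0 = u s => h hh.symm), mul_zero]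
  · rw [Measure.map_apply (measurable_shift s) MeasurableSet.univ, Set.preimage_univ,
      Measure.restrict_apply MeasurableSet.univ, Set.univ_inter,
      Measure.smul_apply, smul_eq_mul, measure_univ, mul_one]

end BDaux
namespace BDaux

variable {b a : ℤ}

/-- An event determined by coordinates `0,…,s`. -/
def Cylindrical (s : ℕ) (X : Set (ℕ → ℤ)) : Prop :=
  ∀ ω ω' : ℕ → ℤ, (∀ i ≤ s, ω i = ω' i) → ω ∈ X → ω' ∈ X

lemma cylindrical_eq_iUnion {s : ℕ} {X : Set (ℕ → ℤ)} (hX : Cylindrical s X) :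
    X = ⋃ (w : {w : Fin (s+1) → ℤ // extv s w ∈ X}), cyl (extv s w.1) s := by
  ext ω
  simp only [Set.mem_iUnion]
  constructor
  · intro h
    refine ⟨⟨resv s ω, ?_⟩, mem_cyl_extv_resv s ω⟩
    exact hX ω _ (fun i hi => (mem_cyl_extv_resv s ω i hi)) h
  · rintro ⟨⟨w, hw⟩, hω⟩
    exact hX (extv s w) ω (fun i hi => (hω i hi).symm) hw

lemma cyl_extv_disjoint' {s : ℕ} {P : (Fin (s+1) → ℤ) → Prop} : Pairwise
    (Function.onFun Disjoint fun w : {w : Fin (s+1) → ℤ // P w} => cyl (extv s w.1) s) := by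
  intro w w' hne
  rw [Function.onFun, Set.disjoint_left]
  intro ω hω hω'
  apply hne
  apply Subtype.ext
  funext i
  have h1 := hω i.1 (Nat.lt_succ_iff.mp i.2)
  have h2 := hω' i.1 (Nat.lt_succ_iff.mp i.2)
  rw [extv_eq _ _ (Nat.lt_succ_iff.mp i.2)] at h1 h2
  rw [← h1, ← h2]

lemma cylindrical_measurableSet {s : ℕ} {X : Set (ℕ → ℤ)} (hX : Cylindrical s X) :
    MeasurableSet X := by
  rw [cylindrical_eq_iUnion hX]
  exact MeasurableSet.iUnion fun w => measurableSet_cyl _ _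

lemma law_inter_shift (c : BDChain b a) (y x : ℤ) {s : ℕ} {X : Set (ℕ → ℤ)}
    (hX : Cylindrical s X) (hend : ∀ ω ∈ X, ω s = x) {B : Set (ℕ → ℤ)}
    (hB : MeasurableSet B) :
    c.law y (shift s ⁻¹' B ∩ X) = c.law y X * c.law x B := by
  rw [cylindrical_eq_iUnion hX, Set.inter_iUnion]
  rw [measure_iUnion (fun w w' hne => Set.disjoint_of_subset
      Set.inter_subset_right Set.inter_subset_right (cyl_extv_disjoint' hne))
      (fun w => (((measurable_shift s) hB).inter (measurableSet_cyl _ _)))]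
  rw [measure_iUnion cyl_extv_disjoint' (fun w => measurableSet_cyl _ _)]
  rw [← ENNReal.tsum_mul_right]
  congr 1
  funext w
  have hmap := map_restrict_cyl c y (extv s w.1) s
  have h1 : c.law y (shift s ⁻¹' B ∩ cyl (extv s w.1) s)
      = Measure.map (shift s) ((c.law y).restrict (cyl (extv s w.1) s)) B := by
    rw [Measure.map_apply (measurable_shift s) hB, Measure.restrict_apply
      ((measurable_shift s) hB)]
  rw [h1, hmap, Measure.smul_apply, smul_eq_mul]
  rw [hend _ w.2]

lemma lintegral_shift (c : BDChain b a) (y x : ℤ) {s : ℕ} {X : Set (ℕ → ℤ)}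
    (hX : Cylindrical s X) (hend : ∀ ω ∈ X, ω s = x) {f : (ℕ → ℤ) → ℝ≥0∞}
    (hf : Measurable f) :
    ∫⁻ ω in X, f (shift s ω) ∂(c.law y) = c.law y X * ∫⁻ ω, f ω ∂(c.law x) := by
  conv_lhs => rw [cylindrical_eq_iUnion hX]
  rw [lintegral_iUnion (fun w => measurableSet_cyl _ _) cyl_extv_disjoint']
  conv_rhs => rw [cylindrical_eq_iUnion hX,
    measure_iUnion cyl_extv_disjoint' (fun w => measurableSet_cyl _ _)]
  rw [← ENNReal.tsum_mul_right]
  congr 1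
  funext w
  have : ∫⁻ ω in cyl (extv s w.1) s, f (shift s ω) ∂(c.law y)
      = ∫⁻ ω, f ω ∂(Measure.map (shift s) ((c.law y).restrict (cyl (extv s w.1) s))) :=
    (lintegral_map hf (measurable_shift s)).symm
  rw [this, map_restrict_cyl c y (extv s w.1) s, lintegral_smul_measure]
  rw [hend _ w.2, smul_eq_mul]

end BDaux
namespace BDaux

variable {b a : ℤ}

/-- good behaviour up to time `m`: stays in `[b,a]`, steps of size ≤ 1 -/
def Gm (b a : ℤ) (m : ℕ) : Set (ℕ → ℤ) :=
  {ω | (∀ i ≤ m, b ≤ ω i ∧ ω i ≤ a) ∧ (∀ i < m, (ω (i+1) - ω i).natAbs ≤ 1)}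

lemma cylindrical_Gm (m : ℕ) : Cylindrical m (Gm b a m) := by
  intro ω ω' hagree ⟨h1, h2⟩
  constructor
  · intro i hi
    rw [← hagree i hi]; exact h1 i hi
  · intro i hi
    rw [← hagree i (le_of_lt hi), ← hagree (i+1) hi]; exact h2 i hi

lemma cylindrical_compl {s : ℕ} {X : Set (ℕ → ℤ)} (hX : Cylindrical s X) :
    Cylindrical s Xᶜ := by
  intro ω ω' hagree hω hmem
  exact hω (hX ω' ω (fun i hi => (hagree i hi).symm) hmem)

lemma prod_ne_zero_good (c : BDChain b a) (u : ℕ → ℤ) (m : ℕ) (h0 : b ≤ u 0 ∧ u 0 ≤ a)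
    (hne : ∏ i ∈ Finset.range m, ENNReal.ofReal (bdStep c.p c.q (u i) (u (i+1))) ≠ 0) :
    (∀ i ≤ m, b ≤ u i ∧ u i ≤ a) ∧ (∀ i < m, (u (i+1) - u i).natAbs ≤ 1) := by
  induction m with
  | zero =>
    refine ⟨fun i hi => ?_, fun i hi => absurd hi (Nat.not_lt_zero i)⟩
    rw [Nat.le_zero.mp hi]; exact h0
  | succ m ih =>
    rw [Finset.prod_range_succ, mul_ne_zero_iff] at hne
    obtain ⟨hprev, hlast⟩ := hne
    obtain ⟨ihb, ihs⟩ := ih hprev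
    have hum := ihb m le_rfl
    have hpos : 0 < bdStep c.p c.q (u m) (u (m+1)) := by
      by_contra hle
      exact hlast (ENNReal.ofReal_eq_zero.mpr (le_of_not_gt hle))
    have hnew : (b ≤ u (m+1) ∧ u (m+1) ≤ a) ∧ (u (m+1) - u m).natAbs ≤ 1 := by
      by_cases h1 : u (m+1) = u m + 1
      · have hp : 0 < c.p (u m) := by
          have hb : bdStep c.p c.q (u m) (u (m+1)) = c.p (u m) := by
            rw [bdStep, if_pos h1]
          rwa [hb] at hpos
        have : ¬ (u m < b ∨ a ≤ u m) := fun hor => (ne_of_gt hp) (c.p_zero (u m) hor)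
        constructor
        · constructor <;> omega
        · rw [h1]; simp
      · by_cases h2 : u (m+1) = u m - 1
        · have hq : 0 < c.q (u m) := by
            have hb : bdStep c.p c.q (u m) (u (m+1)) = c.q (u m) := by
              rw [bdStep, if_neg h1, if_pos h2]
            rwa [hb] at hpos
          have : ¬ (u m ≤ b ∨ a < u m) := fun hor => (ne_of_gt hq) (c.q_zero (u m) hor)
          constructor
          · constructor <;> omega
          · rw [h2]; simp
        · by_cases h3 : u (m+1) = u m
          · refine ⟨by rw [h3]; exact hum, by rw [h3]; simp⟩
          · exfalso
            have : bdStep c.p c.q (u m) (u (m+1)) = 0 := by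
              rw [bdStep, if_neg h1, if_neg h2, if_neg h3]
            rw [this] at hpos; exact lt_irrefl 0 hpos
    refine ⟨fun i hi => ?_, fun i hi => ?_⟩
    · rcases Nat.lt_succ_iff_lt_or_eq.mp (Nat.lt_succ_of_le hi) with h | h
      · exact ihb i (Nat.lt_succ_iff.mp h)
      · rw [h]; exact hnew.1
    · rcases Nat.lt_succ_iff_lt_or_eq.mp hi with h | h
      · exact ihs i h
      · rw [h]; exact hnew.2

lemma law_Gm_compl_null (c : BDChain b a) {x : ℤ} (hx : b ≤ x ∧ x ≤ a) (m : ℕ) :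
    c.law x (Gm b a m)ᶜ = 0 := by
  rw [cylindrical_eq_iUnion (cylindrical_compl (cylindrical_Gm m))]
  refine measure_iUnion_null fun w => ?_
  rw [law_cyl]
  by_cases h : extv m w.1 0 = x
  · rw [if_pos h]
    by_contra hne
    have hgood := prod_ne_zero_good c (extv m w.1) m (h ▸ hx) hne
    exact w.2 hgood
  · rw [if_neg h]

/-- globally good paths -/
def GoodSet (b a : ℤ) : Set (ℕ → ℤ) := ⋂ m, Gm b a m

lemma good_bounds {ω : ℕ → ℤ} (h : ω ∈ GoodSet b a) (t : ℕ) : b ≤ ω t ∧ ω t ≤ a :=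
  (Set.mem_iInter.mp h t).1 t le_rfl

lemma good_step {ω : ℕ → ℤ} (h : ω ∈ GoodSet b a) (t : ℕ) :
    (ω (t+1) - ω t).natAbs ≤ 1 :=
  (Set.mem_iInter.mp h (t+1)).2 t (Nat.lt_succ_self t)

/-- a.s. set for the chain started at `x`: good path starting at `x` -/
def DSet (b a x : ℤ) : Set (ℕ → ℤ) := GoodSet b a ∩ {ω | ω 0 = x}

lemma law_DSet_compl_null (c : BDChain b a) {x : ℤ} (hx : b ≤ x ∧ x ≤ a) :
    c.law x (DSet b a x)ᶜ = 0 := by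
  haveI := c.prob x
  rw [DSet, Set.compl_inter]
  refine measure_union_null ?_ ?_
  · rw [GoodSet, Set.compl_iInter]
    exact measure_iUnion_null fun m => law_Gm_compl_null c hx m
  · have h1 : c.law x {ω : ℕ → ℤ | ω 0 = x} = 1 := c.init x
    rw [measure_compl (measurableSet_eval 0 x) (measure_ne_top _ _), h1, measure_univ,
      tsub_self]

lemma ivt {ω : ℕ → ℤ} (hstep : ∀ t, (ω (t+1) - ω t).natAbs ≤ 1) (x : ℤ) (t : ℕ)
    (h0 : ω 0 ≤ x) (ht : x ≤ ω t) : ∃ s ≤ t, ω s = x := by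
  induction t with
  | zero => exact ⟨0, le_rfl, le_antisymm h0 ht⟩
  | succ t ih =>
    by_cases hx : x ≤ ω t
    · obtain ⟨s, hs, hωs⟩ := ih hx
      exact ⟨s, hs.trans (Nat.le_succ t), hωs⟩
    · have := hstep t
      exact ⟨t+1, le_rfl, by omega⟩

end BDaux
namespace BDaux
open Classical

variable {b a : ℤ}

lemma measurable_hitTime (A : Set ℤ) : Measurable (hitTime A) := by
  have h : hitTime A = fun ω => ⨅ (t : ℕ), (if ω t ∈ A then (t : ℝ≥0∞) else ⊤) := by
    funext ω
    show (⨅ (t : ℕ) (_ : ω t ∈ A), (t : ℝ≥0∞)) = _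
    congr 1
    funext t
    by_cases h : ω t ∈ A
    · rw [if_pos h]; exact iInf_pos h
    · rw [if_neg h]; exact iInf_neg h
  rw [h]
  refine Measurable.iInf fun t => Measurable.ite ?_ measurable_const measurable_const
  exact (measurable_pi_apply t) ((Set.to_countable A).measurableSet)

lemma hitTime_le {A : Set ℤ} {ω : ℕ → ℤ} {t : ℕ} (h : ω t ∈ A) :
    hitTime A ω ≤ t := iInf₂_le t h

lemma le_hitTime {A : Set ℤ} {ω : ℕ → ℤ} {c : ℝ≥0∞} (h : ∀ t : ℕ, ω t ∈ A → c ≤ t) :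
    c ≤ hitTime A ω := le_iInf₂ h

lemma hitTime_eq_top {A : Set ℤ} {ω : ℕ → ℤ} (h : ∀ t, ω t ∉ A) : hitTime A ω = ⊤ := by
  rw [hitTime]
  simp only [iInf_eq_top]
  exact fun t ht => absurd ht (h t)

lemma hitTime_eq_coe {A : Set ℤ} {ω : ℕ → ℤ} {m : ℕ} (hm : ω m ∈ A)
    (hmin : ∀ t < m, ω t ∉ A) : hitTime A ω = m := by
  refine le_antisymm (hitTime_le hm) (le_hitTime fun t ht => ?_)
  have : m ≤ t := not_lt.mp fun hlt => hmin t hlt ht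
  exact_mod_cast this

lemma hitTime_shift {A : Set ℤ} {ω : ℕ → ℤ} {s : ℕ} (h : ∀ t < s, ω t ∉ A) :
    hitTime A ω = s + hitTime A (shift s ω) := by
  apply le_antisymm
  · rw [show hitTime A (shift s ω) = ⨅ (t : ℕ) (_ : shift s ω t ∈ A), (t : ℝ≥0∞) from rfl,
      ENNReal.add_iInf]
    refine le_iInf fun t => ?_
    rw [ENNReal.add_iInf]
    refine le_iInf fun ht => ?_
    have : ((s + t : ℕ) : ℝ≥0∞) = (s : ℝ≥0∞) + t := by push_cast; ring
    exact this ▸ hitTime_le (ht : ω (s + t) ∈ A)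
  · refine le_hitTime fun t ht => ?_
    have hst : s ≤ t := not_lt.mp fun hlt => h t hlt ht
    have h2 : shift s ω (t - s) ∈ A := by
      rw [show shift s ω (t - s) = ω (s + (t - s)) from rfl, Nat.add_sub_cancel' hst]
      exact ht
    calc (s : ℝ≥0∞) + hitTime A (shift s ω) ≤ s + (t - s : ℕ) :=
          add_le_add_right (hitTime_le h2) _
      _ = t := by
          rw [← Nat.cast_add]
          congr 1
          omega

/-- survival set: no visit to `A` up to time `k` -/
def Sv (A : Set ℤ) (k : ℕ) : Set (ℕ → ℤ) := {ω | ∀ t ≤ k, ω t ∉ A}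

lemma measurableSet_Sv (A : Set ℤ) (k : ℕ) : MeasurableSet (Sv A k) := by
  have : Sv A k = ⋂ (t : ℕ) (_ : t ≤ k), {ω : ℕ → ℤ | ω t ∉ A} := by
    ext ω; simp [Sv]
  rw [this]
  refine MeasurableSet.iInter fun t => MeasurableSet.iInter fun _ => ?_
  exact ((measurable_pi_apply t) ((Set.to_countable A).measurableSet)).compl

lemma cylindrical_Sv (A : Set ℤ) (k : ℕ) : Cylindrical k (Sv A k) := by
  intro ω ω' hagree hω t ht
  rw [← hagree t ht]
  exact hω t ht

lemma hitTime_tsum_indicator (A : Set ℤ) (ω : ℕ → ℤ) :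
    hitTime A ω = ∑' k : ℕ, (Sv A k).indicator (fun _ => (1 : ℝ≥0∞)) ω := by
  by_cases h : ∀ t, ω t ∉ A
  · rw [hitTime_eq_top h]
    have : ∀ k, (Sv A k).indicator (fun _ => (1 : ℝ≥0∞)) ω = 1 := fun k =>
      Set.indicator_of_mem (show ω ∈ Sv A k from fun t _ => h t) _
    rw [tsum_congr this]
    exact (ENNReal.tsum_const_eq_top_of_ne_zero one_ne_zero).symm
  · push_neg at h
    obtain ⟨t0, ht0⟩ := h
    have hex : ∃ t, ω t ∈ A := ⟨t0, ht0⟩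
    set m := Nat.find hex with hm
    have hval : ∀ k, (Sv A k).indicator (fun _ => (1 : ℝ≥0∞)) ω
        = if k < m then 1 else 0 := by
      intro k
      by_cases hk : k < m
      · rw [if_pos hk, Set.indicator_of_mem]
        exact fun t ht => Nat.find_min hex (lt_of_le_of_lt ht hk)
      · rw [if_neg hk, Set.indicator_of_notMem]
        intro hmem
        exact hmem m (not_lt.mp hk) (Nat.find_spec hex)
    rw [tsum_congr hval, tsum_eq_sum (s := Finset.range m)
      (fun k hk => if_neg (by simpa using hk))]
    rw [Finset.sum_congr rfl (fun k hk => if_pos (Finset.mem_range.mp hk)),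
      Finset.sum_const, Finset.card_range, nsmul_eq_mul, mul_one]
    exact hitTime_eq_coe (Nat.find_spec hex) (fun t ht => Nat.find_min hex ht)

lemma sum_range_arith (m : ℕ) : (∑ k ∈ Finset.range m, (2 * (k + 1)) : ℕ) = m ^ 2 + m := by
  induction m with
  | zero => simp
  | succ m ih => rw [Finset.sum_range_succ, ih]; ring

lemma hitTime_sq_tsum_indicator (A : Set ℤ) (ω : ℕ → ℤ) :
    (hitTime A ω) ^ 2 + hitTime A ω
      = ∑' k : ℕ, (Sv A k).indicator (fun _ => (2 * (k + 1) : ℝ≥0∞)) ω := by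
  by_cases h : ∀ t, ω t ∉ A
  · rw [hitTime_eq_top h]
    have hle : ∑' k : ℕ, (Sv A k).indicator (fun _ => (1 : ℝ≥0∞)) ω
        ≤ ∑' k : ℕ, (Sv A k).indicator (fun _ => (2 * (k + 1) : ℝ≥0∞)) ω := by
      refine ENNReal.tsum_le_tsum fun k => ?_
      by_cases hk : ω ∈ Sv A k
      · rw [Set.indicator_of_mem hk, Set.indicator_of_mem hk]
        calc (1:ℝ≥0∞) ≤ 2 := one_le_two
          _ ≤ 2 * (k+1) := le_mul_of_one_le_right (by norm_num) (by
              have : (1:ℝ≥0∞) ≤ (k:ℝ≥0∞) + 1 := le_add_self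
              exact this)
      · rw [Set.indicator_of_notMem hk, Set.indicator_of_notMem hk]
    have htop : ∑' k : ℕ, (Sv A k).indicator (fun _ => (1 : ℝ≥0∞)) ω = ⊤ := by
      rw [← hitTime_tsum_indicator, hitTime_eq_top h]
    rw [htop] at hle
    rw [top_le_iff.mp hle]
    simp
  · push_neg at h
    obtain ⟨t0, ht0⟩ := h
    have hex : ∃ t, ω t ∈ A := ⟨t0, ht0⟩
    set m := Nat.find hex with hm
    have hT : hitTime A ω = m :=
      hitTime_eq_coe (Nat.find_spec hex) (fun t ht => Nat.find_min hex ht)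
    have hval : ∀ k, (Sv A k).indicator (fun _ => (2 * (k + 1) : ℝ≥0∞)) ω
        = if k < m then (2 * (k + 1) : ℝ≥0∞) else 0 := by
      intro k
      by_cases hk : k < m
      · rw [if_pos hk, Set.indicator_of_mem]
        exact fun t ht => Nat.find_min hex (lt_of_le_of_lt ht hk)
      · rw [if_neg hk, Set.indicator_of_notMem]
        intro hmem
        exact hmem m (not_lt.mp hk) (Nat.find_spec hex)
    rw [tsum_congr hval, tsum_eq_sum (s := Finset.range m)
      (fun k hk => if_neg (by simpa using hk)),
      Finset.sum_congr rfl (fun k hk => if_pos (Finset.mem_range.mp hk)), hT]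
    have : ∑ k ∈ Finset.range m, (2 * ((k : ℝ≥0∞) + 1))
        = ((∑ k ∈ Finset.range m, (2 * (k + 1)) : ℕ) : ℝ≥0∞) := by
      rw [Nat.cast_sum]
      exact Finset.sum_congr rfl fun k _ => by push_cast; ring
    rw [this, sum_range_arith]
    push_cast
    ring

lemma lintegral_hitTime (μ : Measure (ℕ → ℤ)) (A : Set ℤ) :
    ∫⁻ ω, hitTime A ω ∂μ = ∑' k : ℕ, μ (Sv A k) := by
  rw [lintegral_congr (hitTime_tsum_indicator A),
    lintegral_tsum (fun k => ((measurable_const.indicator (measurableSet_Sv A k))).aemeasurable)]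
  exact tsum_congr fun k => by
    rw [lintegral_indicator (measurableSet_Sv A k), setLIntegral_one]

lemma lintegral_hitTime_sq (μ : Measure (ℕ → ℤ)) (A : Set ℤ) :
    ∫⁻ ω, ((hitTime A ω) ^ 2 + hitTime A ω) ∂μ
      = ∑' k : ℕ, (2 * ((k : ℝ≥0∞) + 1)) * μ (Sv A k) := by
  rw [lintegral_congr (hitTime_sq_tsum_indicator A),
    lintegral_tsum (fun k => ((measurable_const.indicator (measurableSet_Sv A k))).aemeasurable)]
  exact tsum_congr fun k => by
    rw [lintegral_indicator (measurableSet_Sv A k), setLIntegral_const]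

end BDaux
namespace BDaux
open Classical

variable {b a : ℤ}

/-- first hit of `y` exactly at time `s` -/
def Fhit (y : ℤ) (s : ℕ) : Set (ℕ → ℤ) := {ω | ω s = y ∧ ∀ t < s, ω t ≠ y}

lemma cylindrical_Fhit (y : ℤ) (s : ℕ) : Cylindrical s (Fhit y s) := by
  rintro ω ω' hagree ⟨h1, h2⟩
  refine ⟨by rw [← hagree s le_rfl]; exact h1, fun t ht => ?_⟩
  rw [← hagree t (le_of_lt ht)]
  exact h2 t ht

lemma Fhit_disjoint (y : ℤ) : Pairwise (Function.onFun Disjoint (Fhit y)) := by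
  intro s s' hne
  rw [Function.onFun, Set.disjoint_left]
  rintro ω ⟨h1, h2⟩ ⟨h1', h2'⟩
  rcases lt_or_gt_of_ne hne with h | h
  · exact h2' s h h1
  · exact h2 s' h h1'

lemma compl_iUnion_Fhit (y : ℤ) : (⋃ s, Fhit y s)ᶜ = {ω : ℕ → ℤ | ∀ t, ω t ≠ y} := by
  ext ω
  simp only [Set.mem_compl_iff, Set.mem_iUnion, Set.mem_setOf_eq, not_exists]
  constructor
  · intro h t hty
    have hex : ∃ t, ω t = y := ⟨t, hty⟩
    exact h (Nat.find hex) ⟨Nat.find_spec hex, fun t' ht' => Nat.find_min hex ht'⟩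
  · rintro h s ⟨h1, -⟩
    exact h s h1

lemma measurableSet_GoodSet : MeasurableSet (GoodSet b a) :=
  MeasurableSet.iInter fun m => cylindrical_measurableSet (cylindrical_Gm m)

lemma measurableSet_DSet (x : ℤ) : MeasurableSet (DSet b a x) :=
  measurableSet_GoodSet.inter (measurableSet_eval 0 x)

lemma measure_inter_full {α : Type*} [MeasurableSpace α] {μ : Measure α} {D s : Set α}
    (hD : μ Dᶜ = 0) : μ (s ∩ D) = μ s := by
  refine le_antisymm (measure_mono Set.inter_subset_left) ?_
  calc μ s ≤ μ ((s ∩ D) ∪ Dᶜ) := measure_mono (fun x hx => by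
        by_cases h : x ∈ D
        · exact Or.inl ⟨hx, h⟩
        · exact Or.inr h)
    _ ≤ μ (s ∩ D) + μ Dᶜ := measure_union_le _ _
    _ = μ (s ∩ D) := by rw [hD, add_zero]

lemma setLIntegral_inter_full {α : Type*} [MeasurableSpace α] {μ : Measure α}
    {D s : Set α} (hD : μ Dᶜ = 0) (f : α → ℝ≥0∞) :
    ∫⁻ x in s, f x ∂μ = ∫⁻ x in s ∩ D, f x ∂μ := by
  refine setLIntegral_congr ?_
  rw [MeasureTheory.ae_eq_set]
  constructor
  · refine measure_mono_null ?_ hD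
    intro x hx
    exact fun hxD => hx.2 ⟨hx.1, hxD⟩
  · refine measure_mono_null ?_ hD
    intro x hx
    exact absurd hx.1.1 hx.2

/-- key pointwise fact: on a good path started at `w ≤ y`, before the first visit
to `y` there is no visit to any `m ≥ y`. -/
lemma no_high_hit_before_first {w y m : ℤ} (hwy : w ≤ y) (hym : y ≤ m)
    {ω : ℕ → ℤ} (hg : ω ∈ GoodSet b a) (h0 : ω 0 = w) {s : ℕ}
    (hfirst : ∀ t < s, ω t ≠ y) {t : ℕ} (ht : t < s) : ω t ≠ m := by
  intro htm
  obtain ⟨t', ht', hωt'⟩ := ivt (fun u => good_step hg u) y t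
    (by rw [h0]; exact hwy) (by rw [htm]; exact hym)
  exact hfirst t' (lt_of_le_of_lt ht' ht) hωt'

lemma no_hit_at_all {w y m : ℤ} (hwy : w ≤ y) (hym : y ≤ m) (hne : y ≠ m)
    {ω : ℕ → ℤ} (hg : ω ∈ GoodSet b a) (h0 : ω 0 = w)
    (hnever : ∀ t, ω t ≠ y) (t : ℕ) : ω t ≠ m := by
  intro htm
  obtain ⟨t', -, hωt'⟩ := ivt (fun u => good_step hg u) y t
    (by rw [h0]; exact hwy) (by rw [htm]; exact hym)
  exact hnever t' hωt'

lemma eT_mono (c : BDChain b a) {w x m : ℤ} (hbw : b ≤ w) (hwx : w ≤ x) (hxm : x < m)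
    (hma : m ≤ a) : c.eT x m ≤ c.eT w m := by
  haveI := c.prob w
  set μ := c.law w with hμ
  have hDnull : μ (DSet b a w)ᶜ = 0 :=
    law_DSet_compl_null c ⟨hbw, le_trans hwx (le_trans (le_of_lt hxm) hma)⟩
  set U : Set (ℕ → ℤ) := ⋃ s, Fhit x s with hU
  have hUmeas : MeasurableSet U :=
    MeasurableSet.iUnion fun s => cylindrical_measurableSet (cylindrical_Fhit x s)
  have hsplit : ∫⁻ ω in U, hitTime {m} ω ∂μ + ∫⁻ ω in Uᶜ, hitTime {m} ω ∂μ
      = c.eT w m := lintegral_add_compl _ hUmeas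
  by_cases hcompl : μ Uᶜ = 0
  · -- the chain hits x a.s.
    have hU1 : μ U = 1 := by
      have h := measure_add_measure_compl (μ := μ) hUmeas
      rw [hcompl, add_zero, measure_univ] at h
      exact h
    have hstep : ∀ s : ℕ, μ (Fhit x s) * c.eT x m ≤ ∫⁻ ω in Fhit x s, hitTime {m} ω ∂μ := by
      intro s
      have h1 : ∫⁻ ω in Fhit x s, hitTime {m} ω ∂μ
          = ∫⁻ ω in Fhit x s ∩ DSet b a w, hitTime {m} ω ∂μ :=
        setLIntegral_inter_full hDnull _
      have h2 : ∫⁻ ω in Fhit x s ∩ DSet b a w, hitTime {m} ω ∂μ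
          = ∫⁻ ω in Fhit x s ∩ DSet b a w, ((s : ℝ≥0∞) + hitTime {m} (shift s ω)) ∂μ := by
        refine setLIntegral_congr_fun
          ((cylindrical_measurableSet (cylindrical_Fhit x s)).inter (measurableSet_DSet w))
          ?_
        rintro ω ⟨⟨hs1, hs2⟩, hgood, h0⟩
        exact hitTime_shift (fun t ht hmem =>
          no_high_hit_before_first hwx (le_of_lt hxm) hgood h0 hs2 ht hmem)
      have h3 : ∫⁻ ω in Fhit x s ∩ DSet b a w, ((s : ℝ≥0∞) + hitTime {m} (shift s ω)) ∂μ
          ≥ ∫⁻ ω in Fhit x s ∩ DSet b a w, hitTime {m} (shift s ω) ∂μ :=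
        lintegral_mono fun ω => le_add_self
      have h4 : ∫⁻ ω in Fhit x s ∩ DSet b a w, hitTime {m} (shift s ω) ∂μ
          = ∫⁻ ω in Fhit x s, hitTime {m} (shift s ω) ∂μ :=
        (setLIntegral_inter_full hDnull _).symm
      have h5 : ∫⁻ ω in Fhit x s, hitTime {m} (shift s ω) ∂μ
          = μ (Fhit x s) * c.eT x m :=
        lintegral_shift c w x (cylindrical_Fhit x s) (fun ω hω => hω.1)
          (measurable_hitTime {m})
      rw [h1, h2, ← h5, ← h4]
      exact h3
    calc c.eT x m = 1 * c.eT x m := (one_mul _).symm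
      _ = μ U * c.eT x m := by rw [hU1]
      _ = (∑' s, μ (Fhit x s)) * c.eT x m := by
          rw [measure_iUnion (Fhit_disjoint x)
            (fun s => cylindrical_measurableSet (cylindrical_Fhit x s))]
      _ = ∑' s, μ (Fhit x s) * c.eT x m := ENNReal.tsum_mul_right.symm
      _ ≤ ∑' s, ∫⁻ ω in Fhit x s, hitTime {m} ω ∂μ := ENNReal.tsum_le_tsum hstep
      _ = ∫⁻ ω in U, hitTime {m} ω ∂μ := by
          rw [lintegral_iUnion (fun s => cylindrical_measurableSet (cylindrical_Fhit x s))
            (Fhit_disjoint x)]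
      _ ≤ c.eT w m := by rw [← hsplit]; exact le_self_add
  · -- with positive probability the chain never hits x; then it never hits m either
    have htop : ∫⁻ ω in Uᶜ, hitTime {m} ω ∂μ = ⊤ := by
      rw [setLIntegral_inter_full hDnull]
      have hpt : ∫⁻ ω in Uᶜ ∩ DSet b a w, hitTime {m} ω ∂μ
          = ∫⁻ _ in Uᶜ ∩ DSet b a w, (⊤ : ℝ≥0∞) ∂μ := by
        refine setLIntegral_congr_fun (hUmeas.compl.inter (measurableSet_DSet w))
          ?_
        rintro ω ⟨hnu, hgood, h0⟩
        have hnu' : ∀ t, ω t ≠ x := by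
          rw [hU, compl_iUnion_Fhit] at hnu
          exact hnu
        exact hitTime_eq_top fun t hmem =>
          no_hit_at_all hwx (le_of_lt hxm) (ne_of_lt hxm) hgood h0 hnu' t hmem
      rw [hpt, setLIntegral_const, measure_inter_full hDnull,
        ENNReal.top_mul hcompl]
    have : c.eT w m = ⊤ := by
      rw [← hsplit, htop]
      exact add_top _
    rw [this]
    exact le_top

lemma eT_subadd (c : BDChain b a) {w y m : ℤ} (hbw : b ≤ w) (hwy : w ≤ y) (hym : y < m)
    (hma : m ≤ a) : c.eT w m ≤ c.eT w y + c.eT y m := by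
  haveI := c.prob w
  set μ := c.law w with hμ
  have hDnull : μ (DSet b a w)ᶜ = 0 :=
    law_DSet_compl_null c ⟨hbw, le_trans hwy (le_trans (le_of_lt hym) hma)⟩
  set U : Set (ℕ → ℤ) := ⋃ s, Fhit y s with hU
  have hUmeas : MeasurableSet U :=
    MeasurableSet.iUnion fun s => cylindrical_measurableSet (cylindrical_Fhit y s)
  have hsplit : ∫⁻ ω in U, hitTime {m} ω ∂μ + ∫⁻ ω in Uᶜ, hitTime {m} ω ∂μ
      = c.eT w m := lintegral_add_compl _ hUmeas
  -- on the complement, T_m = T_y = ⊤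
  have hcompl_eq : ∫⁻ ω in Uᶜ, hitTime {m} ω ∂μ = ∫⁻ ω in Uᶜ, hitTime {y} ω ∂μ := by
    rw [setLIntegral_inter_full hDnull (fun ω => hitTime {m} ω),
      setLIntegral_inter_full hDnull (fun ω => hitTime {y} ω)]
    refine setLIntegral_congr_fun (hUmeas.compl.inter (measurableSet_DSet w))
      ?_
    rintro ω ⟨hnu, hgood, h0⟩
    have hnu' : ∀ t, ω t ≠ y := by
      rw [hU, compl_iUnion_Fhit] at hnu
      exact hnu
    rw [hitTime_eq_top fun t hmem =>
        no_hit_at_all hwy (le_of_lt hym) (ne_of_lt hym) hgood h0 hnu' t hmem,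
      hitTime_eq_top fun t hmem => hnu' t hmem]
  have hstep : ∀ s : ℕ, ∫⁻ ω in Fhit y s, hitTime {m} ω ∂μ
      = ∫⁻ ω in Fhit y s, hitTime {y} ω ∂μ + μ (Fhit y s) * c.eT y m := by
    intro s
    have hFmeas : MeasurableSet (Fhit y s) := cylindrical_measurableSet (cylindrical_Fhit y s)
    have h1 : ∫⁻ ω in Fhit y s, hitTime {m} ω ∂μ
        = ∫⁻ ω in Fhit y s ∩ DSet b a w, ((s : ℝ≥0∞) + hitTime {m} (shift s ω)) ∂μ := by
      rw [setLIntegral_inter_full hDnull]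
      refine setLIntegral_congr_fun (hFmeas.inter (measurableSet_DSet w))
        ?_
      rintro ω ⟨⟨hs1, hs2⟩, hgood, h0⟩
      exact hitTime_shift (fun t ht hmem =>
        no_high_hit_before_first hwy (le_of_lt hym) hgood h0 hs2 ht hmem)
    have h2 : ∫⁻ ω in Fhit y s ∩ DSet b a w, ((s : ℝ≥0∞) + hitTime {m} (shift s ω)) ∂μ
        = (s : ℝ≥0∞) * μ (Fhit y s) + μ (Fhit y s) * c.eT y m := by
      rw [lintegral_add_left measurable_const, setLIntegral_const,
        measure_inter_full hDnull, ← setLIntegral_inter_full hDnull,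
        lintegral_shift c w y (cylindrical_Fhit y s) (fun ω hω => hω.1)
          (measurable_hitTime {m})]
      rfl
    have h3 : (s : ℝ≥0∞) * μ (Fhit y s) = ∫⁻ ω in Fhit y s, hitTime {y} ω ∂μ := by
      rw [← setLIntegral_const]
      refine (setLIntegral_congr_fun hFmeas ?_).symm
      rintro ω ⟨hs1, hs2⟩
      exact hitTime_eq_coe (hs1 : ω s ∈ ({y} : Set ℤ)) (fun t ht hmem => hs2 t ht hmem)
    rw [h1, h2, h3]
  have hUint : ∫⁻ ω in U, hitTime {m} ω ∂μ
      = ∫⁻ ω in U, hitTime {y} ω ∂μ + μ U * c.eT y m := by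
    rw [lintegral_iUnion (fun s => cylindrical_measurableSet (cylindrical_Fhit y s))
        (Fhit_disjoint y), lintegral_iUnion (fun s => cylindrical_measurableSet
        (cylindrical_Fhit y s)) (Fhit_disjoint y),
      measure_iUnion (Fhit_disjoint y) (fun s => cylindrical_measurableSet
        (cylindrical_Fhit y s)), ← ENNReal.tsum_mul_right, ← ENNReal.tsum_add]
    exact tsum_congr hstep
  have hfinal : c.eT w m = c.eT w y + μ U * c.eT y m := by
    rw [← hsplit, hUint, hcompl_eq]
    have : c.eT w y = ∫⁻ ω in U, hitTime {y} ω ∂μ + ∫⁻ ω in Uᶜ, hitTime {y} ω ∂μ :=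
      (lintegral_add_compl _ hUmeas).symm
    rw [this]
    ring
  rw [hfinal]
  refine add_le_add_right (mul_le_of_le_one_left' ?_) _
  exact prob_le_one

lemma eT_bound (c : BDChain b a) {j n : ℤ} (hj : b ≤ j) (hjn : j < n) (hna : n ≤ a)
    {x : ℤ} (hbx : b ≤ x) (hxn : x < n) :
    c.eT x n ≤ c.eT b j + c.eT j n := by
  rcases le_or_gt j x with h | h
  · exact le_trans (eT_mono c hj h hxn hna) le_add_self
  · calc c.eT x n ≤ c.eT x j + c.eT j n := eT_subadd c hbx (le_of_lt h) hjn hna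
      _ ≤ c.eT b j + c.eT j n := by
          refine add_le_add_left (eT_mono c le_rfl hbx h ?_) _
          exact le_trans (le_of_lt hjn) hna

end BDaux
namespace BDaux
open Classical

variable {b a : ℤ}

lemma tsum_weighted (f : ℕ → ℝ≥0∞) :
    ∑' k : ℕ, ((k : ℝ≥0∞) + 1) * f k = ∑' s : ℕ, ∑' u : ℕ, f (s + u) := by
  have inner : ∀ k : ℕ, ((k : ℝ≥0∞) + 1) * f k
      = ∑' s : ℕ, (if s ≤ k then f k else 0) := by
    intro k
    rw [tsum_eq_sum (s := Finset.range (k+1))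
      (fun s hs => if_neg (by simpa [Nat.lt_succ_iff] using hs)),
      Finset.sum_congr rfl (fun s hs => if_pos (Nat.lt_succ_iff.mp (Finset.mem_range.mp hs))),
      Finset.sum_const, Finset.card_range, nsmul_eq_mul]
    push_cast
    ring
  rw [tsum_congr inner, ENNReal.tsum_comm]
  refine tsum_congr fun s => ?_
  have hrw : ∀ u : ℕ, f (s + u) = (if s ≤ s + u then f (s + u) else 0) := fun u =>
    (if_pos (Nat.le_add_right s u)).symm
  rw [tsum_congr hrw]
  have hinj : Function.Injective (fun u : ℕ => s + u) := fun u u' h => Nat.add_left_cancel h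
  have hsupp : Function.support (fun k : ℕ => if s ≤ k then f k else 0)
      ⊆ Set.range (fun u : ℕ => s + u) := by
    intro k hk
    rw [Function.mem_support] at hk
    have hsk : s ≤ k := by
      by_contra hc
      exact hk (if_neg hc)
    exact ⟨k - s, show s + (k - s) = k by omega⟩
  exact (hinj.tsum_eq (f := fun k : ℕ => if s ≤ k then f k else 0) hsupp).symm

/-- survival up to time `s` with endpoint `x` -/
def Asx (n x : ℤ) (s : ℕ) : Set (ℕ → ℤ) := Sv {n} s ∩ {ω | ω s = x}

lemma cylindrical_Asx (n x : ℤ) (s : ℕ) : Cylindrical s (Asx n x s) := by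
  rintro ω ω' hagree ⟨h1, h2⟩
  exact ⟨cylindrical_Sv {n} s ω ω' hagree h1, show ω' s = x by rw [← hagree s le_rfl]; exact h2⟩

lemma Asx_disjoint (n : ℤ) (s : ℕ) :
    Pairwise (Function.onFun Disjoint fun x : ℤ => Asx n x s) := by
  intro x x' hne
  rw [Function.onFun, Set.disjoint_left]
  rintro ω ⟨-, h2⟩ ⟨-, h2'⟩
  exact hne ((h2 : ω s = x).symm.trans (h2' : ω s = x'))

lemma Sv_partition (n : ℤ) (s : ℕ) : Sv {n} s = ⋃ x : ℤ, Asx n x s := by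
  ext ω
  simp only [Set.mem_iUnion, Asx, Set.mem_inter_iff, Set.mem_setOf_eq]
  exact ⟨fun h => ⟨ω s, h, rfl⟩, fun ⟨_, h, _⟩ => h⟩

lemma Sv_add (n : ℤ) (s u : ℕ) :
    Sv {n} (s + u) = shift s ⁻¹' (Sv {n} u) ∩ Sv {n} s := by
  ext ω
  simp only [Set.mem_inter_iff, Set.mem_preimage]
  constructor
  · intro h
    exact ⟨fun t ht => h (s + t) (by omega), fun t ht => h t (by omega)⟩
  · rintro ⟨h1, h2⟩ t ht
    by_cases hts : t ≤ s
    · exact h2 t hts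
    · have : t = s + (t - s) := by omega
      rw [this]
      exact h1 (t - s) (by omega)

lemma key_decomp (c : BDChain b a) (j n : ℤ) (s u : ℕ) :
    c.law j (Sv {n} (s + u)) = ∑' x : ℤ, c.law j (Asx n x s) * c.law x (Sv {n} u) := by
  have h1 : Sv {n} (s + u) = ⋃ x : ℤ, (shift s ⁻¹' (Sv {n} u) ∩ Asx n x s) := by
    rw [Sv_add n s u]
    conv_lhs => rw [Sv_partition n s]
    rw [Set.inter_iUnion]
  rw [h1, measure_iUnion]
  · refine tsum_congr fun x => ?_
    exact law_inter_shift c j x (cylindrical_Asx n x s) (fun ω hω => hω.2)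
      (measurableSet_Sv {n} u)
  · intro x x' hne
    exact Set.disjoint_of_subset Set.inter_subset_right Set.inter_subset_right
      (Asx_disjoint n s hne)
  · intro x
    exact (((measurable_shift s) (measurableSet_Sv {n} u)).inter
      (cylindrical_measurableSet (cylindrical_Asx n x s)))

lemma Asx_null (c : BDChain b a) {j n : ℤ} (hbj : b ≤ j) (hjn : j < n) (hna : n ≤ a)
    {x : ℤ} (hx : ¬ (b ≤ x ∧ x < n)) (s : ℕ) : c.law j (Asx n x s) = 0 := by
  have hDnull : c.law j (DSet b a j)ᶜ = 0 :=
    law_DSet_compl_null c ⟨hbj, le_trans (le_of_lt hjn) hna⟩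
  rw [← measure_inter_full (s := Asx n x s) hDnull]
  convert measure_empty (μ := c.law j)
  rw [Set.eq_empty_iff_forall_notMem]
  rintro ω ⟨⟨hsv, hend⟩, hgood, h0⟩
  rw [not_and_or, not_le, not_lt] at hx
  rcases hx with hxb | hxn
  · have := (good_bounds hgood s).1
    rw [(hend : ω s = x)] at this
    omega
  · rcases eq_or_lt_of_le hxn with heq | hlt
    · exact hsv s le_rfl (by rw [(hend : ω s = x), ← heq]; rfl)
    · obtain ⟨t, hts, hωt⟩ := ivt (fun u => good_step hgood u) n s
        (by rw [h0]; exact le_of_lt hjn)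
        (by rw [(hend : ω s = x)]; exact le_of_lt hlt)
      exact hsv t hts (by rw [hωt]; rfl)

end BDaux
namespace BDaux

variable {b a : ℤ}

lemma main (c : BDChain b a) {j n : ℤ} (hj : b ≤ j) (hjn : j < n) (hn : n ≤ a) :
    c.eT2 j n + c.eT j n ≤ 2 * (c.eT j n) ^ 2 + 2 * c.eT b j * c.eT j n := by
  set K := c.eT b j + c.eT j n with hK
  have h1 : c.eT2 j n + c.eT j n
      = ∫⁻ ω, ((hitTime {n} ω) ^ 2 + hitTime {n} ω) ∂(c.law j) := by
    rw [BDChain.eT2, BDChain.eT,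
      ← lintegral_add_left ((measurable_hitTime {n}).pow_const 2)]
  have h3 : c.eT2 j n + c.eT j n = 2 * ∑' s : ℕ, ∑' u : ℕ, c.law j (Sv {n} (s + u)) := by
    rw [h1, lintegral_hitTime_sq, ← tsum_weighted (fun k => c.law j (Sv {n} k)),
      ← ENNReal.tsum_mul_left]
    exact tsum_congr fun k => by ring
  have hpart : ∀ s : ℕ, ∑' x : ℤ, c.law j (Asx n x s) = c.law j (Sv {n} s) := by
    intro s
    rw [← measure_iUnion (Asx_disjoint n s)
      (fun x => cylindrical_measurableSet (cylindrical_Asx n x s)), ← Sv_partition n s]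
  have hbound : ∀ s : ℕ, ∑' u : ℕ, c.law j (Sv {n} (s + u)) ≤ K * c.law j (Sv {n} s) := by
    intro s
    have e1 : ∑' u : ℕ, c.law j (Sv {n} (s + u))
        = ∑' x : ℤ, c.law j (Asx n x s) * c.eT x n := by
      rw [tsum_congr (fun u => key_decomp c j n s u), ENNReal.tsum_comm]
      refine tsum_congr fun x => ?_
      rw [ENNReal.tsum_mul_left, BDChain.eT, lintegral_hitTime]
    rw [e1]
    have e2 : ∑' x : ℤ, c.law j (Asx n x s) * c.eT x n
        ≤ ∑' x : ℤ, c.law j (Asx n x s) * K := by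
      refine ENNReal.tsum_le_tsum fun x => ?_
      by_cases hx : b ≤ x ∧ x < n
      · exact mul_le_mul_right (eT_bound c hj hjn hn hx.1 hx.2) _
      · rw [Asx_null c hj hjn hn hx s, zero_mul, zero_mul]
    refine e2.trans ?_
    rw [ENNReal.tsum_mul_right, hpart s, mul_comm]
  have h4 : c.eT2 j n + c.eT j n ≤ 2 * (K * c.eT j n) := by
    rw [h3]
    refine mul_le_mul_right ?_ 2
    calc ∑' s : ℕ, ∑' u : ℕ, c.law j (Sv {n} (s + u))
        ≤ ∑' s : ℕ, K * c.law j (Sv {n} s) := ENNReal.tsum_le_tsum hbound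
      _ = K * ∑' s : ℕ, c.law j (Sv {n} s) := ENNReal.tsum_mul_left
      _ = K * c.eT j n := by rw [BDChain.eT, lintegral_hitTime]
  refine h4.trans ?_
  rw [hK]
  ring_nf
  exact le_refl _

end BDaux

/-- For an irreducible birth-and-death chain on `⟦b,a⟧` with
reversible invariant probability measure `π`, for all `b ≤ j < n ≤ a`:
`E[T_{j→n}²] ≤ 2 E[T_{j→n}]² + 2 E[T_{b→j}] E[T_{j→n}] − E[T_{j→n}]`
(stated with the subtracted mean moved to the left-hand side, an equivalent form
avoiding subtraction in `ℝ≥0∞`). -/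
theorem second_moment_bound {b a : ℤ} (hab : b < a) (c : BDChain b a)
    (π : ℤ → ℝ) (hπ : c.IsStationary π)
    (j n : ℤ) (hj : b ≤ j) (hjn : j < n) (hn : n ≤ a) :
    c.eT2 j n + c.eT j n ≤ 2 * (c.eT j n) ^ 2 + 2 * c.eT b j * c.eT j n := by
  exact BDaux.main c hj hjn hn
end
end

section
/- Let X be an irreducible birth-and-death chain on ⟦b,a⟧ (b ≤ 0 < a) with transition probabilities p_x, q_x and invariant measure π, and let X̂ be its right half-well version. Then E[T_{0→a}] = ( π(⟦b,−1⟧)·E[T̂_{a→0}] + E[T̂_{0→a}] ) / π(⟦0,a⟧), and in particular E[T_{0→a}] ≥ E[T̂_{0→a}]. Symmetrically, with X̌ the left half-well version, E[T_{0→b}] = ( π(⟦1,a⟧)·E[Ť_{b→0}] + E[Ť_{0→b}] ) / π(⟦b,0⟧) ≥ E[Ť_{0→b}]. -/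
open MeasureTheory Filter Topology ENNReal ProbabilityTheory

noncomputable section

namespace HW
open Finset

/-- one step weight in `ℝ≥0∞` -/
def S (p q : ℤ → ℝ) (x z : ℤ) : ℝ≥0∞ := ENNReal.ofReal (bdStep p q x z)

variable {b a : ℤ}

lemma bdStep_succ (p q : ℤ → ℝ) (x : ℤ) : bdStep p q x (x+1) = p x := by
  simp [bdStep]

lemma bdStep_pred (p q : ℤ → ℝ) (x : ℤ) : bdStep p q x (x-1) = q x := by
  rw [bdStep, if_neg (by omega), if_pos rfl]

lemma bdStep_self (p q : ℤ → ℝ) (x : ℤ) : bdStep p q x x = 1 - p x - q x := by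
  rw [bdStep, if_neg (by omega), if_neg (by omega), if_pos rfl]

lemma bdStep_other (p q : ℤ → ℝ) {x z : ℤ} (h1 : z ≠ x + 1) (h2 : z ≠ x - 1) (h3 : z ≠ x) :
    bdStep p q x z = 0 := by
  rw [bdStep, if_neg h1, if_neg h2, if_neg h3]

lemma p_nonneg (c : BDChain b a) (x : ℤ) : 0 ≤ c.p x := by
  by_cases h : b ≤ x ∧ x ≤ a - 1
  · exact (c.p_pos x h.1 h.2).le
  · exact (c.p_zero x (by omega)).ge

lemma q_nonneg (c : BDChain b a) (x : ℤ) : 0 ≤ c.q x := by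
  by_cases h : b + 1 ≤ x ∧ x ≤ a
  · exact (c.q_pos x h.1 h.2).le
  · exact (c.q_zero x (by omega)).ge

lemma r_nonneg' (c : BDChain b a) (x : ℤ) : 0 ≤ 1 - c.p x - c.q x := by
  by_cases h : b ≤ x ∧ x ≤ a
  · have := c.r_nonneg x h.1 h.2; linarith
  · have hp := c.p_zero x (by omega)
    have hq := c.q_zero x (by omega)
    linarith

lemma bdStep_nonneg (c : BDChain b a) (x z : ℤ) : 0 ≤ bdStep c.p c.q x z := by
  rw [bdStep]
  split_ifs
  · exact p_nonneg c x
  · exact q_nonneg c x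
  · exact r_nonneg' c x
  · exact le_refl 0

lemma p_le_one (c : BDChain b a) (x : ℤ) : c.p x ≤ 1 := by
  have := r_nonneg' c x; have := q_nonneg c x; linarith

lemma S_row (c : BDChain b a) (x : ℤ) :
    S c.p c.q x (x+1) + S c.p c.q x (x-1) + S c.p c.q x x = 1 := by
  rw [S, S, S, bdStep_succ, bdStep_pred, bdStep_self,
    ← ENNReal.ofReal_add (p_nonneg c x) (q_nonneg c x),
    ← ENNReal.ofReal_add (add_nonneg (p_nonneg c x) (q_nonneg c x)) (r_nonneg' c x)]
  norm_num

lemma S_eq_zero (c : BDChain b a) {x z : ℤ} (h1 : z ≠ x + 1) (h2 : z ≠ x - 1) (h3 : z ≠ x) :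
    S c.p c.q x z = 0 := by
  rw [S, bdStep_other _ _ h1 h2 h3, ENNReal.ofReal_zero]

/-- `hitTime` is `⊤` or a natural number -/
lemma hitTime_shape (A : Set ℤ) (ω : ℕ → ℤ) :
    hitTime A ω = ⊤ ∨ ∃ m : ℕ, hitTime A ω = m := by
  by_cases h : ∃ t, ω t ∈ A
  · right
    classical
    refine ⟨Nat.find h, le_antisymm ?_ ?_⟩
    · exact iInf₂_le (Nat.find h) (Nat.find_spec h)
    · refine le_iInf₂ fun t ht => ?_
      exact_mod_cast Nat.find_min' h ht
  · left
    push_neg at h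
    simp [hitTime, h]

lemma lt_hitTime_iff (A : Set ℤ) (ω : ℕ → ℤ) (n : ℕ) :
    (n : ℝ≥0∞) < hitTime A ω ↔ ∀ i ≤ n, ω i ∉ A := by
  constructor
  · intro h i hi hmem
    have h1 : hitTime A ω ≤ (i : ℝ≥0∞) := iInf₂_le i hmem
    have h2 : (i : ℝ≥0∞) ≤ (n : ℝ≥0∞) := by exact_mod_cast hi
    exact absurd (h.trans_le (h1.trans h2)) (lt_irrefl _)
  · intro h
    have h1 : (n : ℝ≥0∞) + 1 ≤ hitTime A ω := by
      refine le_iInf₂ fun t ht => ?_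
      have : n + 1 ≤ t := by
        by_contra hc
        exact h t (by omega) ht
      exact_mod_cast this
    calc (n : ℝ≥0∞) < (n : ℝ≥0∞) + 1 := ENNReal.lt_add_right (by simp) one_ne_zero
    _ ≤ _ := h1

lemma tsum_indicator_of_nat (m : ℕ) :
    ∑' n : ℕ, (if (n : ℝ≥0∞) < (m : ℝ≥0∞) then (1:ℝ≥0∞) else 0) = m := by
  rw [tsum_eq_sum (s := Finset.range m) (by
    intro n hn
    rw [if_neg]
    simp only [Finset.mem_range, not_lt] at hn
    exact_mod_cast not_lt.2 (Nat.cast_le.2 hn))]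
  rw [Finset.sum_congr rfl (fun n hn => by
    rw [if_pos]
    exact_mod_cast Finset.mem_range.1 hn)]
  simp

lemma ennreal_eq_tsum_indicator (v : ℝ≥0∞) (hv : v = ⊤ ∨ ∃ m : ℕ, v = m) :
    v = ∑' n : ℕ, if (n : ℝ≥0∞) < v then 1 else 0 := by
  rcases hv with rfl | ⟨m, rfl⟩
  · rw [tsum_congr (fun n => if_pos (ENNReal.natCast_lt_top n))]
    exact (ENNReal.tsum_const_eq_top_of_ne_zero one_ne_zero).symm
  · exact (tsum_indicator_of_nat m).symm

end HW

namespace HW2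
open HW Finset

variable {b a : ℤ}

def cylSet (n : ℕ) (v : Fin (n+1) → ℤ) : Set (ℕ → ℤ) := {ω | ∀ i : Fin (n+1), ω i = v i}

lemma cylSet_measurable (n : ℕ) (v : Fin (n+1) → ℤ) : MeasurableSet (cylSet n v) := by
  have : cylSet n v = ⋂ i : Fin (n+1), (fun ω : ℕ → ℤ => ω i) ⁻¹' {v i} := by
    ext ω; simp [cylSet]
  rw [this]
  exact MeasurableSet.iInter fun i => (measurable_pi_apply _) (measurableSet_singleton _)

lemma cylSet_disj {n : ℕ} {v w : Fin (n+1) → ℤ} (h : v ≠ w) :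
    Disjoint (cylSet n v) (cylSet n w) := by
  rw [Set.disjoint_left]
  intro ω hv hw
  exact h (funext fun i => (hv i).symm.trans (hw i))

def W (p q : ℤ → ℝ) (n : ℕ) (v : Fin (n+1) → ℤ) : ℝ≥0∞ :=
  ∏ i : Fin n, S p q (v i.castSucc) (v i.succ)

lemma W_zero (p q : ℤ → ℝ) (v : Fin 1 → ℤ) : W p q 0 v = 1 := by simp [W]

lemma W_succ (p q : ℤ → ℝ) (n : ℕ) (v : Fin (n+2) → ℤ) :
    W p q (n+1) v = W p q n (v ∘ Fin.castSucc)
      * S p q (v (Fin.castSucc (Fin.last n))) (v (Fin.last (n+1))) := by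
  rw [W, Fin.prod_univ_castSucc, Fin.succ_last]
  congr 1

lemma law_cylSet (c : BDChain b a) (x : ℤ) : ∀ (n : ℕ) (v : Fin (n+1) → ℤ),
    c.law x (cylSet n v) = (if v 0 = x then 1 else 0) * W c.p c.q n v := by
  intro n
  induction n with
  | zero =>
    intro v
    have hset : cylSet 0 v = {ω : ℕ → ℤ | ω 0 = v 0} := by
      ext ω; simp [cylSet, Fin.forall_fin_one]
    rw [hset, W_zero, mul_one]
    by_cases h : v 0 = x
    · rw [if_pos h, h]; exact c.init x
    · rw [if_neg h]
      have hms : MeasurableSet {ω : ℕ → ℤ | ω 0 = x} := by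
        have : {ω : ℕ → ℤ | ω 0 = x} = (fun ω : ℕ → ℤ => ω 0) ⁻¹' {x} := rfl
        rw [this]
        exact (measurable_pi_apply 0) (measurableSet_singleton x)
      have hc : c.law x {ω : ℕ → ℤ | ω 0 = x}ᶜ = 0 := by
        have hp := c.prob x
        rw [measure_compl hms (measure_ne_top _ _), c.init x, measure_univ]
        simp
      refine le_antisymm (le_trans (measure_mono ?_) hc.le) zero_le
      intro ω hω
      simp only [Set.mem_setOf_eq] at hω
      simp only [Set.mem_compl_iff, Set.mem_setOf_eq]
      rw [hω]; exact h
  | succ n ih =>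
    intro v
    set u : ℕ → ℤ := fun i => if h : i < n + 2 then v ⟨i, h⟩ else 0 with hu
    have hui : ∀ i : Fin (n+2), u i = v i := by
      intro i; simp only [hu, i.isLt, dif_pos, Fin.eta]
    have h1 : {ω : ℕ → ℤ | ∀ i ≤ n + 1, ω i = u i} = cylSet (n+1) v := by
      ext ω
      constructor
      · intro h i
        rw [← hui i]
        exact h i (by omega)
      · intro h i hi
        have := h ⟨i, by omega⟩
        rw [this, hui ⟨i, by omega⟩]
    have h2 : {ω : ℕ → ℤ | ∀ i ≤ n, ω i = u i} = cylSet n (v ∘ Fin.castSucc) := by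
      ext ω
      constructor
      · intro h i
        have := h i (by
          have := i.isLt
          omega)
        rw [this]
        simp only [Function.comp_apply]
        rw [← hui i.castSucc]
        rfl
      · intro h i hi
        have := h ⟨i, by omega⟩
        rw [this]
        exact (hui ⟨i, by omega⟩).symm
    have h3 := c.markov x u n
    rw [h1, h2] at h3
    rw [h3, ih, W_succ]
    have e1 : u n = v (Fin.castSucc (Fin.last n)) := by
      rw [← hui (Fin.castSucc (Fin.last n))]; rfl
    have e2 : u (n+1) = v (Fin.last (n+1)) := by
      rw [← hui (Fin.last (n+1))]; rfl
    have e3 : (v ∘ Fin.castSucc) 0 = v 0 := rfl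
    rw [e1, e2, e3, mul_assoc]
    rfl

def F (p q : ℤ → ℝ) (y : ℤ) (n : ℕ) (x : ℤ) : ℝ≥0∞ :=
  ∑' v : Fin (n+1) → ℤ, if (∀ i, v i ≠ y) ∧ v 0 = x then W p q n v else 0

lemma law_avoid (c : BDChain b a) (x y : ℤ) (n : ℕ) :
    c.law x {ω : ℕ → ℤ | ∀ i ≤ n, ω i ≠ y} = F c.p c.q y n x := by
  classical
  have hset : {ω : ℕ → ℤ | ∀ i ≤ n, ω i ≠ y}
      = ⋃ v : {v : Fin (n+1) → ℤ | ∀ i, v i ≠ y}, cylSet n v.1 := by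
    ext ω
    constructor
    · intro h
      exact Set.mem_iUnion.2 ⟨⟨fun i => ω i, fun i => h i (by omega)⟩, fun i => rfl⟩
    · intro h
      rcases Set.mem_iUnion.1 h with ⟨⟨v, hv⟩, hω⟩
      intro i hi
      have := hω ⟨i, by omega⟩
      rw [this]
      exact hv _
  rw [hset, measure_iUnion
    (fun v w hvw => cylSet_disj (fun h => hvw (Subtype.ext h)))
    (fun v => cylSet_measurable n v.1)]
  rw [F, _root_.tsum_subtype {v : Fin (n+1) → ℤ | ∀ i, v i ≠ y} (fun v => c.law x (cylSet n v))]
  refine tsum_congr fun v => ?_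
  by_cases hv : ∀ i, v i ≠ y
  · rw [Set.indicator_of_mem (show v ∈ {v : Fin (n+1) → ℤ | ∀ i, v i ≠ y} from hv), law_cylSet]
    by_cases h0 : v 0 = x
    · rw [if_pos h0, if_pos ⟨hv, h0⟩, one_mul]
    · rw [if_neg h0, if_neg (fun hc => h0 hc.2), zero_mul]
  · rw [Set.indicator_of_notMem (show v ∉ {v : Fin (n+1) → ℤ | ∀ i, v i ≠ y} from hv), if_neg (fun hc => hv hc.1)]

end HW2

namespace HW3
open HW HW2 Finset

variable {b a : ℤ}

lemma F_target (p q : ℤ → ℝ) (y : ℤ) (n : ℕ) : F p q y n y = 0 := by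
  rw [F]
  have h : ∀ v : Fin (n+1) → ℤ,
      (if (∀ i, v i ≠ y) ∧ v 0 = y then W p q n v else 0) = 0 := by
    intro v
    rw [if_neg]
    rintro ⟨h1, h2⟩
    exact h1 0 h2
  rw [tsum_congr h, tsum_zero]

lemma F_zero (p q : ℤ → ℝ) (y x : ℤ) : F p q y 0 x = if x = y then 0 else 1 := by
  classical
  by_cases h : x = y
  · rw [if_pos h, h, F_target]
  · rw [if_neg h, F]
    rw [tsum_eq_single (fun _ => x : Fin 1 → ℤ) ?_]
    · rw [if_pos ⟨fun i => h, rfl⟩, W_zero]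
    · intro v hv
      rw [if_neg]
      rintro ⟨h1, h2⟩
      apply hv
      funext i
      rw [Subsingleton.elim i 0, h2]

lemma W_cons (p q : ℤ → ℝ) (n : ℕ) (z : ℤ) (t : Fin (n+1) → ℤ) :
    W p q (n+1) (Fin.cons z t) = S p q z (t 0) * W p q n t := by
  rw [W, Fin.prod_univ_succ, W]
  congr 1

lemma tsum_step (c : BDChain b a) (x : ℤ) (g : ℤ → ℝ≥0∞) :
    ∑' z : ℤ, S c.p c.q x z * g z
      = S c.p c.q x (x+1) * g (x+1) + S c.p c.q x (x-1) * g (x-1) + S c.p c.q x x * g x := by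
  classical
  rw [tsum_eq_sum (s := ({x+1, x-1, x} : Finset ℤ)) ?_]
  · rw [Finset.sum_insert (by simp only [Finset.mem_insert, Finset.mem_singleton]; omega),
      Finset.sum_insert (by simp only [Finset.mem_singleton]; omega),
      Finset.sum_singleton, add_assoc]
  · intro z hz
    simp only [Finset.mem_insert, Finset.mem_singleton] at hz
    push_neg at hz
    rw [S_eq_zero c hz.1 hz.2.1 hz.2.2, zero_mul]

lemma F_succ (c : BDChain b a) (y : ℤ) (n : ℕ) (x : ℤ) :
    F c.p c.q y (n+1) x = if x = y then 0 else
      ∑' z : ℤ, S c.p c.q x z * F c.p c.q y n z := by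
  classical
  by_cases hxy : x = y
  · rw [if_pos hxy, hxy, F_target]
  rw [if_neg hxy, F]
  rw [← Equiv.tsum_eq (Fin.consEquiv (fun _ : Fin (n+2) => ℤ))]
  rw [ENNReal.tsum_prod']
  have hterm : ∀ (z : ℤ) (t : Fin (n+1) → ℤ),
      (if (∀ i, (Fin.consEquiv (fun _ : Fin (n+2) => ℤ)) (z, t) i ≠ y) ∧
          (Fin.consEquiv (fun _ : Fin (n+2) => ℤ)) (z, t) 0 = x
        then W c.p c.q (n+1) ((Fin.consEquiv (fun _ : Fin (n+2) => ℤ)) (z, t)) else 0)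
      = if z = x then (if (∀ i, t i ≠ y) then S c.p c.q z (t 0) * W c.p c.q n t else 0)
        else 0 := by
    intro z t
    have hc : (Fin.consEquiv (fun _ : Fin (n+2) => ℤ)) (z, t) = Fin.cons z t := rfl
    rw [hc, W_cons]
    have hcond : ((∀ i, (Fin.cons z t : Fin (n+2) → ℤ) i ≠ y) ∧ (Fin.cons z t : Fin (n+2) → ℤ) 0 = x)
        ↔ (z = x ∧ (∀ i, t i ≠ y)) := by
      rw [Fin.forall_fin_succ]
      simp only [Fin.cons_succ, Fin.cons_zero]
      constructor
      · rintro ⟨⟨h1, h2⟩, h3⟩; exact ⟨h3, h2⟩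
      · rintro ⟨h1, h2⟩; exact ⟨⟨by rw [h1]; exact hxy, h2⟩, h1⟩
    by_cases h : z = x
    · rw [if_pos h]
      by_cases h2 : ∀ i, t i ≠ y
      · rw [if_pos h2, if_pos (hcond.2 ⟨h, h2⟩)]
      · rw [if_neg h2, if_neg (fun hc2 => h2 (hcond.1 hc2).2)]
    · rw [if_neg h, if_neg (fun hc2 => h (hcond.1 hc2).1)]
  rw [tsum_congr (fun z => tsum_congr (fun t => hterm z t))]
  rw [tsum_eq_single x (fun z hz => by
    rw [tsum_congr (fun t => if_neg hz), tsum_zero])]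
  rw [tsum_congr (fun t => if_pos rfl)]
  calc ∑' t : Fin (n+1) → ℤ, (if (∀ i, t i ≠ y) then S c.p c.q x (t 0) * W c.p c.q n t else 0)
      = ∑' (t : Fin (n+1) → ℤ), ∑' (w : ℤ),
          (if (∀ i, t i ≠ y) ∧ t 0 = w then S c.p c.q x w * W c.p c.q n t else 0) := by
        refine tsum_congr fun t => ?_
        rw [tsum_eq_single (t 0) (fun w hw => if_neg (fun hc => hw hc.2.symm))]
        by_cases h : ∀ i, t i ≠ y
        · rw [if_pos h, if_pos ⟨h, rfl⟩]
        · rw [if_neg h, if_neg (fun hc => h hc.1)]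
    _ = ∑' (w : ℤ), ∑' (t : Fin (n+1) → ℤ),
          (if (∀ i, t i ≠ y) ∧ t 0 = w then S c.p c.q x w * W c.p c.q n t else 0) :=
        ENNReal.tsum_comm
    _ = ∑' (w : ℤ), S c.p c.q x w * F c.p c.q y n w := by
        refine tsum_congr fun w => ?_
        rw [F, ← ENNReal.tsum_mul_left]
        refine tsum_congr fun t => ?_
        by_cases h : (∀ i, t i ≠ y) ∧ t 0 = w
        · rw [if_pos h, if_pos h]
        · rw [if_neg h, if_neg h, mul_zero]

lemma F_succ3 (c : BDChain b a) (y : ℤ) (n : ℕ) (x : ℤ) :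
    F c.p c.q y (n+1) x = if x = y then 0 else
      (S c.p c.q x (x+1) * F c.p c.q y n (x+1)
        + S c.p c.q x (x-1) * F c.p c.q y n (x-1)
        + S c.p c.q x x * F c.p c.q y n x) := by
  rw [F_succ, tsum_step]

lemma F_le_one (c : BDChain b a) (y : ℤ) : ∀ (n : ℕ) (x : ℤ), F c.p c.q y n x ≤ 1 := by
  intro n
  induction n with
  | zero =>
    intro x
    rw [F_zero]
    split_ifs <;> simp
  | succ n ih =>
    intro x
    rw [F_succ3]
    split_ifs
    · simp
    calc S c.p c.q x (x+1) * F c.p c.q y n (x+1) + S c.p c.q x (x-1) * F c.p c.q y n (x-1)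
          + S c.p c.q x x * F c.p c.q y n x
        ≤ S c.p c.q x (x+1) * 1 + S c.p c.q x (x-1) * 1 + S c.p c.q x x * 1 := by
          gcongr <;> exact ih _
      _ = 1 := by rw [mul_one, mul_one, mul_one, S_row]

lemma F_antitone (c : BDChain b a) (y : ℤ) : ∀ (n : ℕ) (x : ℤ),
    F c.p c.q y (n+1) x ≤ F c.p c.q y n x := by
  intro n
  induction n with
  | zero =>
    intro x
    rw [F_succ3]
    split_ifs with h
    · exact zero_le
    have h0 : F c.p c.q y 0 x = 1 := by rw [F_zero, if_neg h]
    rw [h0]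
    calc _ ≤ S c.p c.q x (x+1) * 1 + S c.p c.q x (x-1) * 1 + S c.p c.q x x * 1 := by
          gcongr <;> exact F_le_one c y 0 _
      _ = 1 := by rw [mul_one, mul_one, mul_one, S_row]
  | succ n ih =>
    intro x
    rw [F_succ3 c y (n+1) x]
    split_ifs with h
    · exact zero_le
    calc S c.p c.q x (x+1) * F c.p c.q y (n+1) (x+1)
          + S c.p c.q x (x-1) * F c.p c.q y (n+1) (x-1)
          + S c.p c.q x x * F c.p c.q y (n+1) x
        ≤ S c.p c.q x (x+1) * F c.p c.q y n (x+1)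
          + S c.p c.q x (x-1) * F c.p c.q y n (x-1)
          + S c.p c.q x x * F c.p c.q y n x := by gcongr <;> exact ih _
      _ = F c.p c.q y (n+1) x := by rw [F_succ3 c y n x, if_neg h]

lemma F_antitone' (c : BDChain b a) (y : ℤ) {m n : ℕ} (h : m ≤ n) (x : ℤ) :
    F c.p c.q y n x ≤ F c.p c.q y m x := by
  induction n, h using Nat.le_induction with
  | base => exact le_refl _
  | succ n hmn ih => exact le_trans (F_antitone c y n x) ih

end HW3

namespace HW4
open HW HW2 HW3 MeasureTheory

variable {b a : ℤ}

lemma avoidSet_measurable (y : ℤ) (n : ℕ) :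
    MeasurableSet {ω : ℕ → ℤ | ∀ i ≤ n, ω i ≠ y} := by
  have h : {ω : ℕ → ℤ | ∀ i ≤ n, ω i ≠ y}
      = ⋂ i ∈ Set.Iic n, (fun ω : ℕ → ℤ => ω i) ⁻¹' ({y}ᶜ) := by
    ext ω
    simp [Set.mem_iInter]
  rw [h]
  exact MeasurableSet.biInter (Set.to_countable _) fun i _ =>
    measurableSet_preimage (measurable_pi_apply i) (measurableSet_singleton y).compl

lemma lt_hit_set (y : ℤ) (n : ℕ) :
    {ω : ℕ → ℤ | (n : ℝ≥0∞) < hitTime {y} ω} = {ω : ℕ → ℤ | ∀ i ≤ n, ω i ≠ y} := by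
  ext ω
  rw [Set.mem_setOf_eq, Set.mem_setOf_eq, lt_hitTime_iff]
  simp

lemma eT_eq_tsum_F (c : BDChain b a) (x y : ℤ) :
    c.eT x y = ∑' n : ℕ, F c.p c.q y n x := by
  rw [BDChain.eT]
  have h1 : ∀ ω : ℕ → ℤ, hitTime {y} ω
      = ∑' n : ℕ, Set.indicator {ω : ℕ → ℤ | (n : ℝ≥0∞) < hitTime {y} ω} (fun _ => 1) ω := by
    intro ω
    have h2 := ennreal_eq_tsum_indicator (hitTime {y} ω) (by
      rcases hitTime_shape {y} ω with h | ⟨m, h⟩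
      · exact Or.inl h
      · exact Or.inr ⟨m, h⟩)
    rw [h2]
    exact tsum_congr fun n => by simp [Set.indicator_apply, Set.mem_setOf_eq]
  rw [lintegral_congr h1]
  have hmeas : ∀ n : ℕ, AEMeasurable (fun ω : ℕ → ℤ =>
      Set.indicator {ω : ℕ → ℤ | (n : ℝ≥0∞) < hitTime {y} ω} (fun _ => (1:ℝ≥0∞)) ω)
      (c.law x) := fun n =>
    ((measurable_const.indicator
      (by rw [lt_hit_set]; exact avoidSet_measurable y n)).aemeasurable)
  rw [lintegral_tsum hmeas]
  refine tsum_congr fun n => ?_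
  rw [lintegral_indicator_const (by rw [lt_hit_set]; exact avoidSet_measurable y n) 1, one_mul]
  rw [lt_hit_set, law_avoid]

lemma F_mul_bound (c : BDChain b a) (y : ℤ) (cst : ℝ≥0∞) (n : ℕ)
    (hbd : ∀ z, b ≤ z → z ≤ a → F c.p c.q y n z ≤ cst) :
    ∀ (m : ℕ) (x : ℤ), b ≤ x → x ≤ a → F c.p c.q y (m + n) x ≤ cst * F c.p c.q y m x := by
  intro m
  induction m with
  | zero =>
    intro x hx1 hx2
    rw [zero_add, F_zero]
    by_cases h : x = y
    · rw [if_pos h, mul_zero, h, F_target]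
    · rw [if_neg h, mul_one]
      exact hbd x hx1 hx2
  | succ m ih =>
    intro x hx1 hx2
    rw [show m + 1 + n = (m + n) + 1 from by omega, F_succ3, F_succ3 c y m x]
    split_ifs with h
    · simp
    rw [mul_add, mul_add]
    have hterm : ∀ z : ℤ, (z = x + 1 ∨ z = x - 1 ∨ z = x) →
        S c.p c.q x z * F c.p c.q y (m + n) z ≤ cst * (S c.p c.q x z * F c.p c.q y m z) := by
      intro z hz
      by_cases hzr : b ≤ z ∧ z ≤ a
      · rw [mul_left_comm]
        exact mul_le_mul_right (ih z hzr.1 hzr.2) _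
      · have hS : S c.p c.q x z = 0 := by
          rw [S]
          rcases hz with rfl | rfl | rfl
          · rw [bdStep_succ, c.p_zero x (by omega), ENNReal.ofReal_zero]
          · rw [bdStep_pred, c.q_zero x (by omega), ENNReal.ofReal_zero]
          · omega
        rw [hS, zero_mul, zero_mul, mul_zero]
    exact add_le_add (add_le_add (hterm _ (Or.inl rfl)) (hterm _ (Or.inr (Or.inl rfl))))
      (hterm _ (Or.inr (Or.inr rfl)))

lemma F_pow_bound (c : BDChain b a) (y : ℤ) (δ : ℝ≥0∞) (M : ℕ)
    (hbd : ∀ z, b ≤ z → z ≤ a → F c.p c.q y M z ≤ δ) :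
    ∀ (k : ℕ) (x : ℤ), b ≤ x → x ≤ a → F c.p c.q y (k * M) x ≤ δ ^ k := by
  intro k
  induction k with
  | zero =>
    intro x _ _
    rw [zero_mul, pow_zero]
    exact F_le_one c y 0 x
  | succ k ih =>
    intro x hx1 hx2
    rw [show (k + 1) * M = M + k * M from by ring, pow_succ]
    calc F c.p c.q y (M + k * M) x ≤ δ ^ k * F c.p c.q y M x :=
          F_mul_bound c y (δ ^ k) (k * M) (fun z h1 h2 => ih z h1 h2) M x hx1 hx2
      _ ≤ δ ^ k * δ := mul_le_mul_right (hbd x hx1 hx2) _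

lemma tsum_F_lt_top (c : BDChain b a) (y : ℤ) (M : ℕ) (δ : ℝ≥0∞) (hδ : δ < 1)
    (hbd : ∀ z, b ≤ z → z ≤ a → F c.p c.q y M z ≤ δ)
    (x : ℤ) (hx1 : b ≤ x) (hx2 : x ≤ a) :
    ∑' n : ℕ, F c.p c.q y n x < ⊤ := by
  classical
  set M' := M + 1 with hM'
  have hbd' : ∀ z, b ≤ z → z ≤ a → F c.p c.q y M' z ≤ δ := fun z h1 h2 =>
    le_trans (F_antitone' c y (Nat.le_succ M) z) (hbd z h1 h2)
  have hpow := F_pow_bound c y δ M' hbd'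
  have hle : ∀ n : ℕ, F c.p c.q y n x ≤ δ ^ (n / M') := by
    intro n
    calc F c.p c.q y n x ≤ F c.p c.q y ((n / M') * M') x :=
          F_antitone' c y (Nat.div_mul_le_self n M') x
      _ ≤ δ ^ (n / M') := hpow _ x hx1 hx2
  have key : ∑' n : ℕ, (δ ^ (n / M')) = (M' : ℝ≥0∞) * (1 - δ)⁻¹ := by
    haveI : NeZero M' := ⟨by omega⟩
    have hsymm : ∀ p : ℕ × Fin M', ((Nat.divModEquiv M').symm p) / M' = p.1 := by
      intro p
      show (p.1 * M' + (p.2 : ℕ)) / M' = p.1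
      rw [mul_comm, Nat.mul_add_div (by omega), Nat.div_eq_of_lt p.2.isLt, add_zero]
    calc ∑' n : ℕ, (δ ^ (n / M'))
        = ∑' p : ℕ × Fin M', δ ^ (((Nat.divModEquiv M').symm p) / M') :=
          (Equiv.tsum_eq (Nat.divModEquiv M').symm (fun n => δ ^ (n / M'))).symm
      _ = ∑' p : ℕ × Fin M', δ ^ p.1 := tsum_congr fun p => by rw [hsymm p]
      _ = ∑' k : ℕ, ∑' _j : Fin M', δ ^ k := ENNReal.tsum_prod'
      _ = ∑' k : ℕ, (M' : ℝ≥0∞) * δ ^ k := tsum_congr fun k => by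
          rw [tsum_fintype]
          simp [Finset.sum_const, Fintype.card_fin, nsmul_eq_mul]
      _ = (M' : ℝ≥0∞) * ∑' k : ℕ, δ ^ k := ENNReal.tsum_mul_left
      _ = (M' : ℝ≥0∞) * (1 - δ)⁻¹ := by rw [ENNReal.tsum_geometric]
  calc ∑' n : ℕ, F c.p c.q y n x ≤ ∑' n : ℕ, (δ ^ (n / M')) := ENNReal.tsum_le_tsum hle
    _ = (M' : ℝ≥0∞) * (1 - δ)⁻¹ := key
    _ < ⊤ := ENNReal.mul_lt_top (ENNReal.natCast_lt_top M')
        (ENNReal.inv_lt_top.2 (tsub_pos_iff_lt.2 hδ))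

end HW4

namespace HW5
open HW HW2 HW3 HW4 MeasureTheory Finset

variable {b a : ℤ}

lemma q_le_one (c : BDChain b a) (x : ℤ) : c.q x ≤ 1 := by
  have := r_nonneg' c x; have := p_nonneg c x; linarith

lemma prod_shift_up (f : ℤ → ℝ) (z : ℤ) : ∀ n : ℕ,
    ∏ i ∈ Finset.range n, f (z + i) = ∏ k ∈ Finset.Ico z (z + n), f k := by
  intro n
  induction n with
  | zero => simp
  | succ n ih =>
    have hc : (((n+1):ℕ):ℤ) = (n:ℤ)+1 := by push_cast; ring
    rw [Finset.prod_range_succ, ih, hc]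
    have hins : Finset.Ico z (z + ((n:ℤ) + 1)) = insert (z + (n:ℤ)) (Finset.Ico z (z + (n:ℤ))) := by
      ext k; simp only [Finset.mem_Ico, Finset.mem_insert]; omega
    rw [hins, Finset.prod_insert (by simp only [Finset.mem_Ico]; omega), mul_comm]

lemma prod_shift_down (f : ℤ → ℝ) (z : ℤ) : ∀ n : ℕ,
    ∏ i ∈ Finset.range n, f (z - i) = ∏ k ∈ Finset.Ioc (z - n) z, f k := by
  intro n
  induction n with
  | zero => simp
  | succ n ih =>
    have hc : (((n+1):ℕ):ℤ) = (n:ℤ)+1 := by push_cast; ring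
    rw [Finset.prod_range_succ, ih, hc]
    have hins : Finset.Ioc (z - ((n:ℤ) + 1)) z = insert (z - (n:ℤ)) (Finset.Ioc (z - (n:ℤ)) z) := by
      ext k; simp only [Finset.mem_Ioc, Finset.mem_insert]; omega
    rw [hins, Finset.prod_insert (by simp only [Finset.mem_Ioc]; omega), mul_comm]

lemma law_le_one (c : BDChain b a) (z : ℤ) (s : Set (ℕ → ℤ)) : c.law z s ≤ 1 := by
  have := c.prob z
  rw [← measure_univ (μ := c.law z)]
  exact measure_mono (Set.subset_univ _)

lemma F_bound_up (c : BDChain b a) (hba : b ≤ a) :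
    ∃ δ : ℝ≥0∞, δ < 1 ∧ ∀ z, b ≤ z → z ≤ a → F c.p c.q a ((a - b).toNat) z ≤ δ := by
  classical
  set εr : ℝ := ∏ k ∈ Finset.Ico b a, c.p k with hε
  have hεpos : 0 < εr := Finset.prod_pos (fun k hk => c.p_pos k (Finset.mem_Ico.1 hk).1
    (by have := (Finset.mem_Ico.1 hk).2; omega))
  refine ⟨ENNReal.ofReal (1 - εr), ENNReal.ofReal_lt_one.2 (by linarith), ?_⟩
  intro z hz1 hz2
  rw [← law_avoid c z a ((a-b).toNat)]
  set M := (a - b).toNat with hM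
  set t0 := (a - z).toNat with ht0
  have ht0' : (t0 : ℤ) = a - z := Int.toNat_of_nonneg (by omega)
  set v : Fin (t0+1) → ℤ := fun i => z + i with hv
  have hW : c.law z (cylSet t0 v) = ENNReal.ofReal (∏ k ∈ Finset.Ico z a, c.p k) := by
    rw [law_cylSet, if_pos (by simp [hv]), one_mul, W]
    have hstep : ∀ i : Fin t0, S c.p c.q (v i.castSucc) (v i.succ)
        = (fun j : ℕ => ENNReal.ofReal (c.p (z + j))) (i : ℕ) := by
      intro i
      have h1 : v i.castSucc = z + (i : ℕ) := by simp [hv]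
      have h2 : v i.succ = (z + (i : ℕ)) + 1 := by
        simp only [hv, Fin.val_succ]
        push_cast; ring
      rw [h1, h2, S, bdStep_succ]
    rw [Finset.prod_congr rfl (fun i _ => hstep i)]
    rw [Fin.prod_univ_eq_prod_range (fun j : ℕ => ENNReal.ofReal (c.p (z + j))) t0]
    rw [← ENNReal.ofReal_prod_of_nonneg (fun i _ => p_nonneg c _)]
    rw [prod_shift_up (c.p) z t0, ht0']
    norm_num
  have hdisj : Disjoint {ω : ℕ → ℤ | ∀ i ≤ M, ω i ≠ a} (cylSet t0 v) := by
    rw [Set.disjoint_left]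
    intro ω hE hC
    have h1 : ω t0 = v (Fin.last t0) := hC (Fin.last t0)
    have h2 : v (Fin.last t0) = a := by
      simp only [hv, Fin.val_last]
      omega
    have ht0M : t0 ≤ M := by
      rw [ht0, hM]
      exact Int.toNat_le_toNat (by omega)
    exact hE t0 ht0M (h1.trans h2)
  have hsum : c.law z {ω : ℕ → ℤ | ∀ i ≤ M, ω i ≠ a} + c.law z (cylSet t0 v) ≤ 1 := by
    rw [← measure_union hdisj (cylSet_measurable t0 v)]
    exact law_le_one c z _
  have hεle : ENNReal.ofReal εr ≤ c.law z (cylSet t0 v) := by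
    rw [hW]
    refine ENNReal.ofReal_le_ofReal ?_
    have hsplit : (∏ k ∈ Finset.Ico b z, c.p k) * (∏ k ∈ Finset.Ico z a, c.p k)
        = ∏ k ∈ Finset.Ico b a, c.p k := by
      rw [← Finset.prod_union (Finset.Ico_disjoint_Ico_consecutive b z a),
        Finset.Ico_union_Ico_eq_Ico hz1 hz2]
    have h1le : ∏ k ∈ Finset.Ico b z, c.p k ≤ 1 :=
      Finset.prod_le_one (fun k _ => p_nonneg c k) (fun k _ => p_le_one c k)
    have h2nn : 0 ≤ ∏ k ∈ Finset.Ico z a, c.p k :=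
      Finset.prod_nonneg (fun k _ => p_nonneg c k)
    nlinarith [hsplit, h1le, h2nn]
  rw [ENNReal.ofReal_sub 1 hεpos.le, ENNReal.ofReal_one]
  exact ENNReal.le_sub_of_add_le_right ENNReal.ofReal_ne_top (le_trans (add_le_add le_rfl hεle) hsum)

lemma F_bound_down (c : BDChain b a) (hba : b ≤ a) :
    ∃ δ : ℝ≥0∞, δ < 1 ∧ ∀ z, b ≤ z → z ≤ a → F c.p c.q b ((a - b).toNat) z ≤ δ := by
  classical
  set εl : ℝ := ∏ k ∈ Finset.Ioc b a, c.q k with hε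
  have hεpos : 0 < εl := Finset.prod_pos (fun k hk => c.q_pos k
    (by have := (Finset.mem_Ioc.1 hk).1; omega) (Finset.mem_Ioc.1 hk).2)
  refine ⟨ENNReal.ofReal (1 - εl), ENNReal.ofReal_lt_one.2 (by linarith), ?_⟩
  intro z hz1 hz2
  rw [← law_avoid c z b ((a-b).toNat)]
  set M := (a - b).toNat with hM
  set t0 := (z - b).toNat with ht0
  have ht0' : (t0 : ℤ) = z - b := Int.toNat_of_nonneg (by omega)
  set v : Fin (t0+1) → ℤ := fun i => z - i with hv
  have hW : c.law z (cylSet t0 v) = ENNReal.ofReal (∏ k ∈ Finset.Ioc b z, c.q k) := by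
    rw [law_cylSet, if_pos (by simp [hv]), one_mul, W]
    have hstep : ∀ i : Fin t0, S c.p c.q (v i.castSucc) (v i.succ)
        = (fun j : ℕ => ENNReal.ofReal (c.q (z - j))) (i : ℕ) := by
      intro i
      have h1 : v i.castSucc = z - (i : ℕ) := by simp [hv]
      have h2 : v i.succ = (z - (i : ℕ)) - 1 := by
        simp only [hv, Fin.val_succ]
        push_cast; ring
      rw [h1, h2, S, bdStep_pred]
    rw [Finset.prod_congr rfl (fun i _ => hstep i)]
    rw [Fin.prod_univ_eq_prod_range (fun j : ℕ => ENNReal.ofReal (c.q (z - j))) t0]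
    rw [← ENNReal.ofReal_prod_of_nonneg (fun i _ => q_nonneg c _)]
    rw [prod_shift_down (c.q) z t0, ht0']
    norm_num
  have hdisj : Disjoint {ω : ℕ → ℤ | ∀ i ≤ M, ω i ≠ b} (cylSet t0 v) := by
    rw [Set.disjoint_left]
    intro ω hE hC
    have h1 : ω t0 = v (Fin.last t0) := hC (Fin.last t0)
    have h2 : v (Fin.last t0) = b := by
      simp only [hv, Fin.val_last]
      omega
    have ht0M : t0 ≤ M := by
      rw [ht0, hM]
      exact Int.toNat_le_toNat (by omega)
    exact hE t0 ht0M (h1.trans h2)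
  have hsum : c.law z {ω : ℕ → ℤ | ∀ i ≤ M, ω i ≠ b} + c.law z (cylSet t0 v) ≤ 1 := by
    rw [← measure_union hdisj (cylSet_measurable t0 v)]
    exact law_le_one c z _
  have hεle : ENNReal.ofReal εl ≤ c.law z (cylSet t0 v) := by
    rw [hW]
    refine ENNReal.ofReal_le_ofReal ?_
    have hsplit : (∏ k ∈ Finset.Ioc b z, c.q k) * (∏ k ∈ Finset.Ioc z a, c.q k)
        = ∏ k ∈ Finset.Ioc b a, c.q k := by
      rw [← Finset.prod_union (by
        rw [Finset.disjoint_left]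
        intro k hk1 hk2
        simp only [Finset.mem_Ioc] at hk1 hk2
        omega),
        Finset.Ioc_union_Ioc_eq_Ioc hz1 hz2]
    have h1le : ∏ k ∈ Finset.Ioc z a, c.q k ≤ 1 :=
      Finset.prod_le_one (fun k _ => q_nonneg c k) (fun k _ => q_le_one c k)
    have h2nn : 0 ≤ ∏ k ∈ Finset.Ioc b z, c.q k :=
      Finset.prod_nonneg (fun k _ => q_nonneg c k)
    nlinarith [hsplit, h1le, h2nn]
  rw [ENNReal.ofReal_sub 1 hεpos.le, ENNReal.ofReal_one]
  exact ENNReal.le_sub_of_add_le_right ENNReal.ofReal_ne_top (le_trans (add_le_add le_rfl hεle) hsum)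

lemma eT_lt_top_up (c : BDChain b a) (hba : b ≤ a) (x : ℤ) (hx1 : b ≤ x) (hx2 : x ≤ a) :
    ∑' n : ℕ, F c.p c.q a n x < ⊤ := by
  obtain ⟨δ, hδ, hbd⟩ := F_bound_up c hba
  exact tsum_F_lt_top c a _ δ hδ hbd x hx1 hx2

lemma eT_lt_top_down (c : BDChain b a) (hba : b ≤ a) (x : ℤ) (hx1 : b ≤ x) (hx2 : x ≤ a) :
    ∑' n : ℕ, F c.p c.q b n x < ⊤ := by
  obtain ⟨δ, hδ, hbd⟩ := F_bound_down c hba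
  exact tsum_F_lt_top c b _ δ hδ hbd x hx1 hx2

end HW5

namespace HW6
open HW HW2 HW3 HW4 HW5 Finset

variable {b a : ℤ}

lemma hfun_rec (c : BDChain b a) (y x : ℤ) (hxy : x ≠ y) :
    ∑' n, F c.p c.q y n x
      = 1 + (S c.p c.q x (x+1) * ∑' n, F c.p c.q y n (x+1)
           + S c.p c.q x (x-1) * ∑' n, F c.p c.q y n (x-1)
           + S c.p c.q x x * ∑' n, F c.p c.q y n x) := by
  conv_lhs => rw [tsum_eq_zero_add' (f := fun n => F c.p c.q y n x) ENNReal.summable]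
  rw [F_zero, if_neg hxy]
  congr 1
  calc ∑' n, F c.p c.q y (n+1) x
      = ∑' n, (S c.p c.q x (x+1) * F c.p c.q y n (x+1)
          + S c.p c.q x (x-1) * F c.p c.q y n (x-1)
          + S c.p c.q x x * F c.p c.q y n x) :=
        tsum_congr fun n => by rw [F_succ3, if_neg hxy]
    _ = _ := by
        rw [ENNReal.tsum_add, ENNReal.tsum_add, ENNReal.tsum_mul_left,
          ENNReal.tsum_mul_left, ENNReal.tsum_mul_left]

lemma eT_up (c : BDChain b a) (hba : b ≤ a) (π : ℤ → ℝ)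
    (hpos : ∀ x, b ≤ x → x ≤ a → 0 < π x)
    (hdb : ∀ x, b + 1 ≤ x → x ≤ a → π x * c.q x = π (x-1) * c.p (x-1))
    (z : ℤ) (hz1 : b ≤ z) (hz2 : z ≤ a) :
    c.eT z a = ENNReal.ofReal
      (∑ k ∈ Finset.Ico z a, (∑ j ∈ Finset.Icc b k, π j) / (π k * c.p k)) := by
  classical
  set hfun : ℤ → ℝ≥0∞ := fun x => ∑' n, F c.p c.q a n x with hh
  have hfin : ∀ x, b ≤ x → x ≤ a → hfun x ≠ ⊤ :=
    fun x h1 h2 => (eT_lt_top_up c hba x h1 h2).ne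
  set H : ℤ → ℝ := fun x => (hfun x).toReal with hH
  have hHa : H a = 0 := by
    have h0 : hfun a = 0 := by
      rw [hh]
      simp only [F_target, tsum_zero]
    rw [hH]
    simp [h0]
  have hrec : ∀ x, b ≤ x → x ≤ a - 1 →
      c.p x * (H x - H (x+1)) = 1 + c.q x * (H (x-1) - H x) := by
    intro x h1 h2
    have hxy : x ≠ a := by omega
    have he := hfun_rec c a x hxy
    have hfx : hfun x ≠ ⊤ := hfin x h1 (by omega)
    have t1 : S c.p c.q x (x+1) * hfun (x+1) ≠ ⊤ :=
      ENNReal.mul_ne_top ENNReal.ofReal_ne_top (hfin _ (by omega) (by omega))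
    have t2 : S c.p c.q x (x-1) * hfun (x-1) ≠ ⊤ := by
      by_cases hxb : x = b
      · rw [hxb, S, bdStep_pred, c.q_zero b (Or.inl le_rfl), ENNReal.ofReal_zero, zero_mul]
        exact ENNReal.zero_ne_top
      · exact ENNReal.mul_ne_top ENNReal.ofReal_ne_top (hfin _ (by omega) (by omega))
    have t3 : S c.p c.q x x * hfun x ≠ ⊤ := ENNReal.mul_ne_top ENNReal.ofReal_ne_top hfx
    have hreal := congrArg ENNReal.toReal he
    rw [ENNReal.toReal_add ENNReal.one_ne_top
        (ENNReal.add_ne_top.2 ⟨ENNReal.add_ne_top.2 ⟨t1, t2⟩, t3⟩),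
      ENNReal.toReal_add (ENNReal.add_ne_top.2 ⟨t1, t2⟩) t3,
      ENNReal.toReal_add t1 t2, ENNReal.toReal_one,
      ENNReal.toReal_mul, ENNReal.toReal_mul, ENNReal.toReal_mul] at hreal
    have hS1 : (S c.p c.q x (x+1)).toReal = c.p x := by
      rw [S, bdStep_succ, ENNReal.toReal_ofReal (p_nonneg c x)]
    have hS2 : (S c.p c.q x (x-1)).toReal = c.q x := by
      rw [S, bdStep_pred, ENNReal.toReal_ofReal (q_nonneg c x)]
    have hS3 : (S c.p c.q x x).toReal = 1 - c.p x - c.q x := by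
      rw [S, bdStep_self, ENNReal.toReal_ofReal (r_nonneg' c x)]
    rw [hS1, hS2, hS3] at hreal
    linear_combination hreal
  have hDnat : ∀ n : ℕ, ∀ x : ℤ, x = b + n → x ≤ a - 1 →
      π x * c.p x * (H x - H (x+1)) = ∑ j ∈ Finset.Icc b x, π j := by
    intro n
    induction n with
    | zero =>
      intro x hx hx2
      have hxb : x = b := by omega
      subst hxb
      have hr := hrec x le_rfl hx2
      have hq0 : c.q x = 0 := c.q_zero x (Or.inl le_rfl)
      rw [hq0] at hr
      rw [Finset.Icc_self, Finset.sum_singleton]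
      linear_combination π x * hr
    | succ n ih =>
      intro x hx hx2
      have ihx := ih (x-1) (by omega) (by omega)
      have hx1e : x - 1 + 1 = x := by ring
      rw [hx1e] at ihx
      have hr := hrec x (by omega) hx2
      have hdb1 := hdb x (by omega) (by omega)
      have hsum : ∑ j ∈ Finset.Icc b x, π j = ∑ j ∈ Finset.Icc b (x-1), π j + π x := by
        have hins : Finset.Icc b x = insert x (Finset.Icc b (x-1)) := by
          ext k
          simp only [Finset.mem_Icc, Finset.mem_insert]
          omega
        rw [hins, Finset.sum_insert (by simp only [Finset.mem_Icc]; omega), add_comm]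
      rw [hsum, ← ihx]
      linear_combination π x * hr + (H (x-1) - H x) * hdb1
  have hD : ∀ x, b ≤ x → x ≤ a - 1 →
      π x * c.p x * (H x - H (x+1)) = ∑ j ∈ Finset.Icc b x, π j := by
    intro x hx1 hx2
    exact hDnat (x - b).toNat x (by omega) hx2
  have htelnat : ∀ n : ℕ, ∀ w : ℤ, w = z + n →
      ∑ k ∈ Finset.Ico z w, (H k - H (k+1)) = H z - H w := by
    intro n
    induction n with
    | zero =>
      intro w hw
      have hwz : w = z := by omega
      subst hwz
      simp
    | succ n ih =>
      intro w hw
      have hins : Finset.Ico z w = insert (w-1) (Finset.Ico z (w-1)) := by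
        ext k
        simp only [Finset.mem_Ico, Finset.mem_insert]
        omega
      rw [hins, Finset.sum_insert (by simp only [Finset.mem_Ico]; omega), ih (w-1) (by omega)]
      have hwe : w - 1 + 1 = w := by ring
      rw [hwe]
      ring
  have hHz : H z = ∑ k ∈ Finset.Ico z a, (∑ j ∈ Finset.Icc b k, π j) / (π k * c.p k) := by
    have h1 := htelnat (a - z).toNat a (by omega)
    rw [hHa, sub_zero] at h1
    rw [← h1]
    refine Finset.sum_congr rfl fun k hk => ?_
    obtain ⟨hk1, hk2⟩ := Finset.mem_Ico.1 hk
    have hDk := hD k (by omega) (by omega)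
    have hπk := hpos k (by omega) (by omega)
    have hpk := c.p_pos k (by omega) (by omega)
    field_simp
    linear_combination hDk
  have heT : c.eT z a = hfun z := eT_eq_tsum_F c z a
  have hfinal : hfun z = ENNReal.ofReal (H z) := by
    simp only [hH]
    rw [ENNReal.ofReal_toReal (hfin z hz1 hz2)]
  rw [heT, hfinal, hHz]

lemma eT_down (c : BDChain b a) (hba : b ≤ a) (π : ℤ → ℝ)
    (hpos : ∀ x, b ≤ x → x ≤ a → 0 < π x)
    (hdb : ∀ x, b + 1 ≤ x → x ≤ a → π x * c.q x = π (x-1) * c.p (x-1))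
    (z : ℤ) (hz1 : b ≤ z) (hz2 : z ≤ a) :
    c.eT z b = ENNReal.ofReal
      (∑ k ∈ Finset.Ioc b z, (∑ j ∈ Finset.Icc k a, π j) / (π k * c.q k)) := by
  classical
  set hfun : ℤ → ℝ≥0∞ := fun x => ∑' n, F c.p c.q b n x with hh
  have hfin : ∀ x, b ≤ x → x ≤ a → hfun x ≠ ⊤ :=
    fun x h1 h2 => (eT_lt_top_down c hba x h1 h2).ne
  set H : ℤ → ℝ := fun x => (hfun x).toReal with hH
  have hHb : H b = 0 := by
    have h0 : hfun b = 0 := by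
      rw [hh]
      simp only [F_target, tsum_zero]
    rw [hH]
    simp [h0]
  have hrec : ∀ x, b + 1 ≤ x → x ≤ a →
      c.q x * (H x - H (x-1)) = 1 + c.p x * (H (x+1) - H x) := by
    intro x h1 h2
    have hxy : x ≠ b := by omega
    have he := hfun_rec c b x hxy
    have hfx : hfun x ≠ ⊤ := hfin x (by omega) h2
    have t1 : S c.p c.q x (x+1) * hfun (x+1) ≠ ⊤ := by
      by_cases hxa : x = a
      · rw [hxa, S, bdStep_succ, c.p_zero a (Or.inr le_rfl), ENNReal.ofReal_zero, zero_mul]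
        exact ENNReal.zero_ne_top
      · exact ENNReal.mul_ne_top ENNReal.ofReal_ne_top (hfin _ (by omega) (by omega))
    have t2 : S c.p c.q x (x-1) * hfun (x-1) ≠ ⊤ :=
      ENNReal.mul_ne_top ENNReal.ofReal_ne_top (hfin _ (by omega) (by omega))
    have t3 : S c.p c.q x x * hfun x ≠ ⊤ := ENNReal.mul_ne_top ENNReal.ofReal_ne_top hfx
    have hreal := congrArg ENNReal.toReal he
    rw [ENNReal.toReal_add ENNReal.one_ne_top
        (ENNReal.add_ne_top.2 ⟨ENNReal.add_ne_top.2 ⟨t1, t2⟩, t3⟩),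
      ENNReal.toReal_add (ENNReal.add_ne_top.2 ⟨t1, t2⟩) t3,
      ENNReal.toReal_add t1 t2, ENNReal.toReal_one,
      ENNReal.toReal_mul, ENNReal.toReal_mul, ENNReal.toReal_mul] at hreal
    have hS1 : (S c.p c.q x (x+1)).toReal = c.p x := by
      rw [S, bdStep_succ, ENNReal.toReal_ofReal (p_nonneg c x)]
    have hS2 : (S c.p c.q x (x-1)).toReal = c.q x := by
      rw [S, bdStep_pred, ENNReal.toReal_ofReal (q_nonneg c x)]
    have hS3 : (S c.p c.q x x).toReal = 1 - c.p x - c.q x := by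
      rw [S, bdStep_self, ENNReal.toReal_ofReal (r_nonneg' c x)]
    rw [hS1, hS2, hS3] at hreal
    linear_combination hreal
  have hDnat : ∀ n : ℕ, ∀ x : ℤ, x = a - n → b + 1 ≤ x →
      π x * c.q x * (H x - H (x-1)) = ∑ j ∈ Finset.Icc x a, π j := by
    intro n
    induction n with
    | zero =>
      intro x hx hx2
      have hxa : x = a := by omega
      subst hxa
      have hr := hrec x hx2 le_rfl
      have hp0 : c.p x = 0 := c.p_zero x (Or.inr le_rfl)
      rw [hp0] at hr
      rw [Finset.Icc_self, Finset.sum_singleton]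
      linear_combination π x * hr
    | succ n ih =>
      intro x hx hx2
      have ihx := ih (x+1) (by omega) (by omega)
      have hx1e : x + 1 - 1 = x := by ring
      rw [hx1e] at ihx
      have hr := hrec x hx2 (by omega)
      have hdbx1 := hdb (x+1) (by omega) (by omega)
      have hdbx1' : π (x+1) * c.q (x+1) = π x * c.p x := by
        rw [show x + 1 - 1 = x from by ring] at hdbx1
        exact hdbx1
      have hsum : ∑ j ∈ Finset.Icc x a, π j = ∑ j ∈ Finset.Icc (x+1) a, π j + π x := by
        have hins : Finset.Icc x a = insert x (Finset.Icc (x+1) a) := by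
          ext k
          simp only [Finset.mem_Icc, Finset.mem_insert]
          omega
        rw [hins, Finset.sum_insert (by simp only [Finset.mem_Icc]; omega), add_comm]
      rw [hsum, ← ihx]
      linear_combination π x * hr - (H (x+1) - H x) * hdbx1'
  have hD : ∀ x, b + 1 ≤ x → x ≤ a →
      π x * c.q x * (H x - H (x-1)) = ∑ j ∈ Finset.Icc x a, π j := by
    intro x hx1 hx2
    exact hDnat (a - x).toNat x (by omega) hx1
  have htelnat : ∀ n : ℕ, ∀ w : ℤ, w = z - n →
      ∑ k ∈ Finset.Ioc w z, (H k - H (k-1)) = H z - H w := by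
    intro n
    induction n with
    | zero =>
      intro w hw
      have hwz : w = z := by omega
      subst hwz
      simp
    | succ n ih =>
      intro w hw
      have hins : Finset.Ioc w z = insert (w+1) (Finset.Ioc (w+1) z) := by
        ext k
        simp only [Finset.mem_Ioc, Finset.mem_insert]
        omega
      rw [hins, Finset.sum_insert (by simp only [Finset.mem_Ioc]; omega), ih (w+1) (by omega)]
      have hwe : w + 1 - 1 = w := by ring
      rw [hwe]
      ring
  have hHz : H z = ∑ k ∈ Finset.Ioc b z, (∑ j ∈ Finset.Icc k a, π j) / (π k * c.q k) := by
    have h1 := htelnat (z - b).toNat b (by omega)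
    rw [hHb, sub_zero] at h1
    rw [← h1]
    refine Finset.sum_congr rfl fun k hk => ?_
    obtain ⟨hk1, hk2⟩ := Finset.mem_Ioc.1 hk
    have hDk := hD k (by omega) (by omega)
    have hπk := hpos k (by omega) (by omega)
    have hqk := c.q_pos k (by omega) (by omega)
    field_simp
    linear_combination hDk
  have heT : c.eT z b = hfun z := eT_eq_tsum_F c z b
  have hfinal : hfun z = ENNReal.ofReal (H z) := by
    simp only [hH]
    rw [ENNReal.ofReal_toReal (hfin z hz1 hz2)]
  rw [heT, hfinal, hHz]

end HW6

namespace HW7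
open HW HW2 HW3 HW4 HW5 HW6 Finset

lemma sum_Ioc_shift (g : ℤ → ℝ) (l u : ℤ) :
    ∑ k ∈ Finset.Ioc l u, g k = ∑ k ∈ Finset.Ico l u, g (k+1) := by
  have hmap : Finset.Ioc l u = Finset.map (addRightEmbedding 1) (Finset.Ico l u) := by
    rw [Finset.map_add_right_Ico]
    ext k
    simp only [Finset.mem_Ico, Finset.mem_Ioc]
    omega
  rw [hmap, Finset.sum_map]
  rfl

lemma sum_Ico_shift (g : ℤ → ℝ) (l u : ℤ) :
    ∑ k ∈ Finset.Ico l u, g k = ∑ k ∈ Finset.Ioc l u, g (k + (-1)) := by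
  have hmap : Finset.Ico l u = Finset.map (addRightEmbedding (-1)) (Finset.Ioc l u) := by
    rw [Finset.map_add_right_Ioc]
    ext k
    simp only [Finset.mem_Ico, Finset.mem_Ioc]
    omega
  rw [hmap, Finset.sum_map]
  rfl

lemma sum_split (π : ℤ → ℝ) (l m u : ℤ) (h1 : l ≤ m) (h2 : m ≤ u + 1) :
    ∑ j ∈ Finset.Icc l u, π j
      = ∑ j ∈ Finset.Icc l (m-1), π j + ∑ j ∈ Finset.Icc m u, π j := by
  rw [← Finset.sum_union (by
    rw [Finset.disjoint_left]
    intro k hk1 hk2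
    simp only [Finset.mem_Icc] at hk1 hk2
    omega)]
  refine (Finset.sum_congr ?_ fun _ _ => rfl).symm
  ext k
  simp only [Finset.mem_union, Finset.mem_Icc]
  omega

end HW7

/-- Comparison with half-well versions: for an irreducible
birth-and-death chain `X` on `⟦b,a⟧` (`b ≤ 0 < a`) with invariant measure `π`, and
its right half-well version `Xhat` on `⟦0,a⟧` (same rates on `⟦1,a⟧`, `p̂₀ = p₀`,
`q̂₀ = 0`) and left half-well version `Xchk` on `⟦b,0⟧` (same rates on `⟦b,-1⟧`,
`q̌₀ = q₀`, `p̌₀ = 0`):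
`E[T_{0→a}] = (π(⟦b,-1⟧) E[T̂_{a→0}] + E[T̂_{0→a}]) / π(⟦0,a⟧) ≥ E[T̂_{0→a}]`, and
`E[T_{0→b}] = (π(⟦1,a⟧) E[Ť_{b→0}] + E[Ť_{0→b}]) / π(⟦b,0⟧) ≥ E[Ť_{0→b}]`
(the identities are stated with the denominators cleared, an equivalent form in `ℝ≥0∞`). -/

theorem halfwell_comparison {b a : ℤ} (hb : b ≤ 0) (ha : 0 < a)
    (X : BDChain b a) (π : ℤ → ℝ) (hπ : X.IsStationary π)
    (Xhat : BDChain 0 a)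
    (hhp : ∀ x : ℤ, 0 ≤ x → x ≤ a - 1 → Xhat.p x = X.p x)
    (hhq : ∀ x : ℤ, 1 ≤ x → x ≤ a → Xhat.q x = X.q x)
    (Xchk : BDChain b 0)
    (hcp : ∀ x : ℤ, b ≤ x → x ≤ -1 → Xchk.p x = X.p x)
    (hcq : ∀ x : ℤ, b + 1 ≤ x → x ≤ 0 → Xchk.q x = X.q x) :
    (ENNReal.ofReal (∑ i ∈ Finset.Icc (0 : ℤ) a, π i) * X.eT 0 a
        = ENNReal.ofReal (∑ i ∈ Finset.Icc b (-1 : ℤ), π i) * Xhat.eT a 0 + Xhat.eT 0 a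
      ∧ Xhat.eT 0 a ≤ X.eT 0 a) ∧
    (ENNReal.ofReal (∑ i ∈ Finset.Icc b (0 : ℤ), π i) * X.eT 0 b
        = ENNReal.ofReal (∑ i ∈ Finset.Icc (1 : ℤ) a, π i) * Xchk.eT b 0 + Xchk.eT 0 b
      ∧ Xchk.eT 0 b ≤ X.eT 0 b) := by
  classical
  obtain ⟨hpos, hzero, hsum1, hdb⟩ := hπ
  have hπnn : ∀ j : ℤ, 0 ≤ π j := by
    intro j
    by_cases hj : b ≤ j ∧ j ≤ a
    · exact (hpos j hj.1 hj.2).le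
    · exact (hzero j (by omega)).ge
  -- ===== PART 1 =====
  have hXup := HW6.eT_up X (by omega) π hpos hdb 0 hb (le_of_lt ha)
  have hpos1 : ∀ x, (0:ℤ) ≤ x → x ≤ a → 0 < π x := fun x h1 h2 => hpos x (by omega) h2
  have hdb1 : ∀ x, (0:ℤ) + 1 ≤ x → x ≤ a → π x * Xhat.q x = π (x-1) * Xhat.p (x-1) := by
    intro x h1 h2
    rw [hhq x (by omega) h2, hhp (x-1) (by omega) (by omega)]
    exact hdb x (by omega) h2
  have hXhatup : Xhat.eT 0 a = ENNReal.ofReal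
      (∑ k ∈ Finset.Ico (0:ℤ) a, (∑ j ∈ Finset.Icc (0:ℤ) k, π j) / (π k * X.p k)) := by
    rw [HW6.eT_up Xhat (le_of_lt ha) π hpos1 hdb1 0 le_rfl (le_of_lt ha)]
    congr 1
    refine Finset.sum_congr rfl fun k hk => ?_
    obtain ⟨hk1, hk2⟩ := Finset.mem_Ico.1 hk
    rw [hhp k hk1 (by omega)]
  have hXhatdown : Xhat.eT a 0 = ENNReal.ofReal
      (∑ k ∈ Finset.Ico (0:ℤ) a, (∑ j ∈ Finset.Icc (k+1) a, π j) / (π k * X.p k)) := by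
    rw [HW6.eT_down Xhat (le_of_lt ha) π hpos1 hdb1 a (le_of_lt ha) le_rfl]
    rw [HW7.sum_Ioc_shift (fun k => (∑ j ∈ Finset.Icc k a, π j) / (π k * Xhat.q k)) 0 a]
    congr 1
    refine Finset.sum_congr rfl fun k hk => ?_
    obtain ⟨hk1, hk2⟩ := Finset.mem_Ico.1 hk
    have hd := hdb (k+1) (by omega) (by omega)
    rw [show k + 1 - 1 = k from by ring] at hd
    rw [hhq (k+1) (by omega) (by omega), hd]
  have hdpos : ∀ k : ℤ, 0 ≤ k → k < a → 0 < π k * X.p k := fun k h1 h2 =>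
    mul_pos (hpos k (by omega) (by omega)) (X.p_pos k (by omega) (by omega))
  have hBS : (∑ i ∈ Finset.Icc b (-1:ℤ), π i) + (∑ i ∈ Finset.Icc (0:ℤ) a, π i) = 1 := by
    rw [← hsum1, HW7.sum_split π b 0 a hb (by omega)]
    norm_num
  have hSrnn : 0 ≤ ∑ i ∈ Finset.Icc (0:ℤ) a, π i := Finset.sum_nonneg fun j _ => hπnn j
  have hBrnn : 0 ≤ ∑ i ∈ Finset.Icc b (-1:ℤ), π i := Finset.sum_nonneg fun j _ => hπnn j
  have hT2nn : 0 ≤ ∑ k ∈ Finset.Ico (0:ℤ) a, (∑ j ∈ Finset.Icc (k+1) a, π j) / (π k * X.p k) :=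
    Finset.sum_nonneg fun k hk => by
      obtain ⟨hk1, hk2⟩ := Finset.mem_Ico.1 hk
      exact div_nonneg (Finset.sum_nonneg fun j _ => hπnn j) (hdpos k hk1 hk2).le
  have hT3nn : 0 ≤ ∑ k ∈ Finset.Ico (0:ℤ) a, (∑ j ∈ Finset.Icc (0:ℤ) k, π j) / (π k * X.p k) :=
    Finset.sum_nonneg fun k hk => by
      obtain ⟨hk1, hk2⟩ := Finset.mem_Ico.1 hk
      exact div_nonneg (Finset.sum_nonneg fun j _ => hπnn j) (hdpos k hk1 hk2).le
  have hkey1 : (∑ i ∈ Finset.Icc (0:ℤ) a, π i)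
        * ∑ k ∈ Finset.Ico (0:ℤ) a, (∑ j ∈ Finset.Icc b k, π j) / (π k * X.p k)
      = (∑ i ∈ Finset.Icc b (-1:ℤ), π i)
          * ∑ k ∈ Finset.Ico (0:ℤ) a, (∑ j ∈ Finset.Icc (k+1) a, π j) / (π k * X.p k)
        + ∑ k ∈ Finset.Ico (0:ℤ) a, (∑ j ∈ Finset.Icc (0:ℤ) k, π j) / (π k * X.p k) := by
    rw [Finset.mul_sum, Finset.mul_sum, ← Finset.sum_add_distrib]
    refine Finset.sum_congr rfl fun k hk => ?_
    obtain ⟨hk1, hk2⟩ := Finset.mem_Ico.1 hk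
    have hd : π k * X.p k ≠ 0 := (hdpos k hk1 hk2).ne'
    have e1 : ∑ j ∈ Finset.Icc b k, π j
        = (∑ i ∈ Finset.Icc b (-1:ℤ), π i) + ∑ j ∈ Finset.Icc (0:ℤ) k, π j := by
      rw [HW7.sum_split π b 0 k hb (by omega)]
      norm_num
    have e2 : ∑ i ∈ Finset.Icc (0:ℤ) a, π i
        = (∑ j ∈ Finset.Icc (0:ℤ) k, π j) + ∑ j ∈ Finset.Icc (k+1) a, π j := by
      rw [HW7.sum_split π 0 (k+1) a (by omega) (by omega)]
      rw [show k + 1 - 1 = k from by ring]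
    have key : (∑ i ∈ Finset.Icc (0:ℤ) a, π i) * ∑ j ∈ Finset.Icc b k, π j
        = (∑ i ∈ Finset.Icc b (-1:ℤ), π i) * (∑ j ∈ Finset.Icc (k+1) a, π j)
          + ∑ j ∈ Finset.Icc (0:ℤ) k, π j := by
      linear_combination (∑ i ∈ Finset.Icc (0:ℤ) a, π i) * e1
        + (∑ i ∈ Finset.Icc b (-1:ℤ), π i) * e2
        + (∑ j ∈ Finset.Icc (0:ℤ) k, π j) * hBS
    calc (∑ i ∈ Finset.Icc (0:ℤ) a, π i) * ((∑ j ∈ Finset.Icc b k, π j) / (π k * X.p k))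
        = ((∑ i ∈ Finset.Icc (0:ℤ) a, π i) * ∑ j ∈ Finset.Icc b k, π j) / (π k * X.p k) :=
          (mul_div_assoc _ _ _).symm
      _ = ((∑ i ∈ Finset.Icc b (-1:ℤ), π i) * (∑ j ∈ Finset.Icc (k+1) a, π j)
            + ∑ j ∈ Finset.Icc (0:ℤ) k, π j) / (π k * X.p k) := by rw [key]
      _ = (∑ i ∈ Finset.Icc b (-1:ℤ), π i) * (∑ j ∈ Finset.Icc (k+1) a, π j) / (π k * X.p k)
            + (∑ j ∈ Finset.Icc (0:ℤ) k, π j) / (π k * X.p k) := add_div _ _ _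
      _ = _ := by rw [mul_div_assoc]
  have goal1 : ENNReal.ofReal (∑ i ∈ Finset.Icc (0:ℤ) a, π i) * X.eT 0 a
      = ENNReal.ofReal (∑ i ∈ Finset.Icc b (-1:ℤ), π i) * Xhat.eT a 0 + Xhat.eT 0 a := by
    rw [hXup, hXhatdown, hXhatup, ← ENNReal.ofReal_mul hSrnn, ← ENNReal.ofReal_mul hBrnn,
      ← ENNReal.ofReal_add (mul_nonneg hBrnn hT2nn) hT3nn, hkey1]
  have goal2 : Xhat.eT 0 a ≤ X.eT 0 a := by
    rw [hXhatup, hXup]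
    refine ENNReal.ofReal_le_ofReal (Finset.sum_le_sum fun k hk => ?_)
    obtain ⟨hk1, hk2⟩ := Finset.mem_Ico.1 hk
    refine (div_le_div_iff_of_pos_right (hdpos k hk1 hk2)).2 ?_
    exact Finset.sum_le_sum_of_subset_of_nonneg
      (Finset.Icc_subset_Icc hb le_rfl) (fun j _ _ => hπnn j)
  -- ===== PART 2 =====
  have hXdown := HW6.eT_down X (by omega) π hpos hdb 0 hb (le_of_lt ha)
  have hpos2 : ∀ x, b ≤ x → x ≤ (0:ℤ) → 0 < π x := fun x h1 h2 => hpos x h1 (by omega)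
  have hdb2 : ∀ x, b + 1 ≤ x → x ≤ (0:ℤ) → π x * Xchk.q x = π (x-1) * Xchk.p (x-1) := by
    intro x h1 h2
    rw [hcq x h1 h2, hcp (x-1) (by omega) (by omega)]
    exact hdb x h1 (by omega)
  have hXchkdown : Xchk.eT 0 b = ENNReal.ofReal
      (∑ k ∈ Finset.Ioc b (0:ℤ), (∑ j ∈ Finset.Icc k 0, π j) / (π k * X.q k)) := by
    rw [HW6.eT_down Xchk hb π hpos2 hdb2 0 hb le_rfl]
    congr 1
    refine Finset.sum_congr rfl fun k hk => ?_
    obtain ⟨hk1, hk2⟩ := Finset.mem_Ioc.1 hk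
    rw [hcq k (by omega) hk2]
  have hXchkup : Xchk.eT b 0 = ENNReal.ofReal
      (∑ k ∈ Finset.Ioc b (0:ℤ), (∑ j ∈ Finset.Icc b (k-1), π j) / (π k * X.q k)) := by
    rw [HW6.eT_up Xchk hb π hpos2 hdb2 b le_rfl hb]
    rw [HW7.sum_Ico_shift (fun k => (∑ j ∈ Finset.Icc b k, π j) / (π k * Xchk.p k)) b 0]
    congr 1
    refine Finset.sum_congr rfl fun k hk => ?_
    obtain ⟨hk1, hk2⟩ := Finset.mem_Ioc.1 hk
    rw [show k + (-1:ℤ) = k - 1 from by ring]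
    rw [hcp (k-1) (by omega) (by omega)]
    have hd := hdb k (by omega) (by omega)
    rw [← hd]
  have hd2pos : ∀ k : ℤ, b < k → k ≤ 0 → 0 < π k * X.q k := fun k h1 h2 =>
    mul_pos (hpos k (by omega) (by omega)) (X.q_pos k (by omega) (by omega))
  have hBS2 : (∑ i ∈ Finset.Icc b (0:ℤ), π i) + (∑ i ∈ Finset.Icc (1:ℤ) a, π i) = 1 := by
    rw [← hsum1, HW7.sum_split π b 1 a (by omega) (by omega)]
    norm_num
  have hSrnn2 : 0 ≤ ∑ i ∈ Finset.Icc b (0:ℤ), π i := Finset.sum_nonneg fun j _ => hπnn j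
  have hBrnn2 : 0 ≤ ∑ i ∈ Finset.Icc (1:ℤ) a, π i := Finset.sum_nonneg fun j _ => hπnn j
  have hT2nn2 : 0 ≤ ∑ k ∈ Finset.Ioc b (0:ℤ), (∑ j ∈ Finset.Icc b (k-1), π j) / (π k * X.q k) :=
    Finset.sum_nonneg fun k hk => by
      obtain ⟨hk1, hk2⟩ := Finset.mem_Ioc.1 hk
      exact div_nonneg (Finset.sum_nonneg fun j _ => hπnn j) (hd2pos k hk1 hk2).le
  have hT3nn2 : 0 ≤ ∑ k ∈ Finset.Ioc b (0:ℤ), (∑ j ∈ Finset.Icc k 0, π j) / (π k * X.q k) :=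
    Finset.sum_nonneg fun k hk => by
      obtain ⟨hk1, hk2⟩ := Finset.mem_Ioc.1 hk
      exact div_nonneg (Finset.sum_nonneg fun j _ => hπnn j) (hd2pos k hk1 hk2).le
  have hkey2 : (∑ i ∈ Finset.Icc b (0:ℤ), π i)
        * ∑ k ∈ Finset.Ioc b (0:ℤ), (∑ j ∈ Finset.Icc k a, π j) / (π k * X.q k)
      = (∑ i ∈ Finset.Icc (1:ℤ) a, π i)
          * ∑ k ∈ Finset.Ioc b (0:ℤ), (∑ j ∈ Finset.Icc b (k-1), π j) / (π k * X.q k)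
        + ∑ k ∈ Finset.Ioc b (0:ℤ), (∑ j ∈ Finset.Icc k 0, π j) / (π k * X.q k) := by
    rw [Finset.mul_sum, Finset.mul_sum, ← Finset.sum_add_distrib]
    refine Finset.sum_congr rfl fun k hk => ?_
    obtain ⟨hk1, hk2⟩ := Finset.mem_Ioc.1 hk
    have hd : π k * X.q k ≠ 0 := (hd2pos k hk1 hk2).ne'
    have e1 : ∑ j ∈ Finset.Icc k a, π j
        = (∑ j ∈ Finset.Icc k 0, π j) + ∑ i ∈ Finset.Icc (1:ℤ) a, π i := by
      rw [HW7.sum_split π k 1 a (by omega) (by omega)]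
      norm_num
    have e2 : ∑ i ∈ Finset.Icc b (0:ℤ), π i
        = (∑ j ∈ Finset.Icc b (k-1), π j) + ∑ j ∈ Finset.Icc k 0, π j :=
      HW7.sum_split π b k 0 (by omega) (by omega)
    have key : (∑ i ∈ Finset.Icc b (0:ℤ), π i) * ∑ j ∈ Finset.Icc k a, π j
        = (∑ i ∈ Finset.Icc (1:ℤ) a, π i) * (∑ j ∈ Finset.Icc b (k-1), π j)
          + ∑ j ∈ Finset.Icc k 0, π j := by
      linear_combination (∑ i ∈ Finset.Icc b (0:ℤ), π i) * e1
        + (∑ i ∈ Finset.Icc (1:ℤ) a, π i) * e2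
        + (∑ j ∈ Finset.Icc k 0, π j) * hBS2
    calc (∑ i ∈ Finset.Icc b (0:ℤ), π i) * ((∑ j ∈ Finset.Icc k a, π j) / (π k * X.q k))
        = ((∑ i ∈ Finset.Icc b (0:ℤ), π i) * ∑ j ∈ Finset.Icc k a, π j) / (π k * X.q k) :=
          (mul_div_assoc _ _ _).symm
      _ = ((∑ i ∈ Finset.Icc (1:ℤ) a, π i) * (∑ j ∈ Finset.Icc b (k-1), π j)
            + ∑ j ∈ Finset.Icc k 0, π j) / (π k * X.q k) := by rw [key]
      _ = (∑ i ∈ Finset.Icc (1:ℤ) a, π i) * (∑ j ∈ Finset.Icc b (k-1), π j) / (π k * X.q k)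
            + (∑ j ∈ Finset.Icc k 0, π j) / (π k * X.q k) := add_div _ _ _
      _ = _ := by rw [mul_div_assoc]
  have goal3 : ENNReal.ofReal (∑ i ∈ Finset.Icc b (0:ℤ), π i) * X.eT 0 b
      = ENNReal.ofReal (∑ i ∈ Finset.Icc (1:ℤ) a, π i) * Xchk.eT b 0 + Xchk.eT 0 b := by
    rw [hXdown, hXchkup, hXchkdown, ← ENNReal.ofReal_mul hSrnn2, ← ENNReal.ofReal_mul hBrnn2,
      ← ENNReal.ofReal_add (mul_nonneg hBrnn2 hT2nn2) hT3nn2, hkey2]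
  have goal4 : Xchk.eT 0 b ≤ X.eT 0 b := by
    rw [hXchkdown, hXdown]
    refine ENNReal.ofReal_le_ofReal (Finset.sum_le_sum fun k hk => ?_)
    obtain ⟨hk1, hk2⟩ := Finset.mem_Ioc.1 hk
    refine (div_le_div_iff_of_pos_right (hd2pos k hk1 hk2)).2 ?_
    exact Finset.sum_le_sum_of_subset_of_nonneg
      (Finset.Icc_subset_Icc le_rfl (by omega)) (fun j _ _ => hπnn j)
  exact ⟨⟨goal1, goal2⟩, ⟨goal3, goal4⟩⟩
end
end
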